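/- arXiv:1407.5520 — 8 statements merged into one kernel-verified Lean document; each statement's English description precedes it below -/
import Mathlib

section
/- Let X be a real Hilbert space, let a < b be real numbers with k = b − a, and let r ∈ ℕ. Let U be an X-valued polynomial of degree at most r, and let L be an X-valued polynomial of degree at most r satisfying ∫_a^b ⟨L(t), V(t)⟩ dt = ⟨U(a), V(a)⟩ for every X-valued polynomial V of degree at most r. Then for every p ∈ [1, ∞], sup_{t ∈ [a,b]} ‖U(t)‖ ≤ 2 · k^{1 − 1/p} · (∫_a^b ‖U'(t) + L(t)‖^p dt)^{1/p}, where for p = ∞ the right-hand side is 2 · k · sup_{t ∈ [a,b]} ‖U'(t) + L(t)‖. -/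
open MeasureTheory Set
open scoped RealInnerProductSpace ENNReal NNReal

/-- `U : ℝ → X` is an `X`-valued polynomial of degree at most `r`. -/
def IsXPoly {X : Type*} [NormedAddCommGroup X] [NormedSpace ℝ X]
    (r : ℕ) (U : ℝ → X) : Prop :=
  ∃ c : ℕ → X, ∀ t : ℝ, U t = ∑ i ∈ Finset.range (r + 1), t ^ i • c i

namespace DGaux
open Polynomial intervalIntegral Finset



noncomputable def wq (a b : ℝ) : Polynomial ℝ := (X - C a) * (X - C b)

noncomputable def RP (a b : ℝ) (n : ℕ) : Polynomial ℝ :=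
  derivative^[n] ((wq a b) ^ n)

lemma eval_wq (a b x : ℝ) : (wq a b).eval x = (x - a) * (x - b) := by
  simp [wq]

lemma deriv_wq (a b : ℝ) : derivative (wq a b) = 2 * X - C (a + b) := by
  simp only [wq, derivative_mul, derivative_X_sub_C]
  rw [C_add]; ring

lemma exists_factor (a b : ℝ) (n : ℕ) :
    ∀ k ≤ n, ∃ v : Polynomial ℝ,
      derivative^[k] ((wq a b) ^ n) = (wq a b) ^ (n - k) * v := by
  intro k
  induction k with
  | zero => intro _; exact ⟨1, by simp⟩
  | succ k ih =>
    intro hk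
    obtain ⟨v, hv⟩ := ih (Nat.le_of_succ_le hk)
    have hnk : n - k = (n - (k + 1)) + 1 := by omega
    refine ⟨C ((n - k : ℕ) : ℝ) * derivative (wq a b) * v + wq a b * derivative v, ?_⟩
    rw [Function.iterate_succ_apply', hv, derivative_mul, derivative_pow, hnk,
      Nat.add_sub_cancel]
    ring

lemma eval_iterate_deriv_lt (a b : ℝ) (n k : ℕ) (hk : k < n) {x : ℝ}
    (hx : (wq a b).eval x = 0) :
    (derivative^[k] ((wq a b) ^ n)).eval x = 0 := by
  obtain ⟨v, hv⟩ := exists_factor a b n k hk.le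
  have : n - k ≠ 0 := by omega
  rw [hv, eval_mul, eval_pow, hx, zero_pow this, zero_mul]




lemma natDegree_RP (a b : ℝ) (n : ℕ) :
    (derivative^[n] ((wq a b) ^ n)).natDegree ≤ n := by
  have h1 : (wq a b ^ n).natDegree ≤ 2 * n := by
    refine (natDegree_pow_le).trans ?_
    have : (wq a b).natDegree ≤ 2 := by
      refine (natDegree_mul_le).trans ?_
      have h2 := natDegree_X_sub_C_le (R := ℝ) a
      have h3 := natDegree_X_sub_C_le (R := ℝ) b
      omega
    calc n * (wq a b).natDegree ≤ n * 2 := Nat.mul_le_mul_left n this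
    _ = 2 * n := by ring
  have key : ∀ k, (derivative^[k] ((wq a b) ^ n)).natDegree ≤ 2 * n - k := by
    intro k
    induction k with
    | zero => simpa using h1
    | succ k ih =>
      rw [Function.iterate_succ_apply']
      have := natDegree_derivative_le (derivative^[k] ((wq a b) ^ n))
      omega
  have := key n
  omega

lemma eval_RP_right (a b : ℝ) (n : ℕ) :
    (derivative^[n] ((wq a b) ^ n)).eval b = n.factorial * (b - a) ^ n := by
  have : (wq a b) ^ n = (X - C a) ^ n * (X - C b) ^ n := by rw [wq, mul_pow]
  rw [this, iterate_derivative_mul]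
  rw [eval_finset_sum]
  rw [Finset.sum_eq_single n]
  · simp only [Nat.choose_self, Nat.sub_self, one_smul, Function.iterate_zero_apply,
      iterate_derivative_X_sub_pow_self, eval_smul, eval_mul, eval_pow, eval_sub, eval_X,
      eval_C, eval_natCast, smul_eq_mul, one_mul]
    ring
  · intro k hk hkn
    have hk' : k < n := lt_of_le_of_ne (Nat.lt_succ_iff.mp (Finset.mem_range.mp hk)) hkn
    simp only [iterate_derivative_X_sub_pow, eval_smul, smul_eq_mul, eval_mul, eval_pow,
      eval_sub, eval_X, eval_C, sub_self]
    rw [zero_pow (by omega : n - k ≠ 0)]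
    simp
  · intro h; exact absurd (Finset.self_mem_range_succ n) h

lemma eval_RP_left (a b : ℝ) (n : ℕ) :
    (derivative^[n] ((wq a b) ^ n)).eval a = n.factorial * (a - b) ^ n := by
  have : (wq a b) ^ n = (X - C b) ^ n * (X - C a) ^ n := by rw [wq, mul_pow]; ring
  rw [this, iterate_derivative_mul]
  rw [eval_finset_sum]
  rw [Finset.sum_eq_single n]
  · simp only [Nat.choose_self, Nat.sub_self, one_smul, Function.iterate_zero_apply,
      iterate_derivative_X_sub_pow_self, eval_smul, eval_mul, eval_pow, eval_sub, eval_X,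
      eval_C, eval_natCast, smul_eq_mul, one_mul]
    ring
  · intro k hk hkn
    have hk' : k < n := lt_of_le_of_ne (Nat.lt_succ_iff.mp (Finset.mem_range.mp hk)) hkn
    simp only [iterate_derivative_X_sub_pow, eval_smul, smul_eq_mul, eval_mul, eval_pow,
      eval_sub, eval_X, eval_C, sub_self]
    rw [zero_pow (by omega : n - k ≠ 0)]
    simp
  · intro h; exact absurd (Finset.self_mem_range_succ n) h





lemma natDegree_wq (a b : ℝ) : (wq a b).natDegree ≤ 2 := by
  refine (natDegree_mul_le).trans ?_
  have h2 := natDegree_X_sub_C_le (R := ℝ) a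
  have h3 := natDegree_X_sub_C_le (R := ℝ) b
  omega

lemma ode (a b : ℝ) (n : ℕ) (hn : 1 ≤ n) :
    wq a b * derivative (derivative (derivative^[n] (wq a b ^ n)))
      + derivative (wq a b) * derivative (derivative^[n] (wq a b ^ n))
    = C ((n : ℝ) * ((n : ℝ) + 1)) * derivative^[n] (wq a b ^ n) := by
  obtain ⟨m, rfl⟩ : ∃ m, n = m + 1 := ⟨n - 1, by omega⟩
  set w := wq a b with hw
  set u := w ^ (m + 1) with hu
  have expand : ∀ p q : Polynomial ℝ, q.natDegree ≤ 2 →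
      derivative^[m+2] (p * q) =
        derivative^[m+2] p * q + (m+2) • (derivative^[m+1] p * derivative q)
          + ((m+2).choose 2) • (derivative^[m] p * derivative (derivative q)) := by
    intro p q hq
    rw [iterate_derivative_mul]
    have hsub : Finset.range 3 ⊆ Finset.range ((m+2).succ) :=
      Finset.range_subset_range.mpr (by omega)
    rw [← Finset.sum_subset hsub ?van]
    case van =>
      intro k hk hk3
      have hk3' : 3 ≤ k := by
        by_contra h
        exact hk3 (Finset.mem_range.mpr (by omega))
      have : q.natDegree < k := by omega
      rw [iterate_derivative_eq_zero this, mul_zero, smul_zero]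
    rw [show (3:ℕ) = 2 + 1 from rfl, Finset.sum_range_succ, Finset.sum_range_succ,
      Finset.sum_range_one]
    have e0 : m + 2 - 0 = m + 2 := rfl
    have e1 : m + 2 - 1 = m + 1 := by omega
    have e2 : m + 2 - 2 = m := by omega
    rw [e0, e1, e2, Nat.choose_zero_right, Nat.choose_one_right]
    rw [show (⇑derivative)^[2] q = derivative (derivative q) by
      rw [show (2:ℕ) = 1+1 from rfl, Function.iterate_succ_apply', Function.iterate_one]]
    simp only [one_smul, Function.iterate_zero_apply, Function.iterate_one]
  have base : derivative u * w = C ((m+1 : ℕ) : ℝ) * (u * derivative w) := by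
    rw [hu, derivative_pow, Nat.add_sub_cancel]
    ring
  have E := congrArg (derivative^[m+2]) base
  rw [expand (derivative u) w (natDegree_wq a b)] at E
  rw [iterate_derivative_C_mul] at E
  have hwdeg : w.natDegree ≤ 2 := by rw [hw]; exact natDegree_wq a b
  rw [expand u (derivative w) ((natDegree_derivative_le w).trans (by omega))] at E
  -- rewrite iterates of (derivative u)
  have i1 : derivative^[m+2] (derivative u) = derivative (derivative (derivative^[m+1] u)) := by
    rw [← Function.iterate_succ_apply, Function.iterate_succ_apply',
      Function.iterate_succ_apply']
  have i2 : derivative^[m+1] (derivative u) = derivative (derivative^[m+1] u) := by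
    rw [← Function.iterate_succ_apply, Function.iterate_succ_apply']
  have i3 : derivative^[m] (derivative u) = derivative^[m+1] u := by
    rw [← Function.iterate_succ_apply]
  have i4 : derivative^[m+2] u = derivative (derivative^[m+1] u) :=
    Function.iterate_succ_apply' _ _ _
  rw [i1, i2, i3, i4] at E
  set P := derivative^[m+1] u with hPdef
  have hddw : derivative (derivative w) = 2 := by
    rw [hw, deriv_wq]
    simp
  rw [hddw] at E
  have hd2 : derivative (2:ℝ[X]) = 0 := by simp
  rw [hd2] at E
  rw [mul_zero, smul_zero, add_zero] at E
  have hc : ((m+2).choose 2 : ℝ[X]) * 2 = ((m+2) : ℝ[X]) * ((m+1) : ℝ[X]) := by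
    have hcn : (m+2).choose 2 * 2 = (m+2) * (m+1) := by
      rw [Nat.choose_two_right]
      have : m + 2 - 1 = m + 1 := by omega
      rw [this]
      have hev : Even ((m+2) * (m+1)) := by
        rw [mul_comm]; exact Nat.even_mul_succ_self (m+1)
      exact Nat.div_mul_cancel hev.two_dvd
    exact_mod_cast congrArg (Nat.cast : ℕ → ℝ[X]) hcn
  simp only [nsmul_eq_mul] at E
  have hCcast : (C ((m+1 : ℕ) : ℝ) : ℝ[X]) = ((m+1 : ℕ) : ℝ[X]) := by
    simp
  rw [hCcast] at E
  have hgoalC : (C (((m+1:ℕ) : ℝ) * (((m+1:ℕ) : ℝ) + 1)) : ℝ[X])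
      = ((m+1 : ℕ) : ℝ[X]) * ((m+2 : ℕ) : ℝ[X]) := by
    have h9 : (((m+1:ℕ):ℝ)) * (((m+1:ℕ):ℝ) + 1) = (((m+1) * (m+2) : ℕ) : ℝ) := by
      push_cast; ring
    rw [h9, C_eq_natCast]
    push_cast; ring
  rw [hgoalC]
  push_cast at E hc ⊢
  linear_combination E - P * hc



lemma abs_eval_RP_le (a b : ℝ) (hab : a ≤ b) (n : ℕ) :
    ∀ x ∈ Icc a b, |(RP a b n).eval x| ≤ n.factorial * (b - a) ^ n := by
  rcases Nat.eq_zero_or_pos n with hn | hn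
  · subst hn
    intro x _
    simp [RP]
  set P := RP a b n with hP
  set M : ℝ := n.factorial * (b - a) ^ n with hM
  have hM0 : 0 ≤ M := by
    apply mul_nonneg (by positivity)
    exact pow_nonneg (by linarith) n
  set h : ℝ → ℝ := fun y =>
    ((n:ℝ) * ((n:ℝ)+1)) * (P.eval y)^2 - (wq a b).eval y * ((derivative P).eval y)^2 with hh
  have key : ∀ x : ℝ, HasDerivAt h
      ((derivative (wq a b)).eval x * ((derivative P).eval x)^2) x := by
    intro x
    have H1 : HasDerivAt (fun y => P.eval y) ((derivative P).eval x) x := P.hasDerivAt x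
    have H2 : HasDerivAt (fun y => (derivative P).eval y)
        ((derivative (derivative P)).eval x) x := (derivative P).hasDerivAt x
    have HW : HasDerivAt (fun y => (wq a b).eval y) ((derivative (wq a b)).eval x) x :=
      (wq a b).hasDerivAt x
    have Hall := (((H1.mul H1)).const_mul ((n:ℝ) * ((n:ℝ)+1))).sub (HW.mul (H2.mul H2))
    have hfun : (fun y => ((n:ℝ) * ((n:ℝ)+1)) * (P.eval y * P.eval y)
        - (wq a b).eval y * ((derivative P).eval y * (derivative P).eval y)) = h := by
      funext y; simp only [hh]; ring
    simp only [Pi.mul_apply] at Hall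
    replace Hall : HasDerivAt (fun y => ((n:ℝ) * ((n:ℝ)+1)) * (P.eval y * P.eval y)
        - (wq a b).eval y * ((derivative P).eval y * (derivative P).eval y)) _ x := Hall
    rw [hfun] at Hall
    convert Hall using 1
    have hode : (wq a b).eval x * ((derivative (derivative P)).eval x)
        + (derivative (wq a b)).eval x * ((derivative P).eval x)
        = ((n:ℝ) * ((n:ℝ)+1)) * P.eval x := by
      have h0 := congrArg (fun p : ℝ[X] => p.eval x) (ode a b n hn)
      simpa [hP, RP] using h0
    linear_combination ((2:ℝ) * Polynomial.eval x (Polynomial.derivative P)) * hode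
  have hdiff : Differentiable ℝ h := fun x => (key x).differentiableAt
  have hderiv : deriv h = fun x => (derivative (wq a b)).eval x * ((derivative P).eval x)^2 := by
    funext x; exact (key x).deriv
  have anti : AntitoneOn h (Icc a ((a+b)/2)) := by
    apply antitoneOn_of_deriv_nonpos (convex_Icc _ _) hdiff.continuous.continuousOn
      (hdiff.differentiableOn)
    intro x hx
    rw [interior_Icc] at hx
    rw [hderiv, deriv_wq]
    simp only [eval_sub, eval_mul, eval_ofNat, eval_X, eval_C]
    have : 2 * x - (a + b) ≤ 0 := by
      have := hx.2; linarith [hx.1, hx.2]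
    nlinarith [sq_nonneg ((derivative P).eval x)]
  have mono : MonotoneOn h (Icc ((a+b)/2) b) := by
    apply monotoneOn_of_deriv_nonneg (convex_Icc _ _) hdiff.continuous.continuousOn
      (hdiff.differentiableOn)
    intro x hx
    rw [interior_Icc] at hx
    rw [hderiv, deriv_wq]
    simp only [eval_sub, eval_mul, eval_ofNat, eval_X, eval_C]
    have : 0 ≤ 2 * x - (a + b) := by linarith [hx.1, hx.2]
    nlinarith [sq_nonneg ((derivative P).eval x)]
  have hha : h a = ((n:ℝ) * ((n:ℝ)+1)) * M^2 := by
    have hwa : (wq a b).eval a = 0 := by rw [eval_wq]; ring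
    have hPa : P.eval a = n.factorial * (a-b)^n := by rw [hP, RP]; exact eval_RP_left a b n
    have hsq : ((n.factorial : ℝ) * (a-b)^n)^2 = M^2 := by
      rw [hM, mul_pow, mul_pow]
      have hee : ((a-b)^n)^2 = ((b-a)^n)^2 := by
        rw [show a - b = -(b-a) by ring, ← pow_mul, ← pow_mul]
        have he : Even (n * 2) := ⟨n, by ring⟩
        rw [he.neg_pow]
      rw [hee]
    simp only [hh]
    rw [hPa, hwa, zero_mul, sub_zero, hsq]
  have hhb : h b = ((n:ℝ) * ((n:ℝ)+1)) * M^2 := by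
    have hwb : (wq a b).eval b = 0 := by rw [eval_wq]; ring
    have hPb : P.eval b = n.factorial * (b-a)^n := by rw [hP, RP]; exact eval_RP_right a b n
    simp only [hh]
    rw [hPb, hwb, zero_mul, sub_zero, ← hM]
  intro x hx
  have hxh : h x ≤ ((n:ℝ) * ((n:ℝ)+1)) * M^2 := by
    rcases le_total x ((a+b)/2) with hxm | hxm
    · have := anti (left_mem_Icc.mpr (by linarith [hx.1, hx.2] : a ≤ (a+b)/2))
        ⟨hx.1, hxm⟩ hx.1
      rw [hha] at this; linarith
    · have := mono ⟨hxm, hx.2⟩ (right_mem_Icc.mpr (by linarith [hx.1, hx.2])) hx.2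
      rw [hhb] at this; linarith
  have hwx : (wq a b).eval x ≤ 0 := by
    rw [eval_wq]
    have h1 : 0 ≤ x - a := by linarith [hx.1]
    have h2 : x - b ≤ 0 := by linarith [hx.2]
    nlinarith
  have hfx : ((n:ℝ) * ((n:ℝ)+1)) * (P.eval x)^2 ≤ ((n:ℝ) * ((n:ℝ)+1)) * M^2 := by
    have : ((n:ℝ) * ((n:ℝ)+1)) * (P.eval x)^2 ≤ h x := by
      simp only [hh]
      nlinarith [sq_nonneg ((derivative P).eval x)]
    linarith
  have hnpos : (0:ℝ) < (n:ℝ) * ((n:ℝ)+1) := by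
    have : (1:ℝ) ≤ (n:ℝ) := by exact_mod_cast hn
    nlinarith
  have hsq : (P.eval x)^2 ≤ M^2 := by
    exact le_of_mul_le_mul_left hfx hnpos
  calc |P.eval x| = Real.sqrt ((P.eval x)^2) := (Real.sqrt_sq_eq_abs _).symm
  _ ≤ Real.sqrt (M^2) := Real.sqrt_le_sqrt hsq
  _ = |M| := Real.sqrt_sq_eq_abs M
  _ = M := abs_of_nonneg hM0

lemma eval_wq_left (a b : ℝ) : (wq a b).eval a = 0 := by rw [eval_wq]; ring
lemma eval_wq_right (a b : ℝ) : (wq a b).eval b = 0 := by rw [eval_wq]; ring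

lemma poly_cont (p : ℝ[X]) : Continuous fun x : ℝ => p.eval x := p.continuous

lemma parts (a b : ℝ) (n : ℕ) :
    ∀ k, k ≤ n → ∀ q : ℝ[X],
      (∫ x in a..b, (derivative^[k] ((wq a b)^n)).eval x * q.eval x)
        = (-1:ℝ)^k * ∫ x in a..b, ((wq a b)^n).eval x * (derivative^[k] q).eval x := by
  intro k
  induction k with
  | zero => intro _ q; simp
  | succ k ih =>
    intro hk q
    have hkn : k < n := by omega
    have hparts := intervalIntegral.integral_deriv_mul_eq_sub
      (u := fun x => (derivative^[k] ((wq a b)^n)).eval x)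
      (v := fun x => q.eval x)
      (u' := fun x => (derivative (derivative^[k] ((wq a b)^n))).eval x)
      (v' := fun x => (derivative q).eval x)
      (a := a) (b := b)
      (fun x _ => Polynomial.hasDerivAt _ x)
      (fun x _ => Polynomial.hasDerivAt _ x)
      ((poly_cont _).intervalIntegrable a b)
      ((poly_cont _).intervalIntegrable a b)
    beta_reduce at hparts
    rw [eval_iterate_deriv_lt a b n k hkn (eval_wq_left a b),
      eval_iterate_deriv_lt a b n k hkn (eval_wq_right a b), zero_mul, zero_mul,
      sub_zero] at hparts
    have hsplit : (∫ x in a..b,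
        ((derivative (derivative^[k] ((wq a b)^n))).eval x * q.eval x
          + (derivative^[k] ((wq a b)^n)).eval x * (derivative q).eval x))
        = (∫ x in a..b, (derivative (derivative^[k] ((wq a b)^n))).eval x * q.eval x)
          + ∫ x in a..b, (derivative^[k] ((wq a b)^n)).eval x * (derivative q).eval x := by
      apply intervalIntegral.integral_add
      · exact ((poly_cont _).mul (poly_cont _)).intervalIntegrable a b
      · exact ((poly_cont _).mul (poly_cont _)).intervalIntegrable a b
    rw [hsplit] at hparts
    have step1 : (∫ x in a..b, (derivative (derivative^[k] ((wq a b)^n))).eval x * q.eval x)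
        = - ∫ x in a..b, (derivative^[k] ((wq a b)^n)).eval x * (derivative q).eval x := by
      linarith
    rw [Function.iterate_succ_apply', step1, ih (by omega) (derivative q),
      ← Function.iterate_succ_apply]
    ring
  
lemma orth (a b : ℝ) (n : ℕ) (q : ℝ[X]) (hq : q.degree < n) :
    ∫ x in a..b, (RP a b n).eval x * q.eval x = 0 := by
  rcases eq_or_ne q 0 with rfl | hq0
  · simp
  have hnd : q.natDegree < n := (Polynomial.natDegree_lt_iff_degree_lt hq0).mpr hq
  have := parts a b n n le_rfl q
  rw [iterate_derivative_eq_zero hnd] at this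
  simpa [RP] using this


/-- Normalized Legendre-type polynomial on `[a,b]`: value `1` at `a`, `(-1)^n` at `b`. -/
noncomputable def pN (a b : ℝ) (n : ℕ) : Polynomial ℝ :=
  C ((-1:ℝ)^n / (n.factorial * (b-a)^n)) * RP a b n

/-- The "weight" polynomial `W`. -/
noncomputable def WP (a b : ℝ) (r : ℕ) : Polynomial ℝ :=
  C (1/2 : ℝ) * (pN a b r + pN a b (r+1))

variable {a b : ℝ} (hab : a < b)
set_option linter.unusedSectionVars false

lemma fk_pos (hab : a < b) (n : ℕ) : 0 < (n.factorial : ℝ) * (b-a)^n := by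
  have : (0:ℝ) < b - a := by linarith
  positivity

include hab

lemma pN_eval_a (n : ℕ) : (pN a b n).eval a = 1 := by
  have h := fk_pos hab n
  rw [pN, eval_mul, eval_C, RP, eval_RP_left]
  have : (a - b)^n = (-1:ℝ)^n * (b-a)^n := by
    rw [show a - b = -(b-a) by ring, neg_pow]
  rw [this]
  rw [div_mul_eq_mul_div, div_eq_one_iff_eq h.ne']
  calc (-1:ℝ)^n * ((n.factorial:ℝ) * ((-1)^n * (b-a)^n))
      = ((-1:ℝ)*(-1))^n * ((n.factorial:ℝ) * (b-a)^n) := by rw [mul_pow]; ring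
  _ = (n.factorial:ℝ) * (b-a)^n := by norm_num

lemma pN_eval_b (n : ℕ) : (pN a b n).eval b = (-1:ℝ)^n := by
  have h := fk_pos hab n
  rw [pN, eval_mul, eval_C, RP, eval_RP_right]
  field_simp
  exact div_self (pow_ne_zero _ (sub_ne_zero.mpr hab.ne'))

lemma abs_pN_le (n : ℕ) : ∀ x ∈ Icc a b, |(pN a b n).eval x| ≤ 1 := by
  intro x hx
  have h := fk_pos hab n
  rw [pN, eval_mul, eval_C, abs_mul, abs_div]
  have h1 : |(-1:ℝ)^n| = 1 := by
    rw [abs_pow, abs_neg, abs_one, one_pow]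
  have h2 : |(n.factorial : ℝ) * (b-a)^n| = (n.factorial : ℝ) * (b-a)^n := abs_of_pos h
  rw [h1, h2]
  rw [div_mul_eq_mul_div, one_mul, div_le_one h]
  exact abs_eval_RP_le a b hab.le n x hx

lemma orth_pN (n : ℕ) (q : ℝ[X]) (hq : q.degree < n) :
    ∫ x in a..b, (pN a b n).eval x * q.eval x = 0 := by
  simp only [pN, eval_mul, eval_C, mul_assoc]
  rw [intervalIntegral.integral_const_mul, orth a b n q hq, mul_zero]

lemma natDegree_pN (n : ℕ) : (pN a b n).natDegree ≤ n :=
  (natDegree_C_mul_le _ _).trans (natDegree_RP a b n)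

lemma WP_eval_a : (WP a b r).eval a = 1 := by
  rw [WP, eval_mul, eval_C, eval_add, pN_eval_a hab, pN_eval_a hab]
  norm_num

lemma WP_eval_b : (WP a b r).eval b = 0 := by
  rw [WP, eval_mul, eval_C, eval_add, pN_eval_b hab, pN_eval_b hab]
  rw [pow_succ]
  ring

lemma abs_WP_le (r : ℕ) : ∀ x ∈ Icc a b, |(WP a b r).eval x| ≤ 1 := by
  intro x hx
  rw [WP, eval_mul, eval_C, eval_add, abs_mul]
  have h1 := abs_pN_le hab r x hx
  have h2 := abs_pN_le hab (r+1) x hx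
  have := abs_add_le ((pN a b r).eval x) ((pN a b (r+1)).eval x)
  rw [abs_of_pos (by norm_num : (0:ℝ) < 1/2)]
  linarith

lemma orth_WP (r : ℕ) (q : ℝ[X]) (hq : q.degree < r) :
    ∫ x in a..b, (WP a b r).eval x * q.eval x = 0 := by
  simp only [WP, eval_mul, eval_C, eval_add, add_mul, mul_assoc]
  rw [intervalIntegral.integral_const_mul]
  have hsplit : (∫ x in a..b,
      ((pN a b r).eval x * q.eval x + (pN a b (r+1)).eval x * q.eval x))
      = (∫ x in a..b, (pN a b r).eval x * q.eval x)
        + ∫ x in a..b, (pN a b (r+1)).eval x * q.eval x := by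
    apply intervalIntegral.integral_add
    · exact ((pN a b r).continuous.mul q.continuous).intervalIntegrable a b
    · exact ((pN a b (r+1)).continuous.mul q.continuous).intervalIntegrable a b
  rw [hsplit, orth_pN hab r q hq, orth_pN hab (r+1) q (hq.trans (by exact_mod_cast Nat.lt_succ_self r)), add_zero, mul_zero]

lemma natDegree_WP (r : ℕ) : (WP a b r).natDegree ≤ r + 1 := by
  refine (natDegree_C_mul_le _ _).trans ?_
  refine (natDegree_add_le _ _).trans ?_
  exact max_le ((natDegree_pN hab r).trans (by omega)) (natDegree_pN hab (r+1))

lemma natDegree_dWP (r : ℕ) : (derivative (WP a b r)).natDegree ≤ r := by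
  have := natDegree_derivative_le (WP a b r)
  have := natDegree_WP hab r
  omega

/-- Reproducing property of `κ = -W'`. -/
lemma kappa_repro (r : ℕ) (φ : ℝ[X]) (hφ : φ.natDegree ≤ r) :
    ∫ x in a..b, (-(derivative (WP a b r)).eval x) * φ.eval x = φ.eval a := by
  have hparts := intervalIntegral.integral_deriv_mul_eq_sub
    (u := fun x => (WP a b r).eval x) (v := fun x => φ.eval x)
    (u' := fun x => (derivative (WP a b r)).eval x)
    (v' := fun x => (derivative φ).eval x) (a := a) (b := b)
    (fun x _ => Polynomial.hasDerivAt _ x) (fun x _ => Polynomial.hasDerivAt _ x)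
    ((Polynomial.continuous _).intervalIntegrable a b)
    ((Polynomial.continuous _).intervalIntegrable a b)
  beta_reduce at hparts
  rw [WP_eval_a hab, WP_eval_b hab, zero_mul, one_mul, zero_sub] at hparts
  have hsplit : (∫ x in a..b,
      ((derivative (WP a b r)).eval x * φ.eval x + (WP a b r).eval x * (derivative φ).eval x))
      = (∫ x in a..b, (derivative (WP a b r)).eval x * φ.eval x)
        + ∫ x in a..b, (WP a b r).eval x * (derivative φ).eval x := by
    apply intervalIntegral.integral_add
    · exact ((Polynomial.continuous _).mul (Polynomial.continuous _)).intervalIntegrable a b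
    · exact ((Polynomial.continuous _).mul (Polynomial.continuous _)).intervalIntegrable a b
  rw [hsplit] at hparts
  have horth : (∫ x in a..b, (WP a b r).eval x * (derivative φ).eval x) = 0 := by
    rcases eq_or_ne φ 0 with rfl | hφ0
    · simp
    refine orth_WP hab r (derivative φ) ?_
    calc (derivative φ).degree < φ.degree := Polynomial.degree_derivative_lt hφ0
    _ ≤ (φ.natDegree : WithBot ℕ) := Polynomial.degree_le_natDegree
    _ ≤ (r : WithBot ℕ) := by exact_mod_cast hφ
  rw [horth, add_zero] at hparts
  have : (∫ x in a..b, (-(derivative (WP a b r)).eval x) * φ.eval x)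
      = - ∫ x in a..b, (derivative (WP a b r)).eval x * φ.eval x := by
    rw [← intervalIntegral.integral_neg]
    congr 1; funext x; ring
  rw [this, hparts, neg_neg]


end DGaux

open DGaux Polynomial


open DGaux Polynomial

section Helpers
set_option linter.unusedSectionVars false
variable {X : Type*} [NormedAddCommGroup X] [InnerProductSpace ℝ X] [CompleteSpace X]

/-- expansion of `eval • x` as an X-valued polynomial -/
lemma eval_smul_rep (r : ℕ) (q : Polynomial ℝ) (hq : q.natDegree ≤ r) (x : X) (t : ℝ) :
    q.eval t • x = ∑ i ∈ Finset.range (r + 1), t ^ i • (q.coeff i • x) := by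
  rw [Polynomial.eval_eq_sum_range' (lt_of_le_of_lt hq (Nat.lt_succ_self r)), Finset.sum_smul]
  refine Finset.sum_congr rfl fun i _ => ?_
  rw [smul_smul, mul_comm]

lemma isXPoly_eval_smul (r : ℕ) (q : Polynomial ℝ) (hq : q.natDegree ≤ r) (x : X) :
    IsXPoly r (fun t => q.eval t • x) :=
  ⟨fun i => q.coeff i • x, fun t => eval_smul_rep r q hq x t⟩

/-- inner product of a fixed vector with an X-polynomial is a real polynomial -/
lemma exists_inner_poly (m : ℕ) (y : X) (e : ℕ → X) :
    ∃ φ : Polynomial ℝ, φ.natDegree ≤ m ∧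
      ∀ t : ℝ, ⟪y, ∑ i ∈ Finset.range (m + 1), t ^ i • e i⟫ = φ.eval t := by
  refine ⟨∑ i ∈ Finset.range (m + 1), C ⟪y, e i⟫ * Polynomial.X ^ i, ?_, ?_⟩
  · rw [Polynomial.natDegree_le_iff_degree_le]
    refine (Polynomial.degree_sum_le _ _).trans ?_
    refine Finset.sup_le fun i hi => ?_
    refine (Polynomial.degree_mul_le _ _).trans ?_
    have h1 : (C (⟪y, e i⟫ : ℝ)).degree ≤ 0 := Polynomial.degree_C_le
    have h2 : ((Polynomial.X : Polynomial ℝ) ^ i).degree ≤ i := by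
      rw [Polynomial.degree_X_pow]
    calc (C (⟪y, e i⟫:ℝ)).degree + ((Polynomial.X : Polynomial ℝ) ^ i).degree ≤ 0 + (i : WithBot ℕ) :=
          add_le_add h1 h2
    _ = (i : WithBot ℕ) := zero_add _
    _ ≤ (m : WithBot ℕ) := by
          exact_mod_cast Nat.lt_succ_iff.mp (Finset.mem_range.mp hi)
  · intro t
    rw [inner_sum, Polynomial.eval_finset_sum]
    refine Finset.sum_congr rfl fun i _ => ?_
    rw [real_inner_smul_right, Polynomial.eval_mul, Polynomial.eval_C,
      Polynomial.eval_pow, Polynomial.eval_X]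
    ring

end Helpers

/-- Proposition 3.2: stability of the inverse of the discrete dG time derivative
operator `χ(U) = U' + L`, with explicit constant `C_χ = 2`, uniformly in the
polynomial degree `r` and in the step length `k`. -/
theorem dG_time_operator_stability
    {X : Type*} [NormedAddCommGroup X] [InnerProductSpace ℝ X] [CompleteSpace X]
    (a b : ℝ) (hab : a < b) (k : ℝ) (hk : k = b - a) (r : ℕ)
    (U L : ℝ → X) (hU : IsXPoly r U) (hL : IsXPoly r L)
    (hLdef : ∀ V : ℝ → X, IsXPoly r V →
      (∫ t in a..b, ⟪L t, V t⟫) = ⟪U a, V a⟫)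
    (p : ℝ≥0∞) (hp : 1 ≤ p) :
    ∀ t ∈ Set.Icc a b, (‖U t‖₊ : ℝ≥0∞) ≤
      2 * ENNReal.ofReal k ^ (1 - 1 / p).toReal *
        eLpNorm (fun t => deriv U t + L t) p (volume.restrict (Set.Icc a b)) := by
  intro t₀ ht₀
  obtain ⟨c, hc⟩ := hU
  obtain ⟨d, hd⟩ := hL
  have hUfun : U = fun t => ∑ i ∈ Finset.range (r + 1), t ^ i • c i := funext hc
  have hLfun : L = fun t => ∑ i ∈ Finset.range (r + 1), t ^ i • d i := funext hd
  set U' : ℝ → X := fun t => ∑ i ∈ Finset.range (r + 1), ((i : ℝ) * t ^ (i - 1)) • c i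
    with hU'def
  have hUderiv : ∀ t, HasDerivAt U (U' t) t := by
    intro t
    rw [hUfun]
    exact HasDerivAt.fun_sum fun i _ => (hasDerivAt_pow i t).smul_const (c i)
  have hderivU : deriv U = U' := funext fun t => (hUderiv t).deriv
  have hUcont : Continuous U := by
    rw [hUfun]
    exact continuous_finset_sum _ fun i _ => (continuous_pow i).smul continuous_const
  have hU'cont : Continuous U' := by
    rw [hU'def]
    exact continuous_finset_sum _ fun i _ =>
      ((continuous_const.mul (continuous_pow (i - 1))).smul continuous_const)
  have hLcont : Continuous L := by
    rw [hLfun]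
    exact continuous_finset_sum _ fun i _ => (continuous_pow i).smul continuous_const
  set χ : ℝ → X := fun t => deriv U t + L t with hχdef
  have hχcont : Continuous χ := by
    rw [hχdef, hderivU]; exact hU'cont.add hLcont
  set N : ℝ := ∫ t in a..b, ‖χ t‖ with hN
  have hNnonneg : 0 ≤ N :=
    intervalIntegral.integral_nonneg hab.le fun t _ => norm_nonneg _
  -- inner products with U' are polynomials of degree < r
  have hinner_deriv : ∀ y : X, ∃ g : Polynomial ℝ, g.degree < (r : WithBot ℕ) ∧
      ∀ t, ⟪U' t, y⟫ = g.eval t := by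
    intro y
    refine ⟨∑ i ∈ Finset.range (r + 1), C ((i : ℝ) * ⟪c i, y⟫) * Polynomial.X ^ (i - 1), ?_, ?_⟩
    · refine lt_of_le_of_lt (Polynomial.degree_sum_le _ _) ?_
      rw [Finset.sup_lt_iff (by exact_mod_cast WithBot.bot_lt_coe r)]
      intro i hi
      rcases Nat.eq_zero_or_pos i with rfl | hipos
      · simp only [Nat.cast_zero, zero_mul, map_zero, zero_mul]
        exact_mod_cast WithBot.bot_lt_coe r
      · have hir : i ≤ r := Nat.lt_succ_iff.mp (Finset.mem_range.mp hi)
        refine lt_of_le_of_lt (Polynomial.degree_mul_le _ _) ?_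
        have h1 : (C ((i:ℝ) * ⟪c i, y⟫)).degree ≤ 0 := Polynomial.degree_C_le
        have h2 : ((Polynomial.X : Polynomial ℝ) ^ (i-1)).degree ≤ ((i-1 : ℕ) : WithBot ℕ) := by
          rw [Polynomial.degree_X_pow]
        calc (C ((i:ℝ) * ⟪c i, y⟫)).degree + ((Polynomial.X : Polynomial ℝ) ^ (i-1)).degree
            ≤ 0 + ((i-1 : ℕ) : WithBot ℕ) := add_le_add h1 h2
        _ = ((i-1 : ℕ) : WithBot ℕ) := zero_add _
        _ < (r : WithBot ℕ) := by exact_mod_cast (by omega : i - 1 < r)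
    · intro t
      rw [hU'def, sum_inner, Polynomial.eval_finset_sum]
      refine Finset.sum_congr rfl fun i _ => ?_
      rw [real_inner_smul_left, Polynomial.eval_mul, Polynomial.eval_C,
        Polynomial.eval_pow, Polynomial.eval_X]
      ring
  ----------------------------------------------------------------
  -- STEP A : ‖U a‖ ≤ N
  ----------------------------------------------------------------
  have hUaN : ‖U a‖ ≤ N := by
    set vp := pN a b r with hvp
    have hVX : IsXPoly r (fun t => vp.eval t • U a) :=
      isXPoly_eval_smul r vp (natDegree_pN hab r) (U a)
    have hE1 : (∫ t in a..b, ⟪L t, vp.eval t • U a⟫) = ⟪U a, U a⟫ := by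
      have := hLdef _ hVX
      rwa [pN_eval_a hab r, one_smul] at this
    obtain ⟨g, hgdeg, hg⟩ := hinner_deriv (U a)
    have hE2 : (∫ t in a..b, ⟪U' t, vp.eval t • U a⟫) = 0 := by
      have heq : ∀ t, ⟪U' t, vp.eval t • U a⟫ = vp.eval t * g.eval t := by
        intro t
        rw [real_inner_smul_right, hg t]
      rw [intervalIntegral.integral_congr (fun t _ => heq t)]
      exact orth_pN hab r g hgdeg
    have hsum : (∫ t in a..b, ⟪χ t, vp.eval t • U a⟫) = ‖U a‖ ^ 2 := by
      have heq : ∀ t, ⟪χ t, vp.eval t • U a⟫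
          = ⟪U' t, vp.eval t • U a⟫ + ⟪L t, vp.eval t • U a⟫ := by
        intro t
        rw [hχdef]
        simp only [hderivU]
        rw [← inner_add_left]
      rw [intervalIntegral.integral_congr (fun t _ => heq t)]
      rw [intervalIntegral.integral_add
        ((hU'cont.inner ((vp.continuous.smul continuous_const))).intervalIntegrable a b)
        ((hLcont.inner ((vp.continuous.smul continuous_const))).intervalIntegrable a b)]
      rw [hE1, hE2, zero_add, real_inner_self_eq_norm_sq]
    have hmono : (∫ t in a..b, ⟪χ t, vp.eval t • U a⟫)
        ≤ ∫ t in a..b, ‖χ t‖ * ‖U a‖ := by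
      apply intervalIntegral.integral_mono_on hab.le
        ((hχcont.inner (vp.continuous.smul continuous_const)).intervalIntegrable a b)
        ((hχcont.norm.mul continuous_const).intervalIntegrable a b)
      intro t ht
      calc ⟪χ t, vp.eval t • U a⟫ ≤ ‖χ t‖ * ‖vp.eval t • U a‖ := real_inner_le_norm _ _
      _ = ‖χ t‖ * (|vp.eval t| * ‖U a‖) := by rw [norm_smul, Real.norm_eq_abs]
      _ ≤ ‖χ t‖ * (1 * ‖U a‖) := by
          have := abs_pN_le hab r t ht
          gcongr
      _ = ‖χ t‖ * ‖U a‖ := by ring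
    have hNm : (∫ t in a..b, ‖χ t‖ * ‖U a‖) = N * ‖U a‖ := by
      rw [hN, ← intervalIntegral.integral_mul_const]
    have hsq : ‖U a‖ ^ 2 ≤ N * ‖U a‖ := by
      rw [← hsum]; rw [hNm] at hmono; exact hmono
    rcases eq_or_lt_of_le (norm_nonneg (U a)) with h0 | h0
    · rw [← h0]; exact hNnonneg
    · nlinarith [hsq]
  ----------------------------------------------------------------
  -- STEP B : identification of L and pointwise bound
  ----------------------------------------------------------------
  set Wp := WP a b r with hWp
  set κ : Polynomial ℝ := -(Polynomial.derivative Wp) with hκ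
  have hκdeg : κ.natDegree ≤ r := by
    rw [hκ, Polynomial.natDegree_neg]; exact natDegree_dWP hab r
  set Lt : ℝ → X := fun t => κ.eval t • U a with hLt
  have hLtcont : Continuous Lt := κ.continuous.smul continuous_const
  have hLtdef : ∀ V : ℝ → X, IsXPoly r V → (∫ t in a..b, ⟪Lt t, V t⟫) = ⟪U a, V a⟫ := by
    intro V hV
    obtain ⟨e, he⟩ := hV
    obtain ⟨φ, hφdeg, hφ⟩ := exists_inner_poly r (U a) e
    have heval : ∀ t, ⟪Lt t, V t⟫ = (-(Polynomial.derivative Wp).eval t) * φ.eval t := by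
      intro t
      rw [hLt]
      beta_reduce
      rw [real_inner_smul_left, he t, hφ t, hκ]
      simp
    rw [intervalIntegral.integral_congr (fun t _ => heval t)]
    rw [kappa_repro hab r φ hφdeg, ← hφ a, he a]
  have hLeq : ∀ t ∈ Icc a b, L t = Lt t := by
    set D : ℝ → X := fun t => L t - Lt t with hD
    have hDcont : Continuous D := hLcont.sub hLtcont
    have hDX : IsXPoly r D := by
      refine ⟨fun i => d i - κ.coeff i • U a, fun t => ?_⟩
      rw [hD]
      beta_reduce
      rw [hd t, hLt]
      beta_reduce
      rw [eval_smul_rep r κ hκdeg (U a) t, ← Finset.sum_sub_distrib]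
      exact Finset.sum_congr rfl fun i _ => by rw [smul_sub]
    have hDint : (∫ t in a..b, ⟪D t, D t⟫) = 0 := by
      have h1 := hLdef D hDX
      have h2 := hLtdef D hDX
      have heq : ∀ t, ⟪D t, D t⟫ = ⟪L t, D t⟫ - ⟪Lt t, D t⟫ := by
        intro t
        rw [hD]
        beta_reduce
        rw [inner_sub_left]
      rw [intervalIntegral.integral_congr (fun t _ => heq t)]
      rw [intervalIntegral.integral_sub
        ((hLcont.inner hDcont).intervalIntegrable a b)
        ((hLtcont.inner hDcont).intervalIntegrable a b), h1, h2, sub_self]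
    have hIoo : ∀ t ∈ Ioo a b, ⟪D t, D t⟫ = (0 : ℝ) := by
      have hfc : Continuous fun t => ⟪D t, D t⟫ := hDcont.inner hDcont
      have hint : Integrable (fun t => ⟪D t, D t⟫) (volume.restrict (Ioc a b)) :=
        (hfc.integrableOn_Icc (a := a) (b := b)).mono_set Ioc_subset_Icc_self
      have hzero : (∫ t in Ioc a b, ⟪D t, D t⟫) = 0 := by
        rw [← intervalIntegral.integral_of_le hab.le]; exact hDint
      have hae := (MeasureTheory.integral_eq_zero_iff_of_nonneg
        (fun t => real_inner_self_nonneg) hint).mp hzero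
      have hS : volume.restrict (Ioc a b) {t : ℝ | ⟪D t, D t⟫ ≠ 0} = 0 := by
        rw [Filter.EventuallyEq, MeasureTheory.ae_iff] at hae
        simpa using hae
      have hSopen : IsOpen {t : ℝ | ⟪D t, D t⟫ ≠ 0} :=
        isOpen_compl_singleton.preimage hfc
      have hSmeas : volume ({t : ℝ | ⟪D t, D t⟫ ≠ 0} ∩ Ioc a b) = 0 := by
        rwa [Measure.restrict_apply hSopen.measurableSet] at hS
      intro t ht
      by_contra hne
      have hopen : IsOpen ({t : ℝ | ⟪D t, D t⟫ ≠ 0} ∩ Ioo a b) := hSopen.inter isOpen_Ioo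
      have hpos : 0 < volume ({t : ℝ | ⟪D t, D t⟫ ≠ 0} ∩ Ioo a b) :=
        hopen.measure_pos volume ⟨t, hne, ht⟩
      have hle : volume ({t : ℝ | ⟪D t, D t⟫ ≠ 0} ∩ Ioo a b)
          ≤ volume ({t : ℝ | ⟪D t, D t⟫ ≠ 0} ∩ Ioc a b) :=
        measure_mono (inter_subset_inter_right _ Ioo_subset_Ioc_self)
      rw [hSmeas] at hle
      exact absurd (lt_of_lt_of_le hpos hle) (lt_irrefl 0)
    intro t ht
    have hclos : EqOn (fun t => ⟪D t, D t⟫) (fun _ => (0:ℝ)) (Icc a b) := by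
      have := Set.EqOn.closure (s := Ioo a b) (f := fun t => ⟪D t, D t⟫)
        (g := fun _ => (0:ℝ)) (fun x hx => hIoo x hx) (hDcont.inner hDcont) continuous_const
      rwa [closure_Ioo hab.ne] at this
    have h0 : ⟪D t, D t⟫ = (0:ℝ) := hclos ht
    have hD0 : D t = 0 := inner_self_eq_zero.mp h0
    have hsub : L t - Lt t = 0 := hD0
    exact sub_eq_zero.mp hsub
  ----------------------------------------------------------------
  -- FTC representation and pointwise bound
  ----------------------------------------------------------------
  have hFTC : (∫ t in a..t₀, U' t) = U t₀ - U a :=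
    intervalIntegral.integral_eq_sub_of_hasDerivAt (fun t _ => hUderiv t)
      (hU'cont.intervalIntegrable a t₀)
  have hU'eq : ∀ t, U' t = χ t - L t := by
    intro t
    rw [hχdef]
    simp only [hderivU]
    abel
  have hsplit : (∫ t in a..t₀, U' t) = (∫ t in a..t₀, χ t) - ∫ t in a..t₀, L t := by
    rw [intervalIntegral.integral_congr (fun t _ => hU'eq t)]
    exact intervalIntegral.integral_sub (hχcont.intervalIntegrable a t₀)
      (hLcont.intervalIntegrable a t₀)
  have hWFTC : (∫ t in a..t₀, (Polynomial.derivative Wp).eval t) = Wp.eval t₀ - Wp.eval a :=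
    intervalIntegral.integral_eq_sub_of_hasDerivAt (fun t _ => Wp.hasDerivAt t)
      ((Polynomial.continuous _).intervalIntegrable a t₀)
  have hLint : (∫ t in a..t₀, L t) = (1 - Wp.eval t₀) • U a := by
    have hEq : EqOn L Lt (uIcc a t₀) := by
      intro s hs
      apply hLeq
      rw [uIcc_of_le ht₀.1] at hs
      exact ⟨hs.1, le_trans hs.2 ht₀.2⟩
    rw [intervalIntegral.integral_congr hEq, hLt]
    beta_reduce
    rw [intervalIntegral.integral_smul_const]
    congr 1
    have hκev : ∀ t : ℝ, κ.eval t = -((Polynomial.derivative Wp).eval t) := by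
      intro t; rw [hκ]; simp
    rw [intervalIntegral.integral_congr (fun t _ => hκev t)]
    rw [intervalIntegral.integral_neg, hWFTC, WP_eval_a hab]
    ring
  have hrepr : U t₀ = Wp.eval t₀ • U a + ∫ t in a..t₀, χ t := by
    have h1 : U t₀ - U a = (∫ t in a..t₀, χ t) - (1 - Wp.eval t₀) • U a := by
      rw [← hFTC, hsplit, hLint]
    have h2 : (1 - Wp.eval t₀) • U a = U a - Wp.eval t₀ • U a := by
      rw [sub_smul, one_smul]
    rw [h2] at h1
    calc U t₀ = (U t₀ - U a) + U a := by abel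
    _ = ((∫ t in a..t₀, χ t) - (U a - Wp.eval t₀ • U a)) + U a := by rw [h1]
    _ = Wp.eval t₀ • U a + ∫ t in a..t₀, χ t := by abel
  have hnorm : ‖U t₀‖ ≤ 2 * N := by
    have h1 : ‖Wp.eval t₀ • U a‖ ≤ N := by
      rw [norm_smul, Real.norm_eq_abs]
      calc |Wp.eval t₀| * ‖U a‖ ≤ 1 * N :=
        mul_le_mul (abs_WP_le hab r t₀ ht₀) hUaN (norm_nonneg _) zero_le_one
      _ = N := one_mul N
    have h2 : ‖∫ t in a..t₀, χ t‖ ≤ N := by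
      calc ‖∫ t in a..t₀, χ t‖ ≤ ∫ t in a..t₀, ‖χ t‖ :=
        intervalIntegral.norm_integral_le_integral_norm ht₀.1
      _ ≤ N := by
        rw [hN]
        apply intervalIntegral.integral_mono_interval le_rfl ht₀.1 ht₀.2
          (Filter.Eventually.of_forall fun t => norm_nonneg _)
          (hχcont.norm.intervalIntegrable a b)
    calc ‖U t₀‖ ≤ ‖Wp.eval t₀ • U a‖ + ‖∫ t in a..t₀, χ t‖ := by rw [hrepr]; exact norm_add_le _ _
    _ ≤ 2 * N := by linarith
  ----------------------------------------------------------------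
  -- STEP D : ENNReal conversion and Hölder
  ----------------------------------------------------------------
  set μ := volume.restrict (Icc a b) with hμ
  have hχmeas : AEStronglyMeasurable χ μ := hχcont.aestronglyMeasurable
  have hχint : Integrable χ μ := by
    rw [hμ]
    exact (hχcont.integrableOn_Icc : IntegrableOn χ (Icc a b) volume)
  have hNofReal : ENNReal.ofReal N = eLpNorm χ 1 μ := by
    rw [MeasureTheory.eLpNorm_one_eq_lintegral_enorm,
      ← MeasureTheory.ofReal_integral_norm_eq_lintegral_enorm hχint]
    congr 1
    rw [hN, intervalIntegral.integral_of_le hab.le, hμ,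
      MeasureTheory.integral_Icc_eq_integral_Ioc]
  have hHolder : eLpNorm χ 1 μ ≤ eLpNorm χ p μ * (ENNReal.ofReal k) ^ (1 - 1/p).toReal := by
    have h := MeasureTheory.eLpNorm_le_eLpNorm_mul_rpow_measure_univ (p := 1) (q := p)
      hp hχmeas
    have hμuniv : μ Set.univ = ENNReal.ofReal k := by
      rw [hμ, Measure.restrict_apply_univ, Real.volume_Icc, hk]
    have hexp : (1:ℝ)/(1:ℝ≥0∞).toReal - 1/p.toReal = (1 - 1/p).toReal := by
      rcases eq_or_ne p ∞ with rfl | hptop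
      · simp
      · have hle1 : (1/p : ℝ≥0∞) ≤ 1 := by
          rw [one_div]
          exact ENNReal.inv_le_one.mpr hp
        rw [ENNReal.toReal_sub_of_le hle1 (by norm_num)]
        simp [one_div, ENNReal.toReal_inv]
    rw [hμuniv, hexp] at h
    exact h
  have hfin1 : (‖U t₀‖₊ : ℝ≥0∞) ≤ ENNReal.ofReal (2 * N) := by
    rw [← enorm_eq_nnnorm, ← ofReal_norm]
    exact ENNReal.ofReal_le_ofReal hnorm
  calc (‖U t₀‖₊ : ℝ≥0∞) ≤ ENNReal.ofReal (2 * N) := hfin1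
  _ = 2 * ENNReal.ofReal N := by
      rw [ENNReal.ofReal_mul (by norm_num : (0:ℝ) ≤ 2)]
      norm_num
  _ = 2 * eLpNorm χ 1 μ := by rw [hNofReal]
  _ ≤ 2 * (eLpNorm χ p μ * (ENNReal.ofReal k) ^ (1 - 1/p).toReal) :=
      mul_le_mul_right hHolder 2
  _ = 2 * ENNReal.ofReal k ^ (1 - 1/p).toReal * eLpNorm χ p μ := by ring
end

section
/- Let X be a real Hilbert space, let a < b be real numbers, let r ∈ ℕ, and let z ∈ X. Let L be an X-valued polynomial of degree at most r satisfying ∫_a^b ⟨L(t), V(t)⟩ dt = ⟨z, V(a)⟩ for every X-valued polynomial V of degree at most r. Then sup_{t ∈ [a,b]} ‖z − ∫_a^t L(τ) dτ‖ = ‖z‖. -/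
open MeasureTheory Set
open scoped RealInnerProductSpace

namespace LiftAux

open Polynomial


noncomputable def rod (a b : ℝ) (n : ℕ) : ℝ[X] :=
  derivative^[n] ((X - C a) ^ n * (X - C b) ^ n)

variable {a b : ℝ}

lemma natDegree_f_le (n : ℕ) : ((X - C a) ^ n * (X - C b) ^ n).natDegree ≤ 2 * n := by
  refine (natDegree_mul_le).trans ?_
  have h1 : ((X - C a) ^ n).natDegree ≤ n :=
    (natDegree_pow_le).trans (by simp [natDegree_X_sub_C])
  have h2 : ((X - C b) ^ n).natDegree ≤ n :=
    (natDegree_pow_le).trans (by simp [natDegree_X_sub_C])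
  omega

lemma natDegree_rod_le (n : ℕ) : (rod a b n).natDegree ≤ n := by
  have h := Polynomial.natDegree_iterate_derivative ((X - C a) ^ n * (X - C b) ^ n) n
  have h2 := natDegree_f_le (a := a) (b := b) n
  rw [rod]
  omega

lemma rod_aux_dvd (n : ℕ) : ∀ j, j ≤ n →
    ∃ u : ℝ[X], derivative^[j] ((X - C a) ^ n * (X - C b) ^ n)
      = (X - C a) ^ (n - j) * (X - C b) ^ (n - j) * u := by
  intro j
  induction j with
  | zero => exact fun _ => ⟨1, by simp⟩
  | succ j ih =>
    intro hj
    obtain ⟨u, hu⟩ := ih (by omega)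
    obtain ⟨k, hk⟩ : ∃ k, n - j = k + 1 := ⟨n - (j+1), by omega⟩
    have hk' : n - (j+1) = k := by omega
    refine ⟨C ((k+1 : ℕ) : ℝ) * ((X - C b) * u + (X - C a) * u)
      + (X - C a) * (X - C b) * derivative u, ?_⟩
    rw [Function.iterate_succ_apply', hu, hk, hk']
    simp only [derivative_mul, derivative_pow, derivative_sub, derivative_X, derivative_C,
      sub_zero, mul_one, Nat.add_sub_cancel, Nat.cast_add, Nat.cast_one]
    ring

lemma rod_boundary_a (n j : ℕ) (hj : j < n) :
    (derivative^[j] ((X - C a) ^ n * (X - C b) ^ n)).eval a = 0 := by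
  obtain ⟨u, hu⟩ := rod_aux_dvd (a := a) (b := b) n j hj.le
  rw [hu]
  simp [zero_pow (by omega : n - j ≠ 0)]

lemma rod_boundary_b (n j : ℕ) (hj : j < n) :
    (derivative^[j] ((X - C a) ^ n * (X - C b) ^ n)).eval b = 0 := by
  obtain ⟨u, hu⟩ := rod_aux_dvd (a := a) (b := b) n j hj.le
  rw [hu]
  simp [zero_pow (by omega : n - j ≠ 0)]

lemma poly_ibp (p q : ℝ[X]) (a b : ℝ) :
    ∫ t in a..b, p.eval t * (derivative q).eval t
      = p.eval b * q.eval b - p.eval a * q.eval a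
        - ∫ t in a..b, (derivative p).eval t * q.eval t :=
  intervalIntegral.integral_mul_deriv_eq_deriv_mul
    (fun x _ => p.hasDerivAt x) (fun x _ => q.hasDerivAt x)
    ((p.derivative.continuous).intervalIntegrable _ _)
    ((q.derivative.continuous).intervalIntegrable _ _)

lemma orth_aux (n : ℕ) : ∀ j, j ≤ n → ∀ Q : ℝ[X], Q.degree < j →
    ∫ t in a..b, Q.eval t * (derivative^[j] ((X - C a) ^ n * (X - C b) ^ n)).eval t = 0 := by
  intro j
  induction j with
  | zero =>
    intro _ Q hQ
    have : Q = 0 := by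
      rw [← degree_eq_bot]
      exact Nat.WithBot.lt_zero_iff.mp (by exact_mod_cast hQ)
    simp [this]
  | succ j ih =>
    intro hj Q hQ
    have hQ' : (derivative Q).degree < j := by
      by_cases h0 : Q = 0
      · simp [h0]
      · refine lt_of_lt_of_le (degree_derivative_lt h0) ?_
        rw [degree_eq_natDegree h0] at hQ ⊢
        exact_mod_cast (by exact_mod_cast Nat.lt_succ_iff.mp (by exact_mod_cast hQ) : Q.natDegree ≤ j)
    rw [Function.iterate_succ_apply', poly_ibp,
      rod_boundary_a n j (by omega), rod_boundary_b n j (by omega)]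
    simp [ih (by omega) (derivative Q) hQ']

lemma orth (n : ℕ) (Q : ℝ[X]) (hQ : Q.degree < n) :
    ∫ t in a..b, Q.eval t * (rod a b n).eval t = 0 :=
  orth_aux n n le_rfl Q hQ



lemma pearson (n : ℕ) :
    derivative ((X - C a) ^ n * (X - C b) ^ n) * ((X - C a) * (X - C b))
      = ((X - C a) ^ n * (X - C b) ^ n) * (C (n : ℝ) * (2 * X - C (a + b))) := by
  cases n with
  | zero => simp
  | succ m =>
    simp only [derivative_mul, derivative_pow, derivative_sub, derivative_X, derivative_C,
      sub_zero, mul_one, Nat.add_sub_cancel, Nat.cast_add, Nat.cast_one, C_add, C_1]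
    ring

lemma natDegree_S_le : ((X - C a) * (X - C b)).natDegree ≤ 2 :=
  natDegree_mul_le.trans (by simp [natDegree_X_sub_C])

lemma rod_ode (n : ℕ) :
    (X - C a) * (X - C b) * derivative (derivative (rod a b n))
      + (2 * X - C (a + b)) * derivative (rod a b n)
    = C ((n : ℝ) * ((n : ℝ) + 1)) * rod a b n := by
  cases n with
  | zero => simp [rod]
  | succ m =>
    have key := congrArg (derivative^[m + 2]) (pearson (a := a) (b := b) (m + 1))
    rw [Polynomial.iterate_derivative_mul, Polynomial.iterate_derivative_mul] at key
    set f : ℝ[X] := (X - C a) ^ (m + 1) * (X - C b) ^ (m + 1) with hf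
    set S : ℝ[X] := (X - C a) * (X - C b) with hS
    set T : ℝ[X] := C ((m + 1 : ℕ) : ℝ) * (2 * X - C (a + b)) with hT
    have h2X : (2 * X - C (a + b) : ℝ[X]).natDegree ≤ 1 := by
      refine (natDegree_sub_le _ _).trans (max_le ?_ ?_)
      · exact natDegree_mul_le.trans (by simp)
      · simp [natDegree_C]
    have e1 : ∑ k ∈ Finset.range (m + 2 + 1),
        (m + 2).choose k • (derivative^[m + 2 - k] (derivative f) * derivative^[k] S)
        = ∑ k ∈ Finset.range 3,
        (m + 2).choose k • (derivative^[m + 2 - k] (derivative f) * derivative^[k] S) := by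
      refine (Finset.sum_subset (fun k hk => Finset.mem_range.mpr ?_) fun k hk h3 => ?_).symm
      · have := Finset.mem_range.mp hk; omega
      · have h3' : 3 ≤ k := by simpa using h3
        have : derivative^[k] S = 0 :=
          Polynomial.iterate_derivative_eq_zero (lt_of_le_of_lt natDegree_S_le (by omega))
        simp [this]
    have e2 : ∑ k ∈ Finset.range (m + 2 + 1),
        (m + 2).choose k • (derivative^[m + 2 - k] f * derivative^[k] T)
        = ∑ k ∈ Finset.range 2,
        (m + 2).choose k • (derivative^[m + 2 - k] f * derivative^[k] T) := by
      refine (Finset.sum_subset (fun k hk => Finset.mem_range.mpr ?_) fun k hk h2 => ?_).symm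
      · have := Finset.mem_range.mp hk; omega
      · have h2' : 2 ≤ k := by simp at h2; omega
        have hT1 : T.natDegree ≤ 1 := (natDegree_C_mul_le _ _).trans h2X
        have : derivative^[k] T = 0 :=
          Polynomial.iterate_derivative_eq_zero (lt_of_le_of_lt hT1 (by omega))
        simp [this]
    rw [e1, e2] at key
    have hDS : derivative S = 2 * X - C (a + b) := by
      simp only [hS, derivative_mul, derivative_sub, derivative_X, derivative_C, sub_zero,
        mul_one, one_mul, C_add]
      ring
    have hG : derivative (2 * X - C (a + b) : ℝ[X]) = 2 := by simp
    have hit : ∀ j : ℕ, derivative^[j] (derivative f) = derivative^[j + 1] f :=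
      fun j => (Function.iterate_succ_apply derivative j f).symm
    have hit' : ∀ j : ℕ, derivative^[j + 1] f = derivative (derivative^[j] f) :=
      fun j => Function.iterate_succ_apply' derivative j f
    have hrod : rod a b (m + 1) = derivative^[m + 1] f := rfl
    simp only [Finset.sum_range_succ, Finset.sum_range_zero, zero_add] at key
    have i0 : m + 2 - 0 = m + 2 := by omega
    have i1 : m + 2 - 1 = m + 1 := by omega
    have i2 : m + 2 - 2 = m := by omega
    rw [i0, i1, i2] at key
    have hS0 : derivative^[0] S = S := rfl
    have hS1 : derivative^[1] S = 2 * X - C (a + b) := by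
      rw [Function.iterate_one, hDS]
    have hS2 : derivative^[2] S = 2 := by
      rw [show (2:ℕ) = 1 + 1 from rfl, Function.iterate_succ_apply', Function.iterate_one,
        hDS, hG]
    have hT0 : derivative^[0] T = T := rfl
    have hT1' : derivative^[1] T = C ((m + 1 : ℕ) : ℝ) * 2 := by
      rw [Function.iterate_one, hT, derivative_C_mul, hG]
    have g0 : derivative^[m] (derivative f) = derivative^[m + 1] f := hit m
    have g1 : derivative^[m + 1] (derivative f) = derivative (derivative^[m + 1] f) :=
      (hit (m + 1)).trans (hit' (m + 1))
    have g2 : derivative^[m + 2] (derivative f) = derivative (derivative (derivative^[m + 1] f)) := by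
      rw [hit (m + 2), show m + 2 + 1 = (m + 2) + 1 from rfl, hit' (m + 2), hit' (m + 1)]
    have q1 : derivative^[m + 2] f = derivative (derivative^[m + 1] f) := hit' (m + 1)
    rw [hS0, hS1, hS2, hT0, hT1', g0, g1, g2, q1] at key
    have hcn : 2 * ((m + 2).choose 2) = (m + 2) * (m + 1) := by
      rw [Nat.choose_two_right]
      have h' : (m + 2) * (m + 2 - 1) = (m + 2) * (m + 1) := by congr 1
      obtain ⟨c, hc⟩ : 2 ∣ (m + 2) * (m + 1) := by
        simpa [Nat.mul_comm] using (Nat.even_mul_succ_self (m + 1)).two_dvd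
      rw [h', hc, Nat.mul_div_cancel_left _ (by norm_num : 0 < 2)]
    have hcR : (((m + 2).choose 2 : ℕ) : ℝ[X]) * 2 = ((m : ℝ[X]) + 2) * ((m : ℝ[X]) + 1) := by
      have := congrArg (fun k : ℕ => ((k : ℕ) : ℝ[X])) hcn
      push_cast at this
      linear_combination this
    rw [hrod]
    simp only [nsmul_eq_mul, map_natCast, map_mul, map_add, map_one, hT,
      Nat.choose_zero_right, Nat.choose_one_right] at key ⊢
    push_cast at key ⊢
    linear_combination key - (derivative^[m + 1] f) * hcR



lemma rod_eval_b (n : ℕ) : (rod a b n).eval b = (n.factorial : ℝ) * (b - a) ^ n := by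
  rw [rod, Polynomial.iterate_derivative_mul, eval_finset_sum]
  rw [Finset.sum_eq_single n]
  · simp [Polynomial.iterate_derivative_X_sub_pow, Nat.descFactorial_self, eval_pow, mul_comm]
  · intro k hk hkn
    have hk' : k < n := by have := Finset.mem_range.mp hk; omega
    have h2 : derivative^[k] ((X - C b) ^ n) = n.descFactorial k • (X - C b) ^ (n - k) :=
      Polynomial.iterate_derivative_X_sub_pow _ _ _
    rw [h2]
    simp [eval_pow, zero_pow (by omega : n - k ≠ 0)]
  · intro h; simp at h

lemma rod_eval_a (n : ℕ) : (rod a b n).eval a = (n.factorial : ℝ) * (a - b) ^ n := by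
  rw [rod, Polynomial.iterate_derivative_mul, eval_finset_sum]
  rw [Finset.sum_eq_single 0]
  · simp [Polynomial.iterate_derivative_X_sub_pow, Nat.descFactorial_self, eval_pow, mul_comm]
  · intro k hk hkn
    have this1 : derivative^[n - k] ((X - C a) ^ n) =
        n.descFactorial (n - k) • (X - C a) ^ (n - (n - k)) :=
      Polynomial.iterate_derivative_X_sub_pow _ _ _
    have hnk : n - (n - k) = k := by
      have := Finset.mem_range.mp hk; omega
    rw [this1, hnk]
    simp [eval_pow, zero_pow (by omega : k ≠ 0)]
  · intro h; simp at h



lemma rod_abs_le (hab : a < b) (n : ℕ) :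
    ∀ t ∈ Icc a b, |(rod a b n).eval t| ≤ (n.factorial : ℝ) * (b - a) ^ n := by
  rcases Nat.eq_zero_or_pos n with hn | hn
  · subst hn; intro t ht; simp [rod]
  intro t ht
  set p : ℝ[X] := rod a b n with hp
  set N : ℝ := (n : ℝ) * ((n : ℝ) + 1) with hN
  have hNpos : 0 < N := by
    have : (1 : ℝ) ≤ (n : ℝ) := by exact_mod_cast hn
    nlinarith
  set E : ℝ[X] := C N * p ^ 2 - (X - C a) * (X - C b) * (derivative p) ^ 2 with hE
  have hE' : derivative E = (2 * X - C (a + b)) * (derivative p) ^ 2 := by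
    have ode := rod_ode (a := a) (b := b) n
    simp only [hE, derivative_sub, derivative_mul, derivative_pow, derivative_C, derivative_X,
      Nat.cast_ofNat, sub_zero, mul_one, one_mul, Nat.add_sub_cancel, pow_one, map_ofNat, C_add]
    rw [C_add] at ode
    linear_combination (-2 * derivative p) * ode
  have hderiv : ∀ x : ℝ, deriv (fun s => E.eval s) x
      = (2 * x - (a + b)) * ((derivative p).eval x) ^ 2 := by
    intro x
    rw [Polynomial.deriv, hE']
    simp [eval_mul, eval_pow, eval_sub, eval_C, eval_X]
  have hcont : Continuous fun s => E.eval s := E.continuous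
  have hdiff : Differentiable ℝ fun s => E.eval s := fun x => (E.hasDerivAt x).differentiableAt
  set m : ℝ := (a + b) / 2 with hm
  have ham : a ≤ m := by rw [hm]; linarith
  have hmb : m ≤ b := by rw [hm]; linarith
  have hant : AntitoneOn (fun s => E.eval s) (Icc a m) := by
    apply antitoneOn_of_deriv_nonpos (convex_Icc a m) hcont.continuousOn
      (hdiff.differentiableOn)
    intro x hx
    rw [interior_Icc] at hx
    rw [hderiv]
    apply mul_nonpos_of_nonpos_of_nonneg
    · have : x < m := hx.2
      simp only [hm] at this
      linarith
    · positivity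
  have hmon : MonotoneOn (fun s => E.eval s) (Icc m b) := by
    apply monotoneOn_of_deriv_nonneg (convex_Icc m b) hcont.continuousOn
      (hdiff.differentiableOn)
    intro x hx
    rw [interior_Icc] at hx
    rw [hderiv]
    apply mul_nonneg
    · have : m < x := hx.1
      simp only [hm] at this
      linarith
    · positivity
  set M : ℝ := (n.factorial : ℝ) * (b - a) ^ n with hM
  have hMpos : 0 < M := by
    apply mul_pos
    · exact_mod_cast Nat.factorial_pos n
    · exact pow_pos (by linarith) n
  have h1 : ((a - b) ^ n) ^ 2 = ((b - a) ^ n) ^ 2 := by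
    rw [← pow_mul, ← pow_mul, mul_comm n 2, pow_mul, pow_mul]
    congr 1
    ring
  have hpa2 : (p.eval a) ^ 2 = M ^ 2 := by
    rw [hp, rod_eval_a, hM, mul_pow, mul_pow, h1]
  have hEa : E.eval a = N * M ^ 2 := by
    have hh : E.eval a = N * (p.eval a) ^ 2 := by
      simp [hE]
    rw [hh, hpa2]
  have hEb : E.eval b = N * M ^ 2 := by
    have hh : E.eval b = N * (p.eval b) ^ 2 := by
      simp [hE]
    rw [hh, hp, rod_eval_b, hM, mul_pow]
  have hEt : E.eval t ≤ N * M ^ 2 := by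
    rcases le_total t m with htm | htm
    · have := hant (left_mem_Icc.mpr ham) ⟨ht.1, htm⟩ ht.1
      simpa [hEa] using this
    · have := hmon ⟨htm, ht.2⟩ (right_mem_Icc.mpr hmb) ht.2
      simpa [hEb] using this
  have hst : (t - a) * (t - b) ≤ 0 :=
    mul_nonpos_of_nonneg_of_nonpos (by linarith [ht.1]) (by linarith [ht.2])
  have hEt' : N * (p.eval t) ^ 2 ≤ E.eval t := by
    simp only [hE, eval_sub, eval_mul, eval_pow, eval_C, eval_X]
    nlinarith [mul_nonpos_of_nonpos_of_nonneg hst (sq_nonneg ((derivative p).eval t))]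
  have hsq : (p.eval t) ^ 2 ≤ M ^ 2 := by
    have := hEt'.trans hEt
    nlinarith
  nlinarith [sq_abs (p.eval t), abs_nonneg (p.eval t)]



lemma poly_zero_of_integral_sq_zero (hab : a < b) (h : ℝ[X])
    (h0 : (∫ t in a..b, h.eval t * h.eval t) = 0) : h = 0 := by
  by_contra hne
  have hnn : 0 ≤ᵐ[volume.restrict (Ioc a b)] fun t => h.eval t * h.eval t :=
    Filter.Eventually.of_forall fun t => mul_self_nonneg _
  have hint : IntervalIntegrable (fun t => h.eval t * h.eval t) volume a b :=
    (h.continuous.mul h.continuous).intervalIntegrable _ _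
  have hae := (intervalIntegral.integral_eq_zero_iff_of_le_of_nonneg_ae hab.le hnn hint).mp h0
  have hmeas : volume.restrict (Ioc a b) {t : ℝ | h.eval t * h.eval t ≠ 0} = 0 := by
    have h' : ∀ᵐ t ∂(volume.restrict (Ioc a b)), h.eval t * h.eval t = 0 := by
      filter_upwards [hae] with t ht using by simpa using ht
    exact ae_iff.mp h'
  have hopen : IsOpen {t : ℝ | h.eval t * h.eval t ≠ 0} :=
    isOpen_ne.preimage (h.continuous.mul h.continuous)
  rw [Measure.restrict_apply hopen.measurableSet] at hmeas
  have hsub : Ioc a b ⊆ ({t : ℝ | h.eval t * h.eval t ≠ 0} ∩ Ioc a b) ∪ {x : ℝ | h.IsRoot x} := by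
    intro t htI
    by_cases hz : h.eval t = 0
    · exact Or.inr hz
    · exact Or.inl ⟨fun hc => hz (by nlinarith [mul_self_nonneg (h.eval t)]), htI⟩
  have hroots : volume {x : ℝ | h.IsRoot x} = 0 :=
    Set.Finite.measure_zero (h.finite_setOf_isRoot hne) _
  have : volume (Ioc a b) = 0 := by
    refine le_antisymm ?_ zero_le
    calc volume (Ioc a b)
        ≤ volume (({t : ℝ | h.eval t * h.eval t ≠ 0} ∩ Ioc a b) ∪ {x : ℝ | h.IsRoot x}) :=
          measure_mono hsub
      _ ≤ volume ({t : ℝ | h.eval t * h.eval t ≠ 0} ∩ Ioc a b) + volume {x : ℝ | h.IsRoot x} :=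
          measure_union_le _ _
      _ = 0 := by rw [hmeas, hroots, add_zero]
  rw [Real.volume_Ioc] at this
  have : (ENNReal.ofReal (b - a)) ≠ 0 := by
    simp [ENNReal.ofReal_eq_zero]
    linarith
  exact this ‹_›

lemma rod_coeff_ne (n : ℕ) : (rod a b n).coeff n ≠ 0 := by
  have hmon : ((X - C a) ^ n * (X - C b) ^ n : ℝ[X]).Monic :=
    ((monic_X_sub_C a).pow n).mul ((monic_X_sub_C b).pow n)
  have hdeg : ((X - C a) ^ n * (X - C b) ^ n : ℝ[X]).natDegree = n + n := by
    rw [((monic_X_sub_C a).pow n).natDegree_mul ((monic_X_sub_C b).pow n)]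
    simp [natDegree_pow, natDegree_X_sub_C]
  have hcoeff : ((X - C a) ^ n * (X - C b) ^ n : ℝ[X]).coeff (n + n) = 1 := by
    rw [← hdeg]; exact hmon.coeff_natDegree
  rw [rod, Polynomial.coeff_iterate_derivative, hcoeff]
  have hpos : (n + n).descFactorial n ≠ 0 := by
    rw [Ne, Nat.descFactorial_eq_zero_iff_lt]
    omega
  simp only [nsmul_eq_mul, smul_eq_mul, mul_one]
  exact_mod_cast hpos

lemma scalar_bound (hab : a < b) (r : ℕ) (u : ℝ[X]) (hdeg : u.natDegree ≤ r + 1)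
    (hub : u.eval b = 0) (horth : ∀ k, k < r → (∫ t in a..b, u.eval t * t ^ k) = 0) :
    ∀ t ∈ Icc a b, |u.eval t| ≤ |u.eval a| := by
  set p1 : ℝ[X] := rod a b (r + 1) with hp1
  set p0 : ℝ[X] := rod a b r with hp0
  have hp1d : p1.natDegree ≤ r + 1 := natDegree_rod_le _
  have hp0d : p0.natDegree ≤ r := natDegree_rod_le _
  set c1 : ℝ := u.coeff (r + 1) / p1.coeff (r + 1) with hc1def
  set h1 : ℝ[X] := u - C c1 * p1 with hh1
  have hc1 : h1.coeff (r + 1) = 0 := by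
    rw [hh1, coeff_sub, coeff_C_mul, hc1def,
      div_mul_cancel₀ _ (rod_coeff_ne (r + 1)), sub_self]
  have hh1d : h1.natDegree ≤ r + 1 :=
    (natDegree_sub_le _ _).trans (max_le hdeg ((natDegree_C_mul_le _ _).trans hp1d))
  set c0 : ℝ := h1.coeff r / p0.coeff r with hc0def
  set v : ℝ[X] := h1 - C c0 * p0 with hv
  have hvc : ∀ N, r ≤ N → v.coeff N = 0 := by
    intro N hN
    rcases eq_or_lt_of_le hN with rfl | hlt
    · rw [hv, coeff_sub, coeff_C_mul, hc0def, div_mul_cancel₀ _ (rod_coeff_ne r), sub_self]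
    · rcases eq_or_lt_of_le (Nat.succ_le_of_lt hlt) with hrN | hlt2
      · rw [hv, coeff_sub, coeff_C_mul, ← hrN, hc1,
          coeff_eq_zero_of_natDegree_lt (lt_of_le_of_lt hp0d (by omega))]
        ring
      · rw [hv, coeff_sub, coeff_C_mul,
          coeff_eq_zero_of_natDegree_lt (lt_of_le_of_lt hh1d (by omega)),
          coeff_eq_zero_of_natDegree_lt (lt_of_le_of_lt hp0d (by omega))]
        ring
  have hvdeg : v.degree < (r : ℕ) := (degree_lt_iff_coeff_zero v r).mpr hvc
  have hvu : (∫ t in a..b, u.eval t * v.eval t) = 0 := by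
    by_cases hv0 : v = 0
    · simp [hv0]
    · have hnd : v.natDegree < r := (natDegree_lt_iff_degree_lt hv0).mpr hvdeg
      have hrepr : ∀ t : ℝ, v.eval t = ∑ k ∈ Finset.range r, v.coeff k * t ^ k :=
        fun t => eval_eq_sum_range' hnd t
      have step1 : (∫ t in a..b, u.eval t * v.eval t)
          = ∫ t in a..b, ∑ k ∈ Finset.range r, v.coeff k * (u.eval t * t ^ k) := by
        congr 1
        funext t
        rw [hrepr t, Finset.mul_sum]
        exact Finset.sum_congr rfl fun k _ => by ring
      rw [step1, intervalIntegral.integral_finset_sum]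
      · refine Finset.sum_eq_zero fun k hk => ?_
        rw [intervalIntegral.integral_const_mul, horth k (Finset.mem_range.mp hk), mul_zero]
      · intro k _
        exact (continuous_const.mul (u.continuous.mul (continuous_pow k))).intervalIntegrable _ _
  have hvp1 : (∫ t in a..b, v.eval t * p1.eval t) = 0 := by
    rw [hp1]
    refine orth (r + 1) v (lt_of_lt_of_le hvdeg ?_)
    exact_mod_cast Nat.cast_le.mpr (Nat.le_succ r)
  have hvp0 : (∫ t in a..b, v.eval t * p0.eval t) = 0 := by
    rw [hp0]; exact orth r v hvdeg
  have he : ∀ t : ℝ, u.eval t = v.eval t + c1 * p1.eval t + c0 * p0.eval t := by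
    intro t
    have : u = v + C c1 * p1 + C c0 * p0 := by rw [hv, hh1]; ring
    rw [this]; simp
  have i1 : IntervalIntegrable (fun t => u.eval t * v.eval t) volume a b :=
    (u.continuous.mul v.continuous).intervalIntegrable _ _
  have i2 : IntervalIntegrable (fun t => c1 * (v.eval t * p1.eval t)) volume a b :=
    (continuous_const.mul (v.continuous.mul p1.continuous)).intervalIntegrable _ _
  have i3 : IntervalIntegrable (fun t => c0 * (v.eval t * p0.eval t)) volume a b :=
    (continuous_const.mul (v.continuous.mul p0.continuous)).intervalIntegrable _ _
  have hvv : (∫ t in a..b, v.eval t * v.eval t) = 0 := by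
    have hfun : (fun t => v.eval t * v.eval t)
        = fun t => u.eval t * v.eval t - c1 * (v.eval t * p1.eval t)
            - c0 * (v.eval t * p0.eval t) := by
      funext t
      rw [he t]; ring
    rw [hfun, intervalIntegral.integral_sub (i1.sub i2) i3, intervalIntegral.integral_sub i1 i2,
      intervalIntegral.integral_const_mul, intervalIntegral.integral_const_mul,
      hvu, hvp1, hvp0]
    ring
  have hv0 : v = 0 := poly_zero_of_integral_sq_zero hab v hvv
  have he' : ∀ t : ℝ, u.eval t = c1 * p1.eval t + c0 * p0.eval t := by
    intro t
    rw [he t, hv0]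
    simp
  set F1 : ℝ := (((r + 1).factorial : ℕ) : ℝ) * (b - a) ^ (r + 1) with hF1def
  set F0 : ℝ := ((r.factorial : ℕ) : ℝ) * (b - a) ^ r with hF0def
  have hF1 : 0 < F1 := by
    rw [hF1def]
    exact mul_pos (by exact_mod_cast Nat.factorial_pos _) (pow_pos (by linarith) _)
  have hF0 : 0 < F0 := by
    rw [hF0def]
    exact mul_pos (by exact_mod_cast Nat.factorial_pos _) (pow_pos (by linarith) _)
  have hb0 : c1 * F1 + c0 * F0 = 0 := by
    have := hub
    rw [he' b, hp1, hp0, rod_eval_b, rod_eval_b] at this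
    rw [hF1def, hF0def]
    exact this
  have habk : ∀ k : ℕ, (a - b) ^ k = (-1 : ℝ) ^ k * (b - a) ^ k := by
    intro k
    rw [show a - b = -(b - a) by ring, neg_pow]
  have hua2 : u.eval a = (-1 : ℝ) ^ r * (2 * (c0 * F0)) := by
    rw [he' a, hp1, hp0, rod_eval_a, rod_eval_a, habk, habk, hF0def]
    have hs : (-1 : ℝ) ^ (r + 1) = -(-1 : ℝ) ^ r := by rw [pow_succ]; ring
    rw [hs]
    have hb0' : c1 * F1 = -(c0 * F0) := by linarith
    rw [hF1def, hF0def] at hb0'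
    linear_combination (-(-1 : ℝ) ^ r) * hb0'
  clear_value F1 F0
  have hcc : |c1| * F1 = |c0| * F0 := by
    have hb0' : c1 * F1 = -(c0 * F0) := by linarith
    have := congrArg abs hb0'
    rw [abs_mul, abs_neg, abs_mul, abs_of_pos hF1, abs_of_pos hF0] at this
    exact this
  have habs : |u.eval a| = 2 * (|c0| * F0) := by
    rw [hua2, abs_mul, abs_pow, abs_neg, abs_one, one_pow, one_mul, abs_mul, abs_mul,
      abs_of_pos hF0]
    norm_num
  intro t ht
  rw [he' t]
  calc |c1 * p1.eval t + c0 * p0.eval t|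
      ≤ |c1 * p1.eval t| + |c0 * p0.eval t| := abs_add_le _ _
    _ = |c1| * |p1.eval t| + |c0| * |p0.eval t| := by rw [abs_mul, abs_mul]
    _ ≤ |c1| * F1 + |c0| * F0 := by
        refine add_le_add ?_ ?_
        · exact mul_le_mul_of_nonneg_left
            (by rw [hF1def]; exact rod_abs_le hab (r + 1) t ht) (abs_nonneg _)
        · exact mul_le_mul_of_nonneg_left
            (by rw [hF0def]; exact rod_abs_le hab r t ht) (abs_nonneg _)
    _ = 2 * (|c0| * F0) := by rw [hcc]; ring
    _ = |u.eval a| := habs.symm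


end LiftAux

open LiftAux Polynomial

/-- Lemma 3.1 (equation (auxSLC)): the sup over `[a,b]` of
`‖z − ∫_a^t L(τ) dτ‖`, where `L` is the lifting of `z`, equals `‖z‖`. -/
theorem lifting_sup_identity
    {X : Type*} [NormedAddCommGroup X] [InnerProductSpace ℝ X] [CompleteSpace X]
    (a b : ℝ) (hab : a < b) (r : ℕ) (z : X)
    (L : ℝ → X) (hL : IsXPoly r L)
    (hLdef : ∀ V : ℝ → X, IsXPoly r V →
      (∫ t in a..b, ⟪L t, V t⟫) = ⟪z, V a⟫) :
    (⨆ t : Set.Icc a b, ‖z - ∫ τ in a..(t : ℝ), L τ‖) = ‖z‖ := by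
  obtain ⟨x, hx⟩ := hL
  have hLc : Continuous L := by
    have : L = fun t => ∑ i ∈ Finset.range (r + 1), t ^ i • x i := funext hx
    rw [this]
    exact continuous_finset_sum _ fun i _ => (continuous_pow i).smul continuous_const
  have hLi : ∀ s t : ℝ, IntervalIntegrable L volume s t :=
    fun s t => hLc.intervalIntegrable _ _
  have swap : ∀ (s : ℝ) (c : X), ⟪∫ τ in a..s, L τ, c⟫ = ∫ τ in a..s, ⟪L τ, c⟫ := by
    intro s c
    calc ⟪∫ τ in a..s, L τ, c⟫ = (innerSL ℝ c) (∫ τ in a..s, L τ) := by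
          rw [innerSL_apply_apply, real_inner_comm]
      _ = ∫ τ in a..s, (innerSL ℝ c) (L τ) :=
          ((innerSL ℝ c).intervalIntegral_comp_comm (hLi a s)).symm
      _ = ∫ τ in a..s, ⟪L τ, c⟫ := by
          simp only [innerSL_apply_apply]
          refine intervalIntegral.integral_congr fun τ _ => real_inner_comm _ _
  have hz : (∫ τ in a..b, L τ) = z := by
    have h0 : ∀ c : X, ⟪(∫ τ in a..b, L τ) - z, c⟫ = 0 := by
      intro c
      have hVc : IsXPoly r (fun _ : ℝ => c) := by
        refine ⟨fun i => if i = 0 then c else 0, fun t => ?_⟩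
        rw [Finset.sum_eq_single 0]
        · simp
        · intro i _ hi; simp [hi]
        · intro h; simp at h
      have hd := hLdef _ hVc
      rw [← swap b c] at hd
      rw [inner_sub_left, hd, sub_self]
    have := h0 ((∫ τ in a..b, L τ) - z)
    rw [inner_self_eq_zero] at this
    exact sub_eq_zero.mp this
  have hW : ∀ t ∈ Set.Icc a b, ‖z - ∫ τ in a..t, L τ‖ ≤ ‖z‖ := by
    intro t ht
    have key : ∀ c : X, |⟪z - ∫ τ in a..t, L τ, c⟫| ≤ |⟪z, c⟫| := by
      intro c
      set ℓ : ℝ[X] := ∑ i ∈ Finset.range (r + 1), C ⟪x i, c⟫ * Polynomial.X ^ i with hldef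
      have hl : ∀ s : ℝ, ℓ.eval s = ⟪L s, c⟫ := by
        intro s
        rw [hx s, hldef, sum_inner]
        rw [eval_finset_sum]
        refine Finset.sum_congr rfl fun i _ => ?_
        rw [real_inner_smul_left, eval_mul, eval_C, eval_pow, eval_X]
        ring
      set A : ℝ[X] := ∑ i ∈ Finset.range (r + 1), C (⟪x i, c⟫ / ((i : ℝ) + 1)) * Polynomial.X ^ (i + 1)
        with hAdef
      have hA : derivative A = ℓ := by
        rw [hAdef, hldef, derivative_sum]
        refine Finset.sum_congr rfl fun i _ => ?_
        rw [derivative_C_mul, derivative_X_pow, Nat.add_sub_cancel, ← mul_assoc, ← C_mul]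
        have hcast : ((i + 1 : ℕ) : ℝ) = (i : ℝ) + 1 := by push_cast; ring
        rw [hcast, div_mul_cancel₀ _ (by positivity : (i : ℝ) + 1 ≠ 0)]
      have hFTC : ∀ s : ℝ, (∫ τ in a..s, ℓ.eval τ) = A.eval s - A.eval a := by
        intro s
        have hder : ∀ τ ∈ Set.uIcc a s, HasDerivAt (fun y => A.eval y) (ℓ.eval τ) τ :=
          fun τ _ => by simpa [hA] using A.hasDerivAt τ
        exact intervalIntegral.integral_eq_sub_of_hasDerivAt hder
          ((ℓ.continuous).intervalIntegrable _ _)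
      set u : ℝ[X] := C (⟪z, c⟫ + A.eval a) - A with hudef
      have hueval : ∀ s : ℝ, u.eval s = ⟪z - ∫ τ in a..s, L τ, c⟫ := by
        intro s
        rw [inner_sub_left, swap s c]
        have hcong : (∫ τ in a..s, ⟪L τ, c⟫) = ∫ τ in a..s, ℓ.eval τ :=
          intervalIntegral.integral_congr fun τ _ => (hl τ).symm
        rw [hcong, hFTC s, hudef]
        simp only [eval_sub, eval_C]
        ring
      have hub : u.eval b = 0 := by
        rw [hueval b, hz]
        simp
      have hua : u.eval a = ⟪z, c⟫ := by
        rw [hueval a, intervalIntegral.integral_same, sub_zero]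
      have hdeg : u.natDegree ≤ r + 1 := by
        refine (natDegree_sub_le _ _).trans (max_le ?_ ?_)
        · simp [natDegree_C]
        · rw [hAdef]
          refine Polynomial.natDegree_sum_le_of_forall_le _ _ fun i hi => ?_
          refine (natDegree_C_mul_le _ _).trans ?_
          rw [natDegree_X_pow]
          have := Finset.mem_range.mp hi
          omega
      have horth : ∀ k, k < r → (∫ s in a..b, u.eval s * s ^ k) = 0 := by
        intro k hk
        set Q : ℝ[X] := C (1 / ((k : ℝ) + 1)) * Polynomial.X ^ (k + 1) with hQdef
        have hQ' : derivative Q = Polynomial.X ^ k := by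
          rw [hQdef, derivative_C_mul, derivative_X_pow, Nat.add_sub_cancel, ← mul_assoc,
            ← C_mul]
          have hcast : ((k + 1 : ℕ) : ℝ) = (k : ℝ) + 1 := by push_cast; ring
          rw [hcast, one_div, inv_mul_cancel₀ (by positivity : (k : ℝ) + 1 ≠ 0)]
          simp
        have hQd : Q.natDegree ≤ r := by
          refine (natDegree_C_mul_le _ _).trans ?_
          rw [natDegree_X_pow]
          omega
        have hVp : IsXPoly r (fun s => Q.eval s • c) := by
          refine ⟨fun i => Q.coeff i • c, fun s => ?_⟩
          show Q.eval s • c = _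
          rw [eval_eq_sum_range' (lt_of_le_of_lt hQd (Nat.lt_succ_self r)), Finset.sum_smul]
          refine Finset.sum_congr rfl fun i _ => ?_
          simp [smul_smul, mul_comm]
        have hdef2 := hLdef _ hVp
        simp_rw [real_inner_smul_right] at hdef2
        -- hdef2 : ∫ s in a..b, Q.eval s * ⟪L s, c⟫ = Q.eval a * ⟪z, c⟫
        have hIBP := poly_ibp u Q a b
        rw [hQ'] at hIBP
        have hu' : derivative u = -ℓ := by
          rw [hudef]
          simp [hA]
        have h5 : (∫ s in a..b, u.eval s * (Polynomial.X ^ k : ℝ[X]).eval s)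
            = ∫ s in a..b, u.eval s * s ^ k :=
          intervalIntegral.integral_congr fun s _ => by simp
        rw [hub, hua, hu'] at hIBP
        rw [← h5, hIBP]
        have h6 : (∫ s in a..b, ((-ℓ : ℝ[X])).eval s * Q.eval s)
            = -∫ s in a..b, Q.eval s * ℓ.eval s := by
          rw [← intervalIntegral.integral_neg]
          refine intervalIntegral.integral_congr fun s _ => by simp [mul_comm]
        rw [h6]
        have h7 : (∫ s in a..b, Q.eval s * ℓ.eval s) = Q.eval a * ⟪z, c⟫ := by
          rw [← hdef2]
          refine intervalIntegral.integral_congr fun s _ => by rw [hl s]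
        rw [h7]
        ring
      have hsb := scalar_bound hab r u hdeg hub horth t ht
      rw [hueval t, hua] at hsb
      exact hsb
    set w : X := z - ∫ τ in a..t, L τ with hw
    have h1 := key w
    have h2 : ⟪w, w⟫ = ‖w‖ ^ 2 := real_inner_self_eq_norm_sq w
    have h3 : |⟪z, w⟫| ≤ ‖z‖ * ‖w‖ := abs_real_inner_le_norm z w
    have h4 : ‖w‖ ^ 2 ≤ ‖z‖ * ‖w‖ := by
      calc ‖w‖ ^ 2 = ⟪w, w⟫ := h2.symm
        _ ≤ |⟪w, w⟫| := le_abs_self _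
        _ ≤ |⟪z, w⟫| := h1
        _ ≤ ‖z‖ * ‖w‖ := h3
    nlinarith [norm_nonneg w, norm_nonneg z]
  have hinst : Nonempty (Set.Icc a b) := ⟨⟨a, Set.left_mem_Icc.mpr hab.le⟩⟩
  have hbdd : BddAbove (Set.range fun t : Set.Icc a b => ‖z - ∫ τ in a..(t : ℝ), L τ‖) := by
    refine ⟨‖z‖, ?_⟩
    rintro y ⟨t, rfl⟩
    exact hW t t.2
  refine le_antisymm (ciSup_le fun t => hW t t.2) ?_
  have := le_ciSup hbdd (⟨a, Set.left_mem_Icc.mpr hab.le⟩ : Set.Icc a b)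
  simpa using this
end

section
/- Let X be a real Hilbert space, let a < b be real numbers, and let r ∈ ℕ. Let U be an X-valued polynomial of degree at most r, and let L be an X-valued polynomial of degree at most r satisfying ∫_a^b ⟨L(t), V(t)⟩ dt = ⟨U(a), V(a)⟩ for every X-valued polynomial V of degree at most r. Then ‖U(a)‖ ≤ ∫_a^b ‖U'(t) + L(t)‖ dt. -/
open MeasureTheory Set
open scoped RealInnerProductSpace

open Polynomial intervalIntegral

lemma vanish (a b : ℝ) (r : ℕ) (j : ℕ) (hj : j ≤ r) :
    ∃ u : ℝ[X], derivative^[j] (((X - C a) * (X - C b)) ^ r)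
      = ((X - C a) * (X - C b)) ^ (r - j) * u := by
  induction j with
  | zero => exact ⟨1, by simp⟩
  | succ k ih =>
    obtain ⟨u, hu⟩ := ih (le_of_lt (Nat.lt_of_succ_le hj))
    obtain ⟨m, hm⟩ : ∃ m, r - k = m + 1 := ⟨r - (k+1), by omega⟩
    have hm2 : r - (k + 1) = m := by omega
    refine ⟨(m + 1 : ℕ) • ((X - C b) * u + (X - C a) * u)
      + (X - C a) * (X - C b) * derivative u, ?_⟩
    rw [Function.iterate_succ_apply', hu, hm, hm2, derivative_mul, derivative_pow]
    simp only [derivative_mul, derivative_X_sub_C, one_mul, mul_one, nsmul_eq_mul,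
      Nat.cast_add, Nat.cast_one, Nat.add_sub_cancel, C_add, C_1, C_eq_natCast]
    push_cast
    ring

lemma vanish_eval_a (a b : ℝ) {r j : ℕ} (hj : j < r) :
    (derivative^[j] (((X - C a) * (X - C b)) ^ r)).eval a = 0 := by
  obtain ⟨u, hu⟩ := vanish a b r j hj.le
  rw [hu]
  simp [zero_pow (by omega : r - j ≠ 0)]

lemma vanish_eval_b (a b : ℝ) {r j : ℕ} (hj : j < r) :
    (derivative^[j] (((X - C a) * (X - C b)) ^ r)).eval b = 0 := by
  obtain ⟨u, hu⟩ := vanish a b r j hj.le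
  rw [hu]
  simp [zero_pow (by omega : r - j ≠ 0)]

lemma ibp (a b : ℝ) (r : ℕ) (S : ℝ[X]) (k : ℕ) (hk : k ≤ r) :
    (∫ t in a..b, (derivative^[r] (((X - C a) * (X - C b)) ^ r)).eval t * S.eval t)
      = (-1 : ℝ)^k * ∫ t in a..b,
          (derivative^[r - k] (((X - C a) * (X - C b)) ^ r)).eval t
          * (derivative^[k] S).eval t := by
  induction k with
  | zero => simp
  | succ k ih =>
    rw [ih (by omega)]
    obtain ⟨m, hm⟩ : ∃ m, r - k = m + 1 := ⟨r - (k+1), by omega⟩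
    have hm2 : r - (k + 1) = m := by omega
    rw [hm, hm2]
    have key : (∫ t in a..b, (derivative^[k] S).eval t
          * (derivative^[m+1] (((X - C a) * (X - C b)) ^ r)).eval t)
        = - ∫ t in a..b, (derivative^[k+1] S).eval t
          * (derivative^[m] (((X - C a) * (X - C b)) ^ r)).eval t := by
      have h := integral_mul_deriv_eq_deriv_mul
        (u := fun t => (derivative^[k] S).eval t)
        (v := fun t => (derivative^[m] (((X - C a) * (X - C b)) ^ r)).eval t)
        (u' := fun t => (derivative^[k+1] S).eval t)
        (v' := fun t => (derivative^[m+1] (((X - C a) * (X - C b)) ^ r)).eval t)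
        (a := a) (b := b)
        (fun x _ => by
          rw [Function.iterate_succ_apply']
          exact Polynomial.hasDerivAt _ x)
        (fun x _ => by
          rw [Function.iterate_succ_apply']
          exact Polynomial.hasDerivAt _ x)
        ((Polynomial.continuous _).intervalIntegrable _ _)
        ((Polynomial.continuous _).intervalIntegrable _ _)
      rw [h]
      have hmr : m < r := by omega
      simp only [vanish_eval_a a b hmr, vanish_eval_b a b hmr]
      ring
    calc (-1:ℝ)^k * ∫ t in a..b,
          (derivative^[m+1] (((X - C a) * (X - C b)) ^ r)).eval t * (derivative^[k] S).eval t
        = (-1:ℝ)^k * ∫ t in a..b, (derivative^[k] S).eval t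
            * (derivative^[m+1] (((X - C a) * (X - C b)) ^ r)).eval t := by
          congr 1; apply intervalIntegral.integral_congr; intro x _; ring
      _ = (-1:ℝ)^(k+1) * ∫ t in a..b,
            (derivative^[k+1] S).eval t * (derivative^[m] (((X - C a) * (X - C b)) ^ r)).eval t := by
          rw [key]; ring
      _ = (-1:ℝ)^(k+1) * ∫ t in a..b,
            (derivative^[m] (((X - C a) * (X - C b)) ^ r)).eval t * (derivative^[k+1] S).eval t := by
          congr 1; apply intervalIntegral.integral_congr; intro x _; ring

lemma ortho (a b : ℝ) (r : ℕ) (S : ℝ[X]) (hS : derivative^[r] S = 0) :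
    (∫ t in a..b, (derivative^[r] (((X - C a) * (X - C b)) ^ r)).eval t * S.eval t) = 0 := by
  rw [ibp a b r S r le_rfl, hS]
  simp

lemma legP_eval_a_raw (a b : ℝ) (r : ℕ) :
    (derivative^[r] (((X - C a) * (X - C b)) ^ r)).eval a
      = (r.factorial : ℝ) * (a - b)^r := by
  rw [mul_pow, Polynomial.iterate_derivative_mul]
  rw [Polynomial.eval_finset_sum]
  rw [Finset.sum_eq_single 0]
  · simp [Polynomial.iterate_derivative_X_sub_pow_self]
  · intro k hk hk0
    rw [Polynomial.iterate_derivative_X_sub_pow]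
    have : r - (r - k) = k := by
      simp at hk; omega
    rw [this]
    simp [zero_pow hk0]
  · simp

lemma legP_eval_b (a b : ℝ) (r : ℕ) :
    (derivative^[r] (((X - C a) * (X - C b)) ^ r)).eval b
      = (-1:ℝ)^r * (derivative^[r] (((X - C a) * (X - C b)) ^ r)).eval a := by
  set σ : ℝ[X] := C (a + b) - X with hσ
  have hσd : derivative σ = -1 := by simp [hσ]
  have hQ : (((X - C a) * (X - C b)) ^ r).comp σ = ((X - C a) * (X - C b)) ^ r := by
    simp only [pow_comp, mul_comp, sub_comp, X_comp, C_comp, hσ, C_add]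
    congr 1
    ring
  have key : ∀ k : ℕ, (derivative^[k] (((X - C a) * (X - C b)) ^ r)).comp σ
      = (-1:ℝ[X])^k * derivative^[k] (((X - C a) * (X - C b)) ^ r) := by
    intro k
    induction k with
    | zero => simpa using hQ
    | succ k ih =>
      rw [Function.iterate_succ_apply']
      have := congrArg derivative ih
      rw [Polynomial.derivative_comp, hσd] at this
      have h2 : (derivative (derivative^[k] (((X - C a) * (X - C b)) ^ r))).comp σ
          = - derivative ((-1:ℝ[X])^k * derivative^[k] (((X - C a) * (X - C b)) ^ r)) := by
        rw [← this]; ring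
      have hC : derivative ((-1:ℝ[X])^k) = 0 := by
        rw [← C_1, ← C_neg, ← C_pow, derivative_C]
      rw [h2, derivative_mul, hC]
      ring
  have := congrArg (Polynomial.eval a) (key r)
  rw [Polynomial.eval_comp] at this
  simp [hσ] at this
  exact this

lemma two_mul_choose (s : ℕ) : 2 * (s + 2).choose s = (s + 2) * (s + 1) := by
  have h1 : (s + 2).choose s = (s + 2).choose 2 := by
    have := Nat.choose_symm (show 2 ≤ s + 2 by omega)
    simpa using this
  rw [h1, Nat.choose_two_right, show s + 2 - 1 = s + 1 by omega]
  have h2 : 2 ∣ (s + 2) * (s + 1) := by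
    rw [mul_comm]
    exact (Nat.even_mul_succ_self (s + 1)).two_dvd
  exact Nat.mul_div_cancel' h2

lemma legP_ode (a b : ℝ) (r : ℕ) :
    (X - C a) * (X - C b) * derivative^[r + 2] (((X - C a) * (X - C b)) ^ r)
      + ((X - C a) + (X - C b)) * derivative^[r + 1] (((X - C a) * (X - C b)) ^ r)
      = C ((r * (r + 1) : ℕ) : ℝ) * derivative^[r] (((X - C a) * (X - C b)) ^ r) := by
  rcases r with _ | s
  · simp
  set W : ℝ[X] := (X - C a) * (X - C b) with hW
  set W1 : ℝ[X] := (X - C a) + (X - C b) with hW1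
  set Q : ℝ[X] := W ^ (s + 1) with hQ
  have hWd : derivative W = W1 := by
    show derivative ((X - C a) * (X - C b)) = _
    simp only [derivative_mul, derivative_X_sub_C, hW1]; ring
  have hW1d : derivative W1 = 2 := by
    show derivative ((X - C a) + (X - C b)) = 2
    simp only [derivative_add, derivative_X_sub_C]; norm_num
  have hW2 : derivative^[2] W = 2 := by
    rw [show (2:ℕ) = 1 + 1 from rfl, Function.iterate_add_apply]
    simp [hWd, hW1d]
  have hWdeg : W.natDegree ≤ 2 := by
    calc W.natDegree ≤ (X - C a).natDegree + (X - C b).natDegree := natDegree_mul_le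
    _ ≤ 2 := by rw [natDegree_X_sub_C, natDegree_X_sub_C]
  have hW1deg : W1.natDegree ≤ 1 := by
    calc W1.natDegree ≤ max (X - C a).natDegree (X - C b).natDegree := natDegree_add_le _ _
    _ ≤ 1 := by rw [natDegree_X_sub_C, natDegree_X_sub_C]; omega
  have hbase : W * derivative Q = C ((s + 1 : ℕ) : ℝ) * (W1 * Q) := by
    rw [hQ, derivative_pow, hWd]
    push_cast
    ring
  have hL := congrArg (fun p => derivative^[s + 2] p) hbase
  simp only [iterate_derivative_C_mul] at hL
  rw [Polynomial.iterate_derivative_mul, Polynomial.iterate_derivative_mul] at hL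
  rw [Finset.sum_range_succ, Finset.sum_range_succ, Finset.sum_range_succ] at hL
  rw [Finset.sum_range_succ, Finset.sum_range_succ] at hL
  have hzW : ∀ k ∈ Finset.range s, (s + 2).choose k
      • (derivative^[s + 2 - k] W * derivative^[k] (derivative Q)) = 0 := by
    intro k hk
    rw [Finset.mem_range] at hk
    rw [iterate_derivative_eq_zero (by omega : W.natDegree < s + 2 - k)]
    simp
  have hzW1 : ∀ k ∈ Finset.range (s + 1), (s + 2).choose k
      • (derivative^[s + 2 - k] W1 * derivative^[k] Q) = 0 := by
    intro k hk
    rw [Finset.mem_range] at hk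
    rw [iterate_derivative_eq_zero (by omega : W1.natDegree < s + 2 - k)]
    simp
  rw [Finset.sum_eq_zero hzW, Finset.sum_eq_zero hzW1] at hL
  simp only [Nat.add_sub_cancel, Nat.sub_self, Function.iterate_zero_apply,
    Nat.choose_self, Nat.choose_succ_self_right, one_smul,
    show s + 2 - (s + 1) = 1 by omega, show s + 2 - s = 2 by omega,
    Function.iterate_one, hWd, hW1d, hW2] at hL
  simp only [← Function.iterate_succ_apply derivative] at hL
  simp only [Nat.succ_eq_add_one] at hL
  rw [show s + 1 + 1 = s + 2 by omega, show s + 2 + 1 = s + 3 by omega] at hL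
  rw [show s + 1 + 2 = s + 3 by omega, show s + 1 + 1 = s + 2 by omega]
  have hch : ((Nat.choose (s + 2) s : ℕ) : ℝ[X]) * 2
      = ((s + 2 : ℕ) : ℝ[X]) * ((s + 1 : ℕ) : ℝ[X]) := by
    have h := two_mul_choose s
    push_cast
    exact_mod_cast congrArg (fun n : ℕ => ((n : ℕ) : ℝ[X])) (by omega : (s+2).choose s * 2 = (s+2)*(s+1))
  simp only [nsmul_eq_mul, C_eq_natCast, C_add, C_1] at hL ⊢
  push_cast at hL hch ⊢
  linear_combination hL - derivative^[s + 1] Q * hch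

lemma legP_bound_raw (a b : ℝ) (hab : a ≤ b) (r : ℕ) :
    ∀ t ∈ Set.Icc a b, |(derivative^[r] (((X - C a) * (X - C b)) ^ r)).eval t|
      ≤ |(derivative^[r] (((X - C a) * (X - C b)) ^ r)).eval a| := by
  rcases Nat.eq_zero_or_pos r with rfl | hr
  · intro t _; simp
  set P : ℝ[X] := derivative^[r] (((X - C a) * (X - C b)) ^ r) with hP
  set P1 : ℝ[X] := derivative P with hP1
  set P2 : ℝ[X] := derivative P1 with hP2
  have hP1' : P1 = derivative^[r + 1] (((X - C a) * (X - C b)) ^ r) := by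
    rw [hP1, hP, ← Function.iterate_succ_apply' derivative]
  have hP2' : P2 = derivative^[r + 2] (((X - C a) * (X - C b)) ^ r) := by
    rw [hP2, hP1', ← Function.iterate_succ_apply' derivative]
  set lam : ℝ := ((r * (r + 1) : ℕ) : ℝ) with hlam
  have hlampos : 0 < lam := by
    rw [hlam]; exact_mod_cast Nat.mul_pos hr (by omega)
  have hode : ∀ t : ℝ, (t - a) * (t - b) * P2.eval t + ((t - a) + (t - b)) * P1.eval t
      = lam * P.eval t := by
    intro t
    have := congrArg (Polynomial.eval t) (legP_ode a b r)
    simp only [eval_add, eval_mul, eval_sub, eval_X, eval_C, ← hP, ← hP1', ← hP2'] at this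
    linarith [this]
  set g : ℝ → ℝ := fun t => (P.eval t)^2 - (t - a) * (t - b) * (P1.eval t)^2 / lam with hg
  have hgd : ∀ t : ℝ, HasDerivAt g (((t - a) + (t - b)) * (P1.eval t)^2 / lam) t := by
    intro t
    have h1 : HasDerivAt (fun t : ℝ => (P.eval t)^2) (2 * P.eval t * P1.eval t) t := by
      simpa using (Polynomial.hasDerivAt P t).fun_pow 2
    have h2 : HasDerivAt (fun t : ℝ => (t - a) * (t - b))
        (1 * (t - b) + (t - a) * 1) t :=
      ((hasDerivAt_id t).sub_const a).mul ((hasDerivAt_id t).sub_const b)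
    have h3 : HasDerivAt (fun t : ℝ => (P1.eval t)^2) (2 * P1.eval t * P2.eval t) t := by
      simpa using (Polynomial.hasDerivAt P1 t).fun_pow 2
    have h4 := ((h2.mul h3).div_const lam)
    have h5 := h1.sub h4
    refine h5.congr_deriv ?_
    have := hode t
    rw [sub_eq_iff_eq_add, ← add_div, eq_div_iff hlampos.ne']
    linear_combination (-2 * Polynomial.eval t P1) * this
  have hgdiff : Differentiable ℝ g := fun t => (hgd t).differentiableAt
  have hderiv : ∀ t : ℝ, deriv g t = ((t - a) + (t - b)) * (P1.eval t)^2 / lam :=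
    fun t => (hgd t).deriv
  set m : ℝ := (a + b) / 2 with hm
  have ham : a ≤ m := by rw [hm]; linarith
  have hmb : m ≤ b := by rw [hm]; linarith
  have hanti : AntitoneOn g (Set.Icc a m) := by
    apply antitoneOn_of_deriv_nonpos (convex_Icc a m) hgdiff.continuous.continuousOn
      (hgdiff.differentiableOn)
    intro x hx
    rw [interior_Icc] at hx
    rw [hderiv]
    apply div_nonpos_of_nonpos_of_nonneg _ hlampos.le
    have : x - a + (x - b) ≤ 0 := by
      have := hx.2; rw [hm] at this; linarith
    nlinarith [sq_nonneg (P1.eval x)]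
  have hmono : MonotoneOn g (Set.Icc m b) := by
    apply monotoneOn_of_deriv_nonneg (convex_Icc m b) hgdiff.continuous.continuousOn
      (hgdiff.differentiableOn)
    intro x hx
    rw [interior_Icc] at hx
    rw [hderiv]
    apply div_nonneg _ hlampos.le
    have : 0 ≤ x - a + (x - b) := by
      have := hx.1; rw [hm] at this; linarith
    nlinarith [sq_nonneg (P1.eval x)]
  have hga : g a = (P.eval a)^2 := by rw [hg]; simp
  have hgb : g b = (P.eval a)^2 := by
    have h0 : g b = (P.eval b)^2 := by rw [hg]; simp
    have hb := legP_eval_b a b r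
    rw [← hP] at hb
    rw [h0, hb, mul_pow, ← pow_mul, mul_comm r 2, pow_mul]
    norm_num
  intro t ht
  have hyt : (P.eval t)^2 ≤ g t := by
    rw [hg]
    have h1 : (t - a) * (t - b) ≤ 0 :=
      mul_nonpos_of_nonneg_of_nonpos (by linarith [ht.1]) (by linarith [ht.2])
    have : (t - a) * (t - b) * (P1.eval t)^2 / lam ≤ 0 := by
      apply div_nonpos_of_nonpos_of_nonneg _ hlampos.le
      nlinarith [sq_nonneg (P1.eval t)]
    linarith
  have hgt : g t ≤ (P.eval a)^2 := by
    rcases le_total t m with h | h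
    · have := hanti (Set.mem_Icc.mpr ⟨le_refl a, ham⟩) (Set.mem_Icc.mpr ⟨ht.1, h⟩) ht.1
      rw [hga] at this; exact this
    · have := hmono (Set.mem_Icc.mpr ⟨h, ht.2⟩) (Set.mem_Icc.mpr ⟨hmb, le_refl b⟩) ht.2
      rw [hgb] at this; exact this
  nlinarith [abs_nonneg (P.eval a), abs_nonneg (P.eval t), sq_abs (P.eval t), sq_abs (P.eval a)]

noncomputable def legP (a b : ℝ) (r : ℕ) : ℝ[X] :=
  Polynomial.derivative^[r] (((Polynomial.X - C a) * (Polynomial.X - C b)) ^ r)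

lemma legP_ortho (a b : ℝ) (r : ℕ) (S : ℝ[X]) (hS : Polynomial.derivative^[r] S = 0) :
    (∫ t in a..b, (legP a b r).eval t * S.eval t) = 0 :=
  ortho a b r S hS

lemma legP_eval_a (a b : ℝ) (r : ℕ) :
    (legP a b r).eval a = (r.factorial : ℝ) * (a - b)^r :=
  legP_eval_a_raw a b r

lemma legP_bound (a b : ℝ) (hab : a ≤ b) (r : ℕ) :
    ∀ t ∈ Set.Icc a b, |(legP a b r).eval t| ≤ |(legP a b r).eval a| :=
  legP_bound_raw a b hab r

lemma legP_natDegree_le (a b : ℝ) (r : ℕ) : (legP a b r).natDegree ≤ r := by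
  have h1 := Polynomial.natDegree_iterate_derivative
    (((Polynomial.X - C a) * (Polynomial.X - C b)) ^ r) r
  have h2 : (((Polynomial.X - C a) * (Polynomial.X - C b)) ^ r).natDegree ≤ 2 * r := by
    refine Polynomial.natDegree_pow_le.trans ?_
    have h3 : ((Polynomial.X - C a) * (Polynomial.X - C b)).natDegree ≤ 2 := by
      calc ((Polynomial.X - C a) * (Polynomial.X - C b)).natDegree
          ≤ (Polynomial.X - C a).natDegree + (Polynomial.X - C b).natDegree :=
            Polynomial.natDegree_mul_le
        _ ≤ 2 := by rw [Polynomial.natDegree_X_sub_C, Polynomial.natDegree_X_sub_C]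
    calc r * ((Polynomial.X - C a) * (Polynomial.X - C b)).natDegree
        ≤ r * 2 := Nat.mul_le_mul_left r h3
      _ = 2 * r := by ring
  rw [legP]; omega

/-- Lemma 3.2 (equation (BN)): the initial value of a polynomial is controlled
by the `L¹` norm of its discrete dG time derivative `χ(U) = U' + L`. -/
theorem initial_value_L1_bound
    {X : Type*} [NormedAddCommGroup X] [InnerProductSpace ℝ X] [CompleteSpace X]
    (a b : ℝ) (hab : a < b) (r : ℕ)
    (U L : ℝ → X) (hU : IsXPoly r U) (hL : IsXPoly r L)
    (hLdef : ∀ V : ℝ → X, IsXPoly r V →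
      (∫ t in a..b, ⟪L t, V t⟫) = ⟪U a, V a⟫) :
    ‖U a‖ ≤ ∫ t in a..b, ‖deriv U t + L t‖ := by
  classical
  obtain ⟨c, hc⟩ := hU
  obtain ⟨d, hd⟩ := hL
  set w : X := U a with hw
  set D : ℝ → X := fun t => ∑ i ∈ Finset.range (r + 1), ((i : ℝ) * t ^ (i - 1)) • c i with hD
  have hUd : ∀ t : ℝ, HasDerivAt U (D t) t := by
    intro t
    have h : HasDerivAt (fun t : ℝ => ∑ i ∈ Finset.range (r + 1), t ^ i • c i) (D t) t := by
      apply HasDerivAt.fun_sum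
      intro i _
      exact (hasDerivAt_pow i t).smul_const (c i)
    exact h.congr_of_eventuallyEq (Filter.Eventually.of_forall fun x => (hc x))
  have hderivU : deriv U = D := funext fun t => (hUd t).deriv
  have hDcont : Continuous D := by
    apply continuous_finset_sum
    intro i _
    exact ((continuous_const.mul (continuous_pow (i - 1)))).smul continuous_const
  have hLfun : L = fun t => ∑ i ∈ Finset.range (r + 1), t ^ i • d i := funext hd
  have hLcont : Continuous L := by
    rw [hLfun]
    apply continuous_finset_sum
    intro i _
    exact (continuous_pow i).smul continuous_const
  set q : ℝ[X] := ∑ i ∈ Finset.range (r + 1), C (⟪c i, w⟫) * Polynomial.X ^ i with hq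
  have hqeval : ∀ t : ℝ, q.eval t = ⟪U t, w⟫ := by
    intro t
    rw [hc, hq, sum_inner, Polynomial.eval_finset_sum]
    refine Finset.sum_congr rfl fun i _ => ?_
    rw [real_inner_smul_left]
    simp
    ring
  have hqd : ∀ t : ℝ, (Polynomial.derivative q).eval t = ⟪D t, w⟫ := by
    intro t
    have h1 : HasDerivAt (fun t : ℝ => ⟪U t, w⟫) (⟪U t, (0:X)⟫ + ⟪D t, w⟫) t :=
      HasDerivAt.inner ℝ (hUd t) (hasDerivAt_const t w)
    have h2 : HasDerivAt (fun t : ℝ => q.eval t) ((Polynomial.derivative q).eval t) t :=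
      q.hasDerivAt t
    have h3 : HasDerivAt (fun t : ℝ => ⟪U t, w⟫) ((Polynomial.derivative q).eval t) t :=
      h2.congr_of_eventuallyEq (Filter.Eventually.of_forall fun x => (hqeval x).symm)
    have := h3.unique h1
    simpa using this
  have hqdeg : q.natDegree ≤ r := by
    apply Polynomial.natDegree_sum_le_of_forall_le
    intro i hi
    exact (Polynomial.natDegree_C_mul_X_pow_le _ _).trans (by
      simpa using Nat.lt_succ_iff.mp (Finset.mem_range.mp hi))
  have hqiter : Polynomial.derivative^[r] (Polynomial.derivative q) = 0 := by
    rw [← Function.iterate_succ_apply Polynomial.derivative]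
    exact Polynomial.iterate_derivative_eq_zero (Nat.lt_succ_of_le hqdeg)
  set P : ℝ[X] := legP a b r with hP
  set N : ℝ := P.eval a with hN
  have hNne : N ≠ 0 := by
    rw [hN, hP, legP_eval_a]
    apply mul_ne_zero
    · exact_mod_cast r.factorial_ne_zero
    · exact pow_ne_zero _ (sub_ne_zero.mpr hab.ne)
  have hPdeg : P.natDegree ≤ r := legP_natDegree_le a b r
  set V : ℝ → X := fun t => (P.eval t / N) • w with hV
  have hVpoly : IsXPoly r V := by
    refine ⟨fun i => (P.coeff i / N) • w, fun t => ?_⟩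
    show (P.eval t / N) • w = _
    have h5 : P.eval t = ∑ i ∈ Finset.range (r + 1), P.coeff i * t ^ i :=
      Polynomial.eval_eq_sum_range' (Nat.lt_succ_of_le hPdeg) t
    rw [h5, Finset.sum_div, Finset.sum_smul]
    refine Finset.sum_congr rfl fun i _ => ?_
    rw [smul_smul]
    congr 1
    field_simp
  have hVa : V a = w := by
    show (P.eval a / N) • w = w
    rw [← hN, div_self hNne, one_smul]
  have hI2 : (∫ t in a..b, (P.eval t / N) * (Polynomial.derivative q).eval t) = 0 := by
    have h6 : ∀ t : ℝ, (P.eval t / N) * (Polynomial.derivative q).eval t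
        = (P.eval t * (Polynomial.derivative q).eval t) / N := fun t => by ring
    rw [intervalIntegral.integral_congr (fun t _ => h6 t), intervalIntegral.integral_div,
      hP, legP_ortho a b r (Polynomial.derivative q) hqiter]
    simp
  have hI1 : (∫ t in a..b, ⟪L t, V t⟫) = ‖w‖ ^ 2 := by
    rw [hLdef V hVpoly, hVa]
    exact real_inner_self_eq_norm_sq w
  have hcont1 : Continuous fun t => (P.eval t / N) * (Polynomial.derivative q).eval t :=
    ((P.continuous).div_const N).mul (Polynomial.derivative q).continuous
  have hVcont : Continuous V := ((P.continuous).div_const N).smul continuous_const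
  have hcont2 : Continuous fun t => ⟪L t, V t⟫ := hLcont.inner hVcont
  have hsplit : ∀ t : ℝ, ⟪deriv U t + L t, V t⟫
      = (P.eval t / N) * (Polynomial.derivative q).eval t + ⟪L t, V t⟫ := by
    intro t
    rw [hderivU, inner_add_left]
    congr 1
    show ⟪D t, (P.eval t / N) • w⟫ = _
    rw [real_inner_smul_right, hqd]
  have hmain : (∫ t in a..b, ⟪deriv U t + L t, V t⟫) = ‖w‖ ^ 2 := by
    rw [intervalIntegral.integral_congr (fun t _ => hsplit t),
      intervalIntegral.integral_add (hcont1.intervalIntegrable a b)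
        (hcont2.intervalIntegrable a b), hI2, hI1, zero_add]
  have hchi : Continuous fun t => deriv U t + L t := by
    rw [hderivU]; exact hDcont.add hLcont
  have hptw : ∀ t ∈ Set.Icc a b, ⟪deriv U t + L t, V t⟫ ≤ ‖deriv U t + L t‖ * ‖w‖ := by
    intro t ht
    calc ⟪deriv U t + L t, V t⟫ ≤ ‖deriv U t + L t‖ * ‖V t‖ := real_inner_le_norm _ _
      _ ≤ ‖deriv U t + L t‖ * ‖w‖ := by
        apply mul_le_mul_of_nonneg_left _ (norm_nonneg _)
        show ‖(P.eval t / N) • w‖ ≤ ‖w‖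
        rw [norm_smul]
        have hb1 : |P.eval t| ≤ |N| := by
          rw [hN, hP]; exact legP_bound a b hab.le r t ht
        calc ‖P.eval t / N‖ * ‖w‖ ≤ 1 * ‖w‖ := by
              apply mul_le_mul_of_nonneg_right _ (norm_nonneg w)
              rw [Real.norm_eq_abs, abs_div]
              exact div_le_one_of_le₀ hb1 (abs_nonneg _)
          _ = ‖w‖ := one_mul _
  have hbnd : ‖w‖ ^ 2 ≤ (∫ t in a..b, ‖deriv U t + L t‖) * ‖w‖ := by
    rw [← hmain]
    calc (∫ t in a..b, ⟪deriv U t + L t, V t⟫)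
        ≤ ∫ t in a..b, ‖deriv U t + L t‖ * ‖w‖ := by
          apply intervalIntegral.integral_mono_on hab.le
            ((hchi.inner hVcont).intervalIntegrable a b)
            ((hchi.norm.mul continuous_const).intervalIntegrable a b) hptw
      _ = (∫ t in a..b, ‖deriv U t + L t‖) * ‖w‖ := intervalIntegral.integral_mul_const _ _
  rcases eq_or_ne w 0 with h0 | h0
  · rw [h0, norm_zero]
    exact intervalIntegral.integral_nonneg hab.le (fun u _ => norm_nonneg _)
  · have hpos : 0 < ‖w‖ := norm_pos_iff.mpr h0
    nlinarith [hbnd, hpos]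
end

section
/- Let H be a real Hilbert space, H_m ⊆ H a finite-dimensional subspace, and π : H → H_m the orthogonal projection. Let F : [0,T] × H → H be continuous. Fix a ∈ [0,T), u_prev ∈ H, and κ > 0, θ > 0 with a + θ ≤ T. Let B = {y ∈ H_m : ‖y − π(u_prev)‖ ≤ κ}, K = max_{(t,y) ∈ [a,a+θ] × B} ‖F(t,y)‖, and suppose there is L_B ≥ 0 with ‖F(t,u) − F(t,v)‖ ≤ L_B ‖u − v‖ for all t ∈ [a, a+θ] and all u, v ∈ B. If 0 < k ≤ θ, k·K ≤ κ, and k·L_B < 1, then for every r ∈ ℕ there exists exactly one H_m-valued polynomial U of degree at most r+1 with U(a) = π(u_prev), U(t) ∈ B for all t ∈ [a, a+k], and ∫_a^{a+k} ⟨U'(t), V(t)⟩ dt = ∫_a^{a+k} ⟨F(t, U(t)), V(t)⟩ dt for every H_m-valued polynomial V of degree at most r. -/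
open MeasureTheory Set
open scoped RealInnerProductSpace

set_option linter.unusedSectionVars false
set_option maxHeartbeats 1000000

section cGAux
variable {H : Type*} [NormedAddCommGroup H] [InnerProductSpace ℝ H]
  {Hm : Submodule ℝ H}



/-- Evaluation of a polynomial with coefficients in `Hm`. -/
def evS {n : ℕ} (c : Fin n → Hm) (t : ℝ) : H :=
  ∑ i : Fin n, t ^ (i : ℕ) • (c i : H)

lemma evS_mem {n : ℕ} (c : Fin n → Hm) (t : ℝ) : evS c t ∈ Hm :=
  Submodule.sum_mem _ fun i _ => Submodule.smul_mem _ _ (c i).2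

lemma evS_add {n : ℕ} (c d : Fin n → Hm) (t : ℝ) :
    evS (c + d) t = evS c t + evS d t := by
  simp [evS, smul_add, Finset.sum_add_distrib]

lemma evS_sub {n : ℕ} (c d : Fin n → Hm) (t : ℝ) :
    evS (c - d) t = evS c t - evS d t := by
  simp [evS, smul_sub, Finset.sum_sub_distrib]

lemma evS_smul {n : ℕ} (rr : ℝ) (c : Fin n → Hm) (t : ℝ) :
    evS (rr • c) t = rr • evS c t := by
  simp [evS, Finset.smul_sum, smul_comm rr]

lemma evS_zero {n : ℕ} (t : ℝ) : evS (0 : Fin n → Hm) t = 0 := by simp [evS]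

lemma continuous_evS {n : ℕ} (c : Fin n → Hm) : Continuous (evS c) := by
  unfold evS
  exact continuous_finset_sum _ fun i _ => (continuous_pow _).smul continuous_const

/-- A vector-valued polynomial vanishing on an infinite set has zero coefficients. -/
lemma coeff_eq_zero_of_vanish {n : ℕ} (c : Fin n → H) (s : Set ℝ) (hs : s.Infinite)
    (h : ∀ t ∈ s, ∑ i : Fin n, t ^ (i : ℕ) • c i = 0) : ∀ i, c i = 0 := by
  intro i₀
  have key : ∀ y : H, ⟪c i₀, y⟫ = 0 := by
    intro y
    set p : Polynomial ℝ := ∑ i : Fin n, Polynomial.C ⟪c i, y⟫ * Polynomial.X ^ (i : ℕ) with hp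
    have hroot : ∀ t ∈ s, p.IsRoot t := by
      intro t ht
      have := congrArg (fun z => ⟪z, y⟫) (h t ht)
      simp only [sum_inner, inner_smul_left, RCLike.conj_to_real, inner_zero_left] at this
      simp only [Polynomial.IsRoot, hp, Polynomial.eval_finset_sum, Polynomial.eval_mul,
        Polynomial.eval_C, Polynomial.eval_pow, Polynomial.eval_X]
      rw [← this]
      congr 1; ext i; ring
    have hp0 : p = 0 := Polynomial.eq_zero_of_infinite_isRoot p (hs.mono hroot)
    have := congrArg (fun q => Polynomial.coeff q (i₀ : ℕ)) hp0
    simp only [hp, Polynomial.finset_sum_coeff, Polynomial.coeff_C_mul,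
      Polynomial.coeff_X_pow, Polynomial.coeff_zero, mul_ite, mul_one, mul_zero] at this
    simpa [Fin.val_inj, Finset.sum_ite_eq] using this
  have := key (c i₀)
  exact inner_self_eq_zero.mp this



/-- Cauchy–Schwarz for interval integrals of continuous real functions. -/
lemma integral_mul_le_sqrt {a b : ℝ} (hab : a ≤ b) {f g : ℝ → ℝ}
    (hf : ContinuousOn f (Icc a b)) (hg : ContinuousOn g (Icc a b)) :
    ∫ t in a..b, f t * g t ≤
      Real.sqrt (∫ t in a..b, f t ^ 2) * Real.sqrt (∫ t in a..b, g t ^ 2) := by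
  have huI : uIcc a b = Icc a b := uIcc_of_le hab
  have hif : IntervalIntegrable (fun t => f t * g t) volume a b :=
    ContinuousOn.intervalIntegrable (by rw [huI]; exact hf.mul hg)
  have hif2 : IntervalIntegrable (fun t => f t ^ 2) volume a b :=
    ContinuousOn.intervalIntegrable (by rw [huI]; exact hf.pow 2)
  have hig2 : IntervalIntegrable (fun t => g t ^ 2) volume a b :=
    ContinuousOn.intervalIntegrable (by rw [huI]; exact hg.pow 2)
  set A := ∫ t in a..b, g t ^ 2 with hA
  set Bv := 2 * ∫ t in a..b, f t * g t with hB
  set C := ∫ t in a..b, f t ^ 2 with hC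
  have hA0 : 0 ≤ A := intervalIntegral.integral_nonneg hab (fun u _ => sq_nonneg _)
  have hC0 : 0 ≤ C := intervalIntegral.integral_nonneg hab (fun u _ => sq_nonneg _)
  have hquad : ∀ x : ℝ, 0 ≤ A * (x * x) + Bv * x + C := by
    intro x
    have hexp : A * (x * x) + Bv * x + C = ∫ t in a..b, (x * g t + f t) ^ 2 := by
      have : ∀ t : ℝ, (x * g t + f t) ^ 2
          = x * x * g t ^ 2 + x * (2 * (f t * g t)) + f t ^ 2 := by intro t; ring
      rw [intervalIntegral.integral_congr (fun t _ => this t)]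
      rw [intervalIntegral.integral_add (((hig2.const_mul _).add
          ((hif.const_mul 2).const_mul x)) ) hif2,
        intervalIntegral.integral_add (hig2.const_mul _) ((hif.const_mul 2).const_mul x),
        intervalIntegral.integral_const_mul, intervalIntegral.integral_const_mul,
        intervalIntegral.integral_const_mul]
      ring
    rw [hexp]
    exact intervalIntegral.integral_nonneg hab (fun u _ => sq_nonneg _)
  have hdisc : discrim A Bv C ≤ 0 := discrim_le_zero hquad
  rw [discrim] at hdisc
  have hBsq : Bv ^ 2 = 4 * (∫ t in a..b, f t * g t) ^ 2 := by rw [hB]; ring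
  have h1 : (∫ t in a..b, f t * g t) ^ 2 ≤ C * A := by nlinarith [hdisc, hBsq]
  calc ∫ t in a..b, f t * g t ≤ |∫ t in a..b, f t * g t| := le_abs_self _
    _ = Real.sqrt ((∫ t in a..b, f t * g t) ^ 2) := (Real.sqrt_sq_eq_abs _).symm
    _ ≤ Real.sqrt (C * A) := Real.sqrt_le_sqrt h1
    _ = Real.sqrt C * Real.sqrt A := Real.sqrt_mul hC0 _

/-- Cauchy–Schwarz for interval integrals of inner products. -/
lemma integral_inner_le_sqrt {a b : ℝ} (hab : a ≤ b) {u v : ℝ → H}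
    (hu : ContinuousOn u (Icc a b)) (hv : ContinuousOn v (Icc a b)) :
    ∫ t in a..b, ⟪u t, v t⟫ ≤
      Real.sqrt (∫ t in a..b, ‖u t‖ ^ 2) * Real.sqrt (∫ t in a..b, ‖v t‖ ^ 2) := by
  have huI : uIcc a b = Icc a b := uIcc_of_le hab
  have h1 : ∫ t in a..b, ⟪u t, v t⟫ ≤ ∫ t in a..b, ‖u t‖ * ‖v t‖ := by
    apply intervalIntegral.integral_mono_on hab
    · exact ContinuousOn.intervalIntegrable (by rw [huI]; exact hu.inner hv)
    · exact ContinuousOn.intervalIntegrable (by rw [huI]; exact hu.norm.mul hv.norm)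
    · exact fun t _ => real_inner_le_norm _ _
  exact h1.trans (integral_mul_le_sqrt hab hu.norm hv.norm)

/-- If the integral of `‖evS c‖²` over a nontrivial interval vanishes,
then all coefficients vanish. -/
lemma evS_integral_zero {n : ℕ} {a k : ℝ} (hk : 0 < k) (c : Fin n → Hm)
    (h0 : (∫ t in a..(a + k), ‖evS c t‖ ^ 2) = 0) : c = 0 := by
  have hab : a < a + k := lt_add_of_pos_right a hk
  set f : ℝ → ℝ := fun t => ‖evS c t‖ ^ 2 with hf
  have hfc : Continuous f := ((continuous_evS c).norm).pow 2
  have hzero : ∀ t ∈ Ioo a (a + k), evS c t = 0 := by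
    intro t₀ ht₀
    by_contra hne
    have hpos : 0 < f t₀ := pow_pos (norm_pos_iff.mpr hne) 2
    have hopen : IsOpen {x | 0 < f x} := isOpen_lt continuous_const hfc
    obtain ⟨ε, hε, hball⟩ := Metric.isOpen_iff.mp hopen t₀ hpos
    set t₁ := max a (t₀ - ε) with ht₁
    set t₂ := min (a + k) (t₀ + ε) with ht₂
    have h1 : a ≤ t₁ := le_max_left _ _
    have h2 : t₂ ≤ a + k := min_le_left _ _
    have h12 : t₁ < t₂ := by
      apply max_lt <;> apply lt_min
      · exact hab
      · linarith [ht₀.1]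
      · linarith [ht₀.2]
      · linarith
    have hsub : Ioo t₁ t₂ ⊆ {x | 0 < f x} := by
      intro x hx
      apply hball
      rw [Metric.mem_ball, Real.dist_eq, abs_lt]
      constructor
      · have := hx.1; have : t₀ - ε ≤ t₁ := le_max_right _ _; linarith [hx.1]
      · have : t₂ ≤ t₀ + ε := min_le_right _ _; linarith [hx.2]
    have hi1 : IntervalIntegrable f volume a t₁ := hfc.intervalIntegrable _ _
    have hi2 : IntervalIntegrable f volume t₁ t₂ := hfc.intervalIntegrable _ _
    have hi3 : IntervalIntegrable f volume t₂ (a + k) := hfc.intervalIntegrable _ _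
    have hmid : 0 < ∫ t in t₁..t₂, f t :=
      intervalIntegral.intervalIntegral_pos_of_pos_on hi2 (fun x hx => hsub hx) h12
    have hleft : 0 ≤ ∫ t in a..t₁, f t :=
      intervalIntegral.integral_nonneg h1 (fun u _ => sq_nonneg _)
    have hright : 0 ≤ ∫ t in t₂..(a + k), f t :=
      intervalIntegral.integral_nonneg h2 (fun u _ => sq_nonneg _)
    have hsum : (∫ t in a..t₂, f t) = (∫ t in a..t₁, f t) + ∫ t in t₁..t₂, f t :=
      (intervalIntegral.integral_add_adjacent_intervals hi1 hi2).symm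
    have hsum2 : (∫ t in a..(a+k), f t) = (∫ t in a..t₂, f t) + ∫ t in t₂..(a+k), f t :=
      (intervalIntegral.integral_add_adjacent_intervals (hfc.intervalIntegrable _ _) hi3).symm
    rw [hf] at h0
    have h0' : (∫ t in a..(a+k), f t) = 0 := h0; rw [hsum2, hsum] at h0'
    linarith
  -- now coefficients vanish
  have := coeff_eq_zero_of_vanish (fun i => (c i : H)) (Ioo a (a + k))
    (Set.Ioo_infinite hab) (fun t ht => hzero t ht)
  funext i
  exact Subtype.ext (this i)

variable (Hm) in
/-- Type synonym for polynomial coefficients carrying the `L²(a, a+k)` inner product. -/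
def cGW (n : ℕ) (a k : ℝ) : Type _ := Fin n → Hm

instance {n a k} : AddCommGroup (cGW Hm n a k) :=
  inferInstanceAs (AddCommGroup (Fin n → Hm))

instance {n a k} : Module ℝ (cGW Hm n a k) :=
  inferInstanceAs (Module ℝ (Fin n → Hm))

lemma cGW_add_coe {n a k} (c d : cGW Hm n a k) :
    ((c + d : cGW Hm n a k) : Fin n → Hm) = (c : Fin n → Hm) + (d : Fin n → Hm) := rfl

lemma cGW_smul_coe {n a k} (rr : ℝ) (c : cGW Hm n a k) :
    ((rr • c : cGW Hm n a k) : Fin n → Hm) = rr • (c : Fin n → Hm) := rfl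

noncomputable instance cGWCore {n : ℕ} {a k : ℝ} [hk : Fact (0 < k)] :
    InnerProductSpace.Core ℝ (cGW Hm n a k) where
  inner c d := ∫ t in a..(a + k), ⟪evS (c : Fin n → Hm) t, evS (d : Fin n → Hm) t⟫
  conj_inner_symm c d := by
    simp only [starRingEnd_apply, star_trivial]
    congr 1; funext t; exact real_inner_comm _ _
  re_inner_nonneg c := by
    simp only [RCLike.re_to_real]
    exact intervalIntegral.integral_nonneg (by linarith [hk.out])
      (fun u _ => real_inner_self_nonneg)
  definite c h := by
    have h' : (∫ t in a..(a + k), ‖evS (c : Fin n → Hm) t‖ ^ 2) = 0 := by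
      rw [← h]; congr 1; funext t; rw [real_inner_self_eq_norm_sq]
    exact evS_integral_zero hk.out _ h'
  add_left c d e := by
    show (∫ t in a..(a + k), ⟪evS ((c + d : cGW Hm n a k) : Fin n → Hm) t, evS e t⟫)
        = (∫ t in a..(a + k), ⟪evS (c : Fin n → Hm) t, evS (e : Fin n → Hm) t⟫)
          + ∫ t in a..(a + k), ⟪evS (d : Fin n → Hm) t, evS (e : Fin n → Hm) t⟫
    have hpt : ∀ t : ℝ, ⟪evS ((c + d : cGW Hm n a k) : Fin n → Hm) t, evS (e : Fin n → Hm) t⟫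
        = ⟪evS (c : Fin n → Hm) t, evS (e : Fin n → Hm) t⟫
          + ⟪evS (d : Fin n → Hm) t, evS (e : Fin n → Hm) t⟫ := by
      intro t
      have h2 : evS ((c + d : cGW Hm n a k) : Fin n → Hm) t
          = evS (c : Fin n → Hm) t + evS (d : Fin n → Hm) t := by
        unfold evS
        rw [← Finset.sum_add_distrib]
        refine Finset.sum_congr rfl fun i _ => ?_
        rw [show (c + d) i = c i + d i from rfl, Submodule.coe_add, smul_add]
      rw [h2, inner_add_left]
    rw [intervalIntegral.integral_congr (fun t _ => hpt t)]
    apply intervalIntegral.integral_add <;>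
      exact (Continuous.inner (continuous_evS _) (continuous_evS _)).intervalIntegrable _ _
  smul_left c d rr := by
    show (∫ t in a..(a + k), ⟪evS ((rr • c : cGW Hm n a k) : Fin n → Hm) t, evS d t⟫)
        = (starRingEnd ℝ) rr * ∫ t in a..(a + k), ⟪evS (c : Fin n → Hm) t, evS (d : Fin n → Hm) t⟫
    simp only [starRingEnd_apply, star_trivial]
    have hpt : ∀ t : ℝ, ⟪evS ((rr • c : cGW Hm n a k) : Fin n → Hm) t, evS (d : Fin n → Hm) t⟫
        = rr * ⟪evS (c : Fin n → Hm) t, evS (d : Fin n → Hm) t⟫ := by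
      intro t
      have h2 : evS ((rr • c : cGW Hm n a k) : Fin n → Hm) t = rr • evS (c : Fin n → Hm) t := by
        unfold evS
        rw [Finset.smul_sum]
        refine Finset.sum_congr rfl fun i _ => ?_
        rw [show (rr • c) i = rr • c i from rfl, Submodule.coe_smul, smul_comm]
      rw [h2, real_inner_smul_left]
    rw [intervalIntegral.integral_congr (fun t _ => hpt t)]
    exact intervalIntegral.integral_const_mul _ _

noncomputable instance {n : ℕ} {a k : ℝ} [Fact (0 < k)] :
    NormedAddCommGroup (cGW Hm n a k) :=
  (cGWCore (Hm := Hm) (n := n) (a := a) (k := k)).toNormedAddCommGroup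

noncomputable instance {n : ℕ} {a k : ℝ} [Fact (0 < k)] :
    InnerProductSpace ℝ (cGW Hm n a k) :=
  InnerProductSpace.ofCore _

instance {n a k} [FiniteDimensional ℝ Hm] : FiniteDimensional ℝ (cGW Hm n a k) :=
  inferInstanceAs (FiniteDimensional ℝ (Fin n → Hm))

instance {n : ℕ} {a k : ℝ} [Fact (0 < k)] [FiniteDimensional ℝ Hm] :
    CompleteSpace (cGW Hm n a k) := FiniteDimensional.complete ℝ _

lemma cGW_inner_def {n : ℕ} {a k : ℝ} [Fact (0 < k)] (c d : cGW Hm n a k) :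
    ⟪c, d⟫ = ∫ t in a..(a + k), ⟪evS (c : Fin n → Hm) t, evS (d : Fin n → Hm) t⟫ := rfl

lemma cGW_norm_sq {n : ℕ} {a k : ℝ} [Fact (0 < k)] (c : cGW Hm n a k) :
    ‖c‖ ^ 2 = ∫ t in a..(a + k), ‖evS (c : Fin n → Hm) t‖ ^ 2 := by
  rw [← real_inner_self_eq_norm_sq, cGW_inner_def]
  congr 1; funext t; rw [real_inner_self_eq_norm_sq]


end cGAux

section cGAux2
variable {H : Type*} [NormedAddCommGroup H] [InnerProductSpace ℝ H] [CompleteSpace H]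
  {Hm : Submodule ℝ H}

/-- `p0 + ∫_a^t (polynomial with coefficients c)`. -/
noncomputable def UofP (p0 : H) (a : ℝ) {n : ℕ} (c : Fin n → Hm) (t : ℝ) : H :=
  p0 + ∑ i : Fin n, ((t ^ ((i : ℕ) + 1) - a ^ ((i : ℕ) + 1)) / ((i : ℕ) + 1)) • (c i : H)

lemma UofP_a (p0 : H) (a : ℝ) {n : ℕ} (c : Fin n → Hm) : UofP p0 a c a = p0 := by
  simp [UofP]

lemma UofP_mem {p0 : H} (hp0 : p0 ∈ Hm) (a : ℝ) {n : ℕ} (c : Fin n → Hm) (t : ℝ) :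
    UofP p0 a c t ∈ Hm :=
  Submodule.add_mem _ hp0 <| Submodule.sum_mem _ fun i _ => Submodule.smul_mem _ _ (c i).2

lemma continuous_UofP (p0 : H) (a : ℝ) {n : ℕ} (c : Fin n → Hm) :
    Continuous (UofP p0 a c) := by
  unfold UofP
  exact continuous_const.add <| continuous_finset_sum _ fun i _ =>
    (((continuous_pow _).sub continuous_const).div_const _).smul continuous_const

lemma hasDerivAt_UofP (p0 : H) (a : ℝ) {n : ℕ} (c : Fin n → Hm) (t : ℝ) :
    HasDerivAt (UofP p0 a c) (evS c t) t := by
  unfold UofP evS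
  refine HasDerivAt.const_add _ (HasDerivAt.fun_sum fun i _ => ?_)
  have h1 : HasDerivAt (fun t : ℝ => (t ^ ((i : ℕ) + 1) - a ^ ((i : ℕ) + 1)) / ((i : ℕ) + 1))
      (t ^ (i : ℕ)) t := by
    have := ((hasDerivAt_pow ((i : ℕ) + 1) t).sub_const (a ^ ((i : ℕ) + 1))).div_const
      (((i : ℕ) : ℝ) + 1)
    refine this.congr_deriv ?_
    rw [Nat.add_sub_cancel]
    push_cast
    field_simp
  exact h1.smul_const _

lemma UofP_integral (p0 : H) (a : ℝ) {n : ℕ} (c : Fin n → Hm) (t : ℝ) :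
    UofP p0 a c t = p0 + ∫ τ in a..t, evS c τ := by
  unfold UofP evS
  congr 1
  rw [intervalIntegral.integral_finset_sum (fun (i : Fin n) _ =>
    (Continuous.intervalIntegrable (u := fun τ => τ ^ (i : ℕ) • (c i : H)) (by fun_prop) _ _))]
  refine Finset.sum_congr rfl fun i _ => ?_
  rw [intervalIntegral.integral_smul_const, integral_pow]

lemma UofP_sub (p0 : H) (a : ℝ) {n : ℕ} (c d : Fin n → Hm) (t : ℝ) :
    UofP p0 a c t - UofP p0 a d t = UofP 0 a (c - d) t := by
  unfold UofP
  simp only [Pi.sub_apply, Submodule.coe_sub, smul_sub, Finset.sum_sub_distrib, zero_add]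
  abel

lemma evS_eq_UofP (a : ℝ) {n : ℕ} (y : Fin (n + 1) → Hm) (t : ℝ) :
    evS y t = UofP (evS y a) a (fun i : Fin n => ((((i : ℕ) + 1 : ℕ) : ℝ)) • y i.succ) t := by
  unfold UofP
  have hterm : ∀ i : Fin n,
      ((t ^ ((i : ℕ) + 1) - a ^ ((i : ℕ) + 1)) / ((i : ℕ) + 1)) •
        ((((((i : ℕ) + 1 : ℕ) : ℝ)) • y i.succ : Hm) : H)
      = (t ^ ((i : ℕ) + 1)) • (y i.succ : H) - (a ^ ((i : ℕ) + 1)) • (y i.succ : H) := by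
    intro i
    rw [Submodule.coe_smul, smul_smul, ← sub_smul]
    congr 1
    push_cast
    rw [div_mul_cancel₀]
    positivity
  rw [Finset.sum_congr rfl fun i _ => hterm i, Finset.sum_sub_distrib]
  unfold evS
  simp only [Fin.sum_univ_succ, Fin.val_zero, pow_zero, one_smul, Fin.val_succ]
  abel

lemma hasDerivAt_evS (a : ℝ) {n : ℕ} (y : Fin (n + 1) → Hm) (t : ℝ) :
    HasDerivAt (evS y) (evS (fun i : Fin n => ((((i : ℕ) + 1 : ℕ) : ℝ)) • y i.succ) t) t := by
  have h := hasDerivAt_UofP (evS y a) a (fun i : Fin n => ((((i : ℕ) + 1 : ℕ) : ℝ)) • y i.succ) t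
  have he : evS y = UofP (evS y a) a (fun i : Fin n => ((((i : ℕ) + 1 : ℕ) : ℝ)) • y i.succ) :=
    funext fun t => evS_eq_UofP a y t
  rw [he]
  exact h

lemma UofP_eq_evS (p0 : Hm) (a : ℝ) {n : ℕ} (c : Fin n → Hm) :
    ∃ x : Fin (n + 1) → Hm, ∀ t : ℝ, UofP (p0 : H) a c t = evS x t := by
  refine ⟨Fin.cases (p0 - ∑ i : Fin n, (a ^ ((i : ℕ) + 1) / ((i : ℕ) + 1)) • c i)
    (fun j => (((j : ℕ) + 1 : ℝ))⁻¹ • c j), fun t => ?_⟩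
  unfold evS UofP
  simp only [Fin.sum_univ_succ, Fin.val_zero, pow_zero, one_smul, Fin.val_succ,
    Fin.cases_zero, Fin.cases_succ, Submodule.coe_sub, Submodule.coe_smul,
    Submodule.coe_sum, smul_smul]
  have hterm : ∀ i : Fin n,
      ((t ^ ((i : ℕ) + 1) - a ^ ((i : ℕ) + 1)) / ((i : ℕ) + 1)) • ((c i : H))
      = (t ^ ((i : ℕ) + 1) * (((i : ℕ) + 1 : ℝ))⁻¹) • (c i : H)
        - (a ^ ((i : ℕ) + 1) / ((i : ℕ) + 1)) • (c i : H) := by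
    intro i
    rw [← sub_smul]
    congr 1
    rw [div_eq_mul_inv, div_eq_mul_inv, sub_mul]
  rw [Finset.sum_congr rfl fun i _ => hterm i, Finset.sum_sub_distrib]
  abel

/-- Translation between `IsHmPoly` and `evS` representations. -/
lemma isHmPoly_iff (m : ℕ) (V : ℝ → H) :
    (∃ c : ℕ → H, (∀ i, c i ∈ Hm) ∧
        ∀ t : ℝ, V t = ∑ i ∈ Finset.range (m + 1), t ^ i • c i)
      ↔ ∃ c : Fin (m + 1) → Hm, ∀ t, V t = evS c t := by
  constructor
  · rintro ⟨c, hcm, hV⟩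
    exact ⟨fun i => ⟨c i, hcm i⟩, fun t => by
      rw [hV t, ← Fin.sum_univ_eq_sum_range (fun i => t ^ i • c i)]; rfl⟩
  · rintro ⟨c, hV⟩
    refine ⟨fun i => if h : i < m + 1 then (c ⟨i, h⟩ : H) else 0, fun i => ?_, fun t => ?_⟩
    · by_cases h : i < m + 1 <;> simp [h, (c _).2, Submodule.zero_mem]
    · rw [hV t, ← Fin.sum_univ_eq_sum_range
        (fun i => t ^ i • if h : i < m + 1 then (c ⟨i, h⟩ : H) else 0)]
      unfold evS
      exact Finset.sum_congr rfl fun i _ => by rw [dif_pos i.2]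


end cGAux2

section cGW2
variable {H : Type*} [NormedAddCommGroup H] [InnerProductSpace ℝ H]
  {Hm : Submodule ℝ H}

lemma cGW_evS_add' {n : ℕ} {a k : ℝ} (c d : cGW Hm n a k) (t : ℝ) :
    evS ((c + d : cGW Hm n a k) : Fin n → Hm) t
      = evS (c : Fin n → Hm) t + evS (d : Fin n → Hm) t := by
  unfold evS
  rw [← Finset.sum_add_distrib]
  exact Finset.sum_congr rfl fun i _ => by
    rw [show (c + d) i = c i + d i from rfl, Submodule.coe_add, smul_add]

lemma cGW_evS_smul' {n : ℕ} {a k : ℝ} (rr : ℝ) (c : cGW Hm n a k) (t : ℝ) :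
    evS ((rr • c : cGW Hm n a k) : Fin n → Hm) t = rr • evS (c : Fin n → Hm) t := by
  unfold evS
  rw [Finset.smul_sum]
  exact Finset.sum_congr rfl fun i _ => by
    rw [show (rr • c) i = rr • c i from rfl, Submodule.coe_smul, smul_comm]

/-- The coefficient-to-value linear map `c ↦ ∑ ((t^(i+1)-a^(i+1))/(i+1)) • c i`. -/
noncomputable def intL (Hm : Submodule ℝ H) (n : ℕ) (a k t : ℝ) : cGW Hm n a k →ₗ[ℝ] H where
  toFun c := ∑ i : Fin n, ((t ^ ((i : ℕ) + 1) - a ^ ((i : ℕ) + 1)) / ((i : ℕ) + 1)) • (c i : H)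
  map_add' c d := by
    rw [← Finset.sum_add_distrib]
    exact Finset.sum_congr rfl fun i _ => by
      rw [show (c + d) i = c i + d i from rfl, Submodule.coe_add, smul_add]
  map_smul' rr c := by
    simp only [RingHom.id_apply]
    rw [Finset.smul_sum]
    exact Finset.sum_congr rfl fun i _ => by
      rw [show (rr • c) i = rr • c i from rfl, Submodule.coe_smul, smul_comm]

end cGW2

/-- `U : ℝ → H` is an `H`-valued polynomial of degree at most `r`
with coefficients in the subspace `S`. -/
def IsHmPoly {H : Type*} [NormedAddCommGroup H] [InnerProductSpace ℝ H]
    (S : Submodule ℝ H) (r : ℕ) (U : ℝ → H) : Prop :=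
  ∃ c : ℕ → H, (∀ i, c i ∈ S) ∧ ∀ t : ℝ, U t = ∑ i ∈ Finset.range (r + 1), t ^ i • c i

lemma isHmPoly_iff_evS {H : Type*} [NormedAddCommGroup H] [InnerProductSpace ℝ H]
    [CompleteSpace H] {Hm : Submodule ℝ H} (m : ℕ) (V : ℝ → H) :
    IsHmPoly Hm m V ↔ ∃ c : Fin (m + 1) → Hm, ∀ t, V t = evS c t :=
  isHmPoly_iff m V

/-- Theorem 4.1 (cG case): under a local Lipschitz assumption, the continuous
Galerkin time step possesses exactly one solution with values in the ball `B`. -/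
theorem cG_uniqueness
    {H : Type*} [NormedAddCommGroup H] [InnerProductSpace ℝ H] [CompleteSpace H]
    (Hm : Submodule ℝ H) [FiniteDimensional ℝ Hm]
    (T : ℝ) (F : ℝ → H → H)
    (hFcont : ContinuousOn (fun p : ℝ × H => F p.1 p.2) (Set.Icc 0 T ×ˢ Set.univ))
    (a : ℝ) (ha : a ∈ Set.Ico (0 : ℝ) T) (u_prev : H)
    (κ θ : ℝ) (hκ : 0 < κ) (hθ : 0 < θ) (haθ : a + θ ≤ T)
    (B : Set H)
    (hB : B = {y : H | y ∈ Hm ∧ ‖y - (Submodule.orthogonalProjection Hm u_prev : H)‖ ≤ κ})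
    (K : ℝ)
    (hK : IsGreatest {s : ℝ | ∃ t ∈ Set.Icc a (a + θ), ∃ y ∈ B, s = ‖F t y‖} K)
    (L_B : ℝ) (hLB0 : 0 ≤ L_B)
    (hLip : ∀ t ∈ Set.Icc a (a + θ), ∀ u ∈ B, ∀ v ∈ B,
      ‖F t u - F t v‖ ≤ L_B * ‖u - v‖)
    (k : ℝ) (hk0 : 0 < k) (hkθ : k ≤ θ) (hkK : k * K ≤ κ) (hkL : k * L_B < 1)
    (r : ℕ) :
    ∃! U : ℝ → H, IsHmPoly Hm (r + 1) U ∧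
      U a = (Submodule.orthogonalProjection Hm u_prev : H) ∧
      (∀ t ∈ Set.Icc a (a + k), U t ∈ B) ∧
      ∀ V : ℝ → H, IsHmPoly Hm r V →
        (∫ t in a..(a + k), ⟪deriv U t, V t⟫) =
          ∫ t in a..(a + k), ⟪F t (U t), V t⟫ := by
  obtain ⟨ha0, haT⟩ := ha
  haveI : Fact (0 < k) := ⟨hk0⟩
  have hask : a ≤ a + k := by linarith
  have hsθ : a + k ≤ a + θ := by linarith
  have hsT : a + k ≤ T := by linarith
  have huI : uIcc a (a + k) = Icc a (a + k) := uIcc_of_le hask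
  set p0 : H := (Submodule.orthogonalProjection Hm u_prev : H) with hp0def
  have hp0 : p0 ∈ Hm := (Submodule.orthogonalProjection Hm u_prev).2
  have hK0 : 0 ≤ K := by
    obtain ⟨t, ht, y, hy, hKeq⟩ := hK.1
    rw [hKeq]; positivity
  have hKb : ∀ t ∈ Icc a (a + k), ∀ y ∈ B, ‖F t y‖ ≤ K := fun t ht y hy =>
    hK.2 ⟨t, ⟨ht.1, le_trans ht.2 hsθ⟩, y, hy, rfl⟩
  have hsqk : Real.sqrt k * Real.sqrt k = k := Real.mul_self_sqrt hk0.le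
  have hgc : ∀ c : cGW Hm (r + 1) a k,
      ContinuousOn (fun t => F t (UofP p0 a (c : Fin (r + 1) → Hm) t)) (Icc a (a + k)) := by
    intro c
    have h1 : ContinuousOn (fun t : ℝ => (t, UofP p0 a (c : Fin (r + 1) → Hm) t))
        (Icc a (a + k)) :=
      (continuous_id.prodMk (continuous_UofP p0 a _)).continuousOn
    refine hFcont.comp h1 ?_
    intro t ht
    exact ⟨⟨le_trans ha0 ht.1, le_trans ht.2 hsT⟩, mem_univ _⟩
  have hii : ∀ (u v : ℝ → H), ContinuousOn u (Icc a (a + k)) →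
      ContinuousOn v (Icc a (a + k)) →
      IntervalIntegrable (fun t => ⟪u t, v t⟫) volume a (a + k) := fun u v hu hv =>
    ContinuousOn.intervalIntegrable (by rw [huI]; exact hu.inner hv)
  have hnormsq : ∀ c : cGW Hm (r + 1) a k,
      ‖c‖ ^ 2 = ∫ t in a..(a + k), ‖evS (c : Fin (r + 1) → Hm) t‖ ^ 2 := fun c => cGW_norm_sq c
  have hnorm_eq : ∀ c : cGW Hm (r + 1) a k,
      Real.sqrt (∫ t in a..(a + k), ‖evS (c : Fin (r + 1) → Hm) t‖ ^ 2) = ‖c‖ := by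
    intro c
    rw [← hnormsq c, Real.sqrt_sq (norm_nonneg _)]
  have E0 : ∀ c : cGW Hm (r + 1) a k, ∀ t ∈ Icc a (a + k),
      ‖∫ τ in a..t, evS (c : Fin (r + 1) → Hm) τ‖ ≤ Real.sqrt k * ‖c‖ := by
    intro c t ht
    have h1 : ‖∫ τ in a..t, evS (c : Fin (r + 1) → Hm) τ‖
        ≤ ∫ τ in a..t, ‖evS (c : Fin (r + 1) → Hm) τ‖ :=
      intervalIntegral.norm_integral_le_integral_norm ht.1
    have h2 : (∫ τ in a..t, ‖evS (c : Fin (r + 1) → Hm) τ‖)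
        = ∫ τ in a..t, 1 * ‖evS (c : Fin (r + 1) → Hm) τ‖ := by simp
    have h3 := integral_mul_le_sqrt (a := a) (b := t) (f := fun _ : ℝ => (1 : ℝ))
      (g := fun τ => ‖evS (c : Fin (r + 1) → Hm) τ‖) ht.1 continuousOn_const
      (continuous_evS (c : Fin (r + 1) → Hm)).norm.continuousOn
    have h4 : (∫ τ in a..t, (1 : ℝ) ^ 2) = t - a := by simp
    have h5 : (∫ τ in a..t, ‖evS (c : Fin (r + 1) → Hm) τ‖ ^ 2)
        ≤ ∫ τ in a..(a + k), ‖evS (c : Fin (r + 1) → Hm) τ‖ ^ 2 := by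
      have hadd := intervalIntegral.integral_add_adjacent_intervals
        (a := a) (b := t) (c := a + k) (μ := volume)
        (f := fun τ => ‖evS (c : Fin (r + 1) → Hm) τ‖ ^ 2)
        (((continuous_evS (c : Fin (r + 1) → Hm)).norm.pow 2).intervalIntegrable _ _)
        (((continuous_evS (c : Fin (r + 1) → Hm)).norm.pow 2).intervalIntegrable _ _)
      have hnn : 0 ≤ ∫ τ in t..(a + k), ‖evS (c : Fin (r + 1) → Hm) τ‖ ^ 2 :=
        intervalIntegral.integral_nonneg ht.2 (fun u _ => sq_nonneg _)
      linarith
    have h6 : Real.sqrt (∫ τ in a..t, ‖evS (c : Fin (r + 1) → Hm) τ‖ ^ 2) ≤ ‖c‖ := by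
      rw [← hnorm_eq c]
      exact Real.sqrt_le_sqrt h5
    have h7 : Real.sqrt (∫ τ in a..t, (1 : ℝ) ^ 2) ≤ Real.sqrt k := by
      rw [h4]
      apply Real.sqrt_le_sqrt
      linarith [ht.1, ht.2]
    calc ‖∫ τ in a..t, evS (c : Fin (r + 1) → Hm) τ‖
        ≤ ∫ τ in a..t, 1 * ‖evS (c : Fin (r + 1) → Hm) τ‖ := by rw [← h2]; exact h1
      _ ≤ Real.sqrt (∫ τ in a..t, (1 : ℝ) ^ 2) *
            Real.sqrt (∫ τ in a..t, ‖evS (c : Fin (r + 1) → Hm) τ‖ ^ 2) := h3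
      _ ≤ Real.sqrt k * ‖c‖ :=
          mul_le_mul h7 h6 (Real.sqrt_nonneg _) (Real.sqrt_nonneg _)
  have E1 : ∀ c : cGW Hm (r + 1) a k, ∀ t ∈ Icc a (a + k),
      ‖UofP p0 a (c : Fin (r + 1) → Hm) t - p0‖ ≤ Real.sqrt k * ‖c‖ := by
    intro c t ht
    have h1 : UofP p0 a (c : Fin (r + 1) → Hm) t - p0
        = ∫ τ in a..t, evS (c : Fin (r + 1) → Hm) τ := by
      exact sub_eq_of_eq_add' (UofP_integral p0 a _ t)
    rw [h1]
    exact E0 c t ht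
  have Ediff : ∀ c d : cGW Hm (r + 1) a k, ∀ t ∈ Icc a (a + k),
      ‖UofP p0 a (c : Fin (r + 1) → Hm) t - UofP p0 a (d : Fin (r + 1) → Hm) t‖
        ≤ Real.sqrt k * ‖c - d‖ := by
    intro c d t ht
    have h1 : UofP p0 a (c : Fin (r + 1) → Hm) t - UofP p0 a (d : Fin (r + 1) → Hm) t
        = ∫ τ in a..t, evS (((c - d) : cGW Hm (r + 1) a k) : Fin (r + 1) → Hm) τ := by
      exact (UofP_sub p0 a _ _ t).trans ((UofP_integral 0 a _ t).trans (zero_add _))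
    rw [h1]
    exact E0 (c - d) t ht
  have hproj : ∀ g : ℝ → H, ContinuousOn g (Icc a (a + k)) →
      ∃ P : cGW Hm (r + 1) a k, ∀ V : cGW Hm (r + 1) a k,
        ⟪P, V⟫ = ∫ t in a..(a + k), ⟪g t, evS (V : Fin (r + 1) → Hm) t⟫ := by
    intro g hg
    have hint : ∀ V : cGW Hm (r + 1) a k,
        IntervalIntegrable (fun t => ⟪g t, evS (V : Fin (r + 1) → Hm) t⟫) volume a (a + k) :=
      fun V => hii _ _ hg (continuous_evS _).continuousOn
    refine ⟨(InnerProductSpace.toDual ℝ (cGW Hm (r + 1) a k)).symm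
      (LinearMap.toContinuousLinearMap
        { toFun := fun V : cGW Hm (r + 1) a k =>
            ∫ t in a..(a + k), ⟪g t, evS (V : Fin (r + 1) → Hm) t⟫
          map_add' := by
            intro V V'
            rw [← intervalIntegral.integral_add (hint V) (hint V')]
            refine intervalIntegral.integral_congr fun t _ => ?_
            rw [cGW_evS_add', inner_add_right]
          map_smul' := by
            intro rr V
            simp only [RingHom.id_apply, smul_eq_mul]
            rw [← intervalIntegral.integral_const_mul]
            refine intervalIntegral.integral_congr fun t _ => ?_
            rw [cGW_evS_smul', real_inner_smul_right] }), fun V => ?_⟩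
    rw [InnerProductSpace.toDual_symm_apply]
    rfl
  have hPbound : ∀ (P : cGW Hm (r + 1) a k) (g : ℝ → H), ContinuousOn g (Icc a (a + k)) →
      (∀ V, ⟪P, V⟫ = ∫ t in a..(a + k), ⟪g t, evS (V : Fin (r + 1) → Hm) t⟫) →
      ‖P‖ ≤ Real.sqrt (∫ t in a..(a + k), ‖g t‖ ^ 2) := by
    intro P g hg hP
    rcases eq_or_lt_of_le (norm_nonneg P) with h0 | h0
    · rw [← h0]; exact Real.sqrt_nonneg _
    have h1 : ‖P‖ ^ 2 ≤ Real.sqrt (∫ t in a..(a + k), ‖g t‖ ^ 2) * ‖P‖ := by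
      rw [← real_inner_self_eq_norm_sq, hP P]
      calc (∫ t in a..(a + k), ⟪g t, evS (P : Fin (r + 1) → Hm) t⟫)
          ≤ Real.sqrt (∫ t in a..(a + k), ‖g t‖ ^ 2) *
              Real.sqrt (∫ t in a..(a + k), ‖evS (P : Fin (r + 1) → Hm) t‖ ^ 2) :=
            integral_inner_le_sqrt hask hg (continuous_evS _).continuousOn
        _ = Real.sqrt (∫ t in a..(a + k), ‖g t‖ ^ 2) * ‖P‖ := by rw [hnorm_eq]
    have h2 : ‖P‖ * ‖P‖ ≤ Real.sqrt (∫ t in a..(a + k), ‖g t‖ ^ 2) * ‖P‖ := by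
      rw [← sq]; exact h1
    exact le_of_mul_le_mul_right h2 h0
  have hL2bound : ∀ (g : ℝ → H) (M : ℝ), ContinuousOn g (Icc a (a + k)) → 0 ≤ M →
      (∀ t ∈ Icc a (a + k), ‖g t‖ ≤ M) →
      Real.sqrt (∫ t in a..(a + k), ‖g t‖ ^ 2) ≤ Real.sqrt k * M := by
    intro g M hg hM hb
    have h1 : (∫ t in a..(a + k), ‖g t‖ ^ 2) ≤ ∫ _t in a..(a + k), M ^ 2 := by
      apply intervalIntegral.integral_mono_on hask
      · exact ContinuousOn.intervalIntegrable (by rw [huI]; exact hg.norm.pow 2)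
      · exact intervalIntegrable_const
      · exact fun t ht => pow_le_pow_left₀ (norm_nonneg _) (hb t ht) 2
    have h2 : (∫ _t in a..(a + k), (M : ℝ) ^ 2) = k * M ^ 2 := by
      rw [intervalIntegral.integral_const]
      simp [add_sub_cancel_left]
    calc Real.sqrt (∫ t in a..(a + k), ‖g t‖ ^ 2)
        ≤ Real.sqrt (k * M ^ 2) := Real.sqrt_le_sqrt (by rw [← h2]; exact h1)
      _ = Real.sqrt k * M := by rw [Real.sqrt_mul hk0.le, Real.sqrt_sq hM]
  choose Φ0 hΦ0 using fun c : cGW Hm (r + 1) a k =>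
    hproj (fun t => F t (UofP p0 a (c : Fin (r + 1) → Hm) t)) (hgc c)
  set S : Set (cGW Hm (r + 1) a k) :=
    {c | ∀ t ∈ Icc a (a + k), UofP p0 a (c : Fin (r + 1) → Hm) t ∈ B} with hSdef
  have hUzero : ∀ t : ℝ,
      UofP p0 a (((0 : cGW Hm (r + 1) a k)) : Fin (r + 1) → Hm) t = p0 := by
    intro t
    unfold UofP
    simp [show ∀ i : Fin (r + 1), (((0 : cGW Hm (r + 1) a k)) i : H) = 0 from fun i => rfl]
  have hp0B : p0 ∈ B := by
    rw [hB]
    exact ⟨hp0, by simp [hκ.le]⟩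
  have hS0 : (0 : cGW Hm (r + 1) a k) ∈ S := by
    intro t ht
    rw [hUzero t]
    exact hp0B
  have hinv : ∀ c ∈ S, Φ0 c ∈ S := by
    intro c hc
    have hbound : ∀ t ∈ Icc a (a + k), ‖F t (UofP p0 a (c : Fin (r + 1) → Hm) t)‖ ≤ K :=
      fun t ht => hKb t ht _ (hc t ht)
    have hΦnorm : ‖Φ0 c‖ ≤ Real.sqrt k * K :=
      (hPbound _ _ (hgc c) (hΦ0 c)).trans (hL2bound _ K (hgc c) hK0 hbound)
    intro t ht
    rw [hB]
    refine ⟨UofP_mem hp0 _ _ _, ?_⟩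
    calc ‖UofP p0 a ((Φ0 c : cGW Hm (r + 1) a k) : Fin (r + 1) → Hm) t - p0‖
        ≤ Real.sqrt k * ‖Φ0 c‖ := E1 _ t ht
      _ ≤ Real.sqrt k * (Real.sqrt k * K) :=
          mul_le_mul_of_nonneg_left hΦnorm (Real.sqrt_nonneg _)
      _ = k * K := by rw [← mul_assoc, hsqk]
      _ ≤ κ := hkK
  have hcontract : ∀ c ∈ S, ∀ d ∈ S, ‖Φ0 c - Φ0 d‖ ≤ (k * L_B) * ‖c - d‖ := by
    intro c hc d hd
    have hgd : ContinuousOn (fun t => F t (UofP p0 a (c : Fin (r + 1) → Hm) t)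
        - F t (UofP p0 a (d : Fin (r + 1) → Hm) t)) (Icc a (a + k)) := (hgc c).sub (hgc d)
    have hchar : ∀ V : cGW Hm (r + 1) a k, ⟪Φ0 c - Φ0 d, V⟫
        = ∫ t in a..(a + k), ⟪F t (UofP p0 a (c : Fin (r + 1) → Hm) t)
            - F t (UofP p0 a (d : Fin (r + 1) → Hm) t), evS (V : Fin (r + 1) → Hm) t⟫ := by
      intro V
      rw [inner_sub_left, hΦ0 c V, hΦ0 d V]
      exact (intervalIntegral.integral_sub (hii _ _ (hgc c) (continuous_evS _).continuousOn)
          (hii _ _ (hgc d) (continuous_evS _).continuousOn)).symm.trans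
        (intervalIntegral.integral_congr fun t _ => (inner_sub_left _ _ _).symm)
    have hbq : ∀ t ∈ Icc a (a + k), ‖F t (UofP p0 a (c : Fin (r + 1) → Hm) t)
        - F t (UofP p0 a (d : Fin (r + 1) → Hm) t)‖
          ≤ L_B * (Real.sqrt k * ‖c - d‖) := by
      intro t ht
      have h1 := hLip t ⟨ht.1, le_trans ht.2 hsθ⟩ _ (hc t ht) _ (hd t ht)
      exact h1.trans (mul_le_mul_of_nonneg_left (Ediff c d t ht) hLB0)
    have h2 : ‖Φ0 c - Φ0 d‖ ≤ Real.sqrt k * (L_B * (Real.sqrt k * ‖c - d‖)) :=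
      (hPbound _ _ hgd hchar).trans (hL2bound _ _ hgd (by positivity) hbq)
    calc ‖Φ0 c - Φ0 d‖ ≤ Real.sqrt k * (L_B * (Real.sqrt k * ‖c - d‖)) := h2
      _ = (Real.sqrt k * Real.sqrt k) * (L_B * ‖c - d‖) := by ring
      _ = (k * L_B) * ‖c - d‖ := by rw [hsqk]; ring
  have hSclosed : IsClosed S := by
    have hSeq : S = ⋂ t ∈ Icc a (a + k),
        {c : cGW Hm (r + 1) a k | ‖UofP p0 a (c : Fin (r + 1) → Hm) t - p0‖ ≤ κ} := by
      ext c
      simp only [hSdef, mem_setOf_eq, mem_iInter]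
      constructor
      · intro hc t ht
        have h := hc t ht
        rw [hB] at h
        exact h.2
      · intro hc t ht
        rw [hB]
        exact ⟨UofP_mem hp0 _ _ _, hc t ht⟩
    rw [hSeq]
    refine isClosed_biInter fun t ht => ?_
    have hlin : Continuous fun c : cGW Hm (r + 1) a k =>
        UofP p0 a (c : Fin (r + 1) → Hm) t - p0 := by
      have heq : (fun c : cGW Hm (r + 1) a k => UofP p0 a (c : Fin (r + 1) → Hm) t - p0)
          = fun c => intL Hm (r + 1) a k t c := by
        funext c
        show UofP p0 a (c : Fin (r + 1) → Hm) t - p0 = _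
        unfold UofP
        rw [add_sub_cancel_left]
        rfl
      rw [heq]
      exact (intL Hm (r + 1) a k t).continuous_of_finiteDimensional
    exact isClosed_le hlin.norm continuous_const
  haveI : Nonempty ↥S := ⟨⟨0, hS0⟩⟩
  haveI : CompleteSpace ↥S := hSclosed.completeSpace_coe
  set φ : ↥S → ↥S := fun c => ⟨Φ0 (c : cGW Hm (r + 1) a k), hinv _ c.2⟩ with hφdef
  have hKnn : (0 : ℝ) ≤ k * L_B := by positivity
  have hφcontr : ContractingWith ⟨k * L_B, hKnn⟩ φ := by
    constructor
    · exact_mod_cast hkL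
    · apply LipschitzWith.of_dist_le_mul
      intro x y
      rw [Subtype.dist_eq, Subtype.dist_eq, dist_eq_norm, dist_eq_norm]
      exact hcontract _ x.2 _ y.2
  set c0 : ↥S := ContractingWith.fixedPoint φ hφcontr with hc0def
  have hfix : Φ0 (c0 : cGW Hm (r + 1) a k) = (c0 : cGW Hm (r + 1) a k) :=
    congrArg Subtype.val hφcontr.fixedPoint_isFixedPt
  refine ⟨UofP p0 a ((c0 : cGW Hm (r + 1) a k) : Fin (r + 1) → Hm), ⟨?_, ?_, ?_, ?_⟩, ?_⟩
  · obtain ⟨x, hx⟩ := UofP_eq_evS ⟨p0, hp0⟩ a ((c0 : cGW Hm (r + 1) a k) : Fin (r + 1) → Hm)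
    exact (isHmPoly_iff_evS (r + 1) _).mpr ⟨x, hx⟩
  · exact UofP_a p0 a _
  · exact fun t ht => c0.2 t ht
  · intro V hV
    obtain ⟨cV, hcV⟩ := (isHmPoly_iff_evS r V).mp hV
    have hderiv : ∀ t : ℝ,
        deriv (UofP p0 a ((c0 : cGW Hm (r + 1) a k) : Fin (r + 1) → Hm)) t
          = evS ((c0 : cGW Hm (r + 1) a k) : Fin (r + 1) → Hm) t :=
      fun t => (hasDerivAt_UofP p0 a _ t).deriv
    have hL : (∫ t in a..(a + k),
          ⟪deriv (UofP p0 a ((c0 : cGW Hm (r + 1) a k) : Fin (r + 1) → Hm)) t, V t⟫)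
        = ∫ t in a..(a + k), ⟪evS ((c0 : cGW Hm (r + 1) a k) : Fin (r + 1) → Hm) t,
            evS (cV : Fin (r + 1) → Hm) t⟫ :=
      intervalIntegral.integral_congr fun t _ => by rw [hderiv t, hcV t]
    rw [hL]
    have h2 : (∫ t in a..(a + k), ⟪evS ((c0 : cGW Hm (r + 1) a k) : Fin (r + 1) → Hm) t,
          evS (cV : Fin (r + 1) → Hm) t⟫)
        = ⟪(c0 : cGW Hm (r + 1) a k), (cV : cGW Hm (r + 1) a k)⟫ :=
      (cGW_inner_def _ _).symm
    have h3 : ⟪(c0 : cGW Hm (r + 1) a k), (cV : cGW Hm (r + 1) a k)⟫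
        = ∫ t in a..(a + k),
            ⟪F t (UofP p0 a ((c0 : cGW Hm (r + 1) a k) : Fin (r + 1) → Hm) t),
              evS (cV : Fin (r + 1) → Hm) t⟫ := by
      conv_lhs => rw [← hfix]
      exact hΦ0 _ cV
    rw [h2, h3]
    exact intervalIntegral.integral_congr fun t _ => by rw [hcV t]
  · rintro U ⟨hUpoly, hUa, hUball, hUvar⟩
    obtain ⟨y, hy⟩ := (isHmPoly_iff_evS (r + 1) U).mp hUpoly
    have hya : evS y a = p0 := by rw [← hy a]; exact hUa
    have hUeq : ∀ t, U t = UofP p0 a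
        (fun i : Fin (r + 1) => ((((i : ℕ) + 1 : ℕ) : ℝ)) • y i.succ) t := by
      intro t
      rw [hy t, evS_eq_UofP a y t, hya]
    have hUfun : U = evS y := funext hy
    have hUderiv : ∀ t : ℝ, deriv U t
        = evS (fun i : Fin (r + 1) => ((((i : ℕ) + 1 : ℕ) : ℝ)) • y i.succ) t := by
      intro t
      rw [hUfun]
      exact (hasDerivAt_evS a y t).deriv
    have hcUS : (fun i : Fin (r + 1) => ((((i : ℕ) + 1 : ℕ) : ℝ)) • y i.succ) ∈ S := by
      intro t ht
      rw [← hUeq t]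
      exact hUball t ht
    have hfixU : Φ0 (fun i : Fin (r + 1) => ((((i : ℕ) + 1 : ℕ) : ℝ)) • y i.succ)
        = (fun i : Fin (r + 1) => ((((i : ℕ) + 1 : ℕ) : ℝ)) • y i.succ) := by
      apply ext_inner_right ℝ
      intro V
      refine (hΦ0 _ V).trans (Eq.trans ?_ (cGW_inner_def _ _).symm)
      have hVpoly : IsHmPoly Hm r (fun t => evS (V : Fin (r + 1) → Hm) t) :=
        (isHmPoly_iff_evS r _).mpr ⟨V, fun t => rfl⟩
      have hvar := hUvar _ hVpoly
      have hLL : (∫ t in a..(a + k), ⟪deriv U t, evS (V : Fin (r + 1) → Hm) t⟫)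
          = ∫ t in a..(a + k),
              ⟪evS (fun i : Fin (r + 1) => ((((i : ℕ) + 1 : ℕ) : ℝ)) • y i.succ) t,
                evS (V : Fin (r + 1) → Hm) t⟫ :=
        intervalIntegral.integral_congr fun t _ => by rw [hUderiv t]
      have hRR : (∫ t in a..(a + k), ⟪F t (U t), evS (V : Fin (r + 1) → Hm) t⟫)
          = ∫ t in a..(a + k), ⟪F t (UofP p0 a
              (fun i : Fin (r + 1) => ((((i : ℕ) + 1 : ℕ) : ℝ)) • y i.succ) t),
                evS (V : Fin (r + 1) → Hm) t⟫ :=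
        intervalIntegral.integral_congr fun t _ => by rw [← hUeq t]
      rw [← hRR, ← hvar, hLL]
    have hceq := hφcontr.fixedPoint_unique
      (x := (⟨_, hcUS⟩ : ↥S)) (Subtype.ext hfixU)
    rw [← hc0def] at hceq
    have hval : (fun i : Fin (r + 1) => ((((i : ℕ) + 1 : ℕ) : ℝ)) • y i.succ)
        = (c0 : cGW Hm (r + 1) a k) := congrArg Subtype.val hceq
    funext t
    rw [hUeq t, hval]
end

section
/- Let H be a real Hilbert space, H_m ⊆ H a finite-dimensional subspace, and π : H → H_m the orthogonal projection. Let F : [a, a+k] × H → H be continuous, with a real, k > 0, and fix u_prev ∈ H and r ∈ ℕ. Let U be an H_m-valued polynomial of degree at most r+1 with U(a) = π(u_prev), and let W be an H_m-valued polynomial of degree at most r satisfying ∫_a^{a+k} ⟨F(t, U(t)) − W(t), V(t)⟩ dt = 0 for every H_m-valued polynomial V of degree at most r. Then the following are equivalent: (i) ∫_a^{a+k} ⟨U'(t), V(t)⟩ dt = ∫_a^{a+k} ⟨F(t, U(t)), V(t)⟩ dt for every H_m-valued polynomial V of degree at most r; (ii) U(t) = π(u_prev) + ∫_a^t W(τ)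 dτ for all t ∈ [a, a+k]. -/
open MeasureTheory Set
open scoped RealInnerProductSpace

lemma IsHmPoly.continuous' {H : Type*} [NormedAddCommGroup H] [InnerProductSpace ℝ H]
    {S : Submodule ℝ H} {r : ℕ} {U : ℝ → H} (h : IsHmPoly S r U) : Continuous U := by
  obtain ⟨c, -, hc⟩ := h
  have : U = fun t => ∑ i ∈ Finset.range (r + 1), t ^ i • c i := funext hc
  rw [this]
  exact continuous_finset_sum _ fun i _ => (continuous_pow i).smul continuous_const

lemma IsHmPoly.sub' {H : Type*} [NormedAddCommGroup H] [InnerProductSpace ℝ H]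
    {S : Submodule ℝ H} {r : ℕ} {U V : ℝ → H} (h1 : IsHmPoly S r U) (h2 : IsHmPoly S r V) :
    IsHmPoly S r (fun t => U t - V t) := by
  obtain ⟨c, hc, hcU⟩ := h1
  obtain ⟨d, hd, hdV⟩ := h2
  exact ⟨fun i => c i - d i, fun i => sub_mem (hc i) (hd i), fun t => by
    simp [hcU, hdV, smul_sub, Finset.sum_sub_distrib]⟩

lemma hasDerivAt_hmPoly {H : Type*} [NormedAddCommGroup H] [InnerProductSpace ℝ H]
    (n : ℕ) (c : ℕ → H) (t : ℝ) :
    HasDerivAt (fun t : ℝ => ∑ i ∈ Finset.range (n + 1), t ^ i • c i)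
      (∑ j ∈ Finset.range n, t ^ j • ((j + 1 : ℝ) • c (j + 1))) t := by
  have h := HasDerivAt.fun_sum
    (fun i (_ : i ∈ Finset.range (n + 1)) => (hasDerivAt_pow i t).smul_const (c i))
  convert h using 1
  rw [Finset.sum_range_succ']
  simp only [Nat.cast_zero, zero_mul, zero_smul, add_zero, pow_zero, Nat.cast_add,
    Nat.cast_one, Nat.add_sub_cancel, smul_smul]
  exact Finset.sum_congr rfl fun j _ => by rw [mul_comm]

lemma IsHmPoly.deriv' {H : Type*} [NormedAddCommGroup H] [InnerProductSpace ℝ H]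
    {S : Submodule ℝ H} {r : ℕ} {U : ℝ → H} (h : IsHmPoly S (r + 1) U) :
    (∀ t, HasDerivAt U (deriv U t) t) ∧ IsHmPoly S r (deriv U) := by
  obtain ⟨c, hc, hcU⟩ := h
  have hU' : U = fun t => ∑ i ∈ Finset.range (r + 1 + 1), t ^ i • c i := funext hcU
  have key : ∀ t : ℝ, HasDerivAt U
      (∑ j ∈ Finset.range (r + 1), t ^ j • ((j + 1 : ℝ) • c (j + 1))) t := by
    intro t
    rw [hU']
    exact hasDerivAt_hmPoly (r + 1) c t
  have hder : ∀ t, deriv U t = ∑ j ∈ Finset.range (r + 1), t ^ j • ((j + 1 : ℝ) • c (j + 1)) :=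
    fun t => (key t).deriv
  refine ⟨fun t => (hder t) ▸ key t, ⟨fun j => (j + 1 : ℝ) • c (j + 1),
    fun j => Submodule.smul_mem _ _ (hc (j + 1)), hder⟩⟩

/-- Section 3.1: equivalence of the weak continuous Galerkin formulation on one
time step with the strong integral (fixed-point) equation `U = T^cG(U)`. -/
theorem cG_weak_strong_equivalence
    {H : Type*} [NormedAddCommGroup H] [InnerProductSpace ℝ H] [CompleteSpace H]
    (Hm : Submodule ℝ H) [FiniteDimensional ℝ Hm]
    (a k : ℝ) (hk : 0 < k) (u_prev : H) (r : ℕ)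
    (F : ℝ → H → H)
    (hFcont : ContinuousOn (fun p : ℝ × H => F p.1 p.2)
      (Set.Icc a (a + k) ×ˢ Set.univ))
    (U : ℝ → H) (hU : IsHmPoly Hm (r + 1) U)
    (hUa : U a = (Submodule.orthogonalProjectionOnto Hm u_prev : H))
    (W : ℝ → H) (hW : IsHmPoly Hm r W)
    (hWdef : ∀ V : ℝ → H, IsHmPoly Hm r V →
      (∫ t in a..(a + k), ⟪F t (U t) - W t, V t⟫) = 0) :
    (∀ V : ℝ → H, IsHmPoly Hm r V →
        (∫ t in a..(a + k), ⟪deriv U t, V t⟫) =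
          ∫ t in a..(a + k), ⟪F t (U t), V t⟫) ↔
      (∀ t ∈ Set.Icc a (a + k),
        U t = (Submodule.orthogonalProjectionOnto Hm u_prev : H) + ∫ τ in a..t, W τ) := by
  obtain ⟨hUderiv, hdU⟩ := hU.deriv'
  have hUcont := hU.continuous'
  have hWcont := hW.continuous'
  have hdUcont := hdU.continuous'
  have hab : a ≤ a + k := by linarith
  have hFc : ContinuousOn (fun t => F t (U t)) (Icc a (a + k)) := by
    have hmap : ContinuousOn (fun t : ℝ => ((t, U t) : ℝ × H)) (Icc a (a + k)) :=
      (continuous_id.prodMk hUcont).continuousOn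
    exact hFcont.comp hmap fun t ht => ⟨ht, mem_univ _⟩
  have hint : ∀ f : ℝ → H, ContinuousOn f (Icc a (a + k)) → ∀ g : ℝ → H, Continuous g →
      IntervalIntegrable (fun t => ⟪f t, g t⟫) volume a (a + k) := by
    intro f hf g hg
    apply ContinuousOn.intervalIntegrable
    rw [uIcc_of_le hab]
    exact hf.inner hg.continuousOn
  have hFW : ∀ V : ℝ → H, IsHmPoly Hm r V →
      (∫ t in a..(a + k), ⟪F t (U t), V t⟫) = ∫ t in a..(a + k), ⟪W t, V t⟫ := by
    intro V hV
    have hVc := hV.continuous'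
    have h0 := hWdef V hV
    have h1 : (∫ t in a..(a + k), ⟪F t (U t) - W t, V t⟫) =
        (∫ t in a..(a + k), ⟪F t (U t), V t⟫) - ∫ t in a..(a + k), ⟪W t, V t⟫ := by
      rw [← intervalIntegral.integral_sub (hint _ hFc _ hVc) (hint _ hWcont.continuousOn _ hVc)]
      congr 1
      ext t
      rw [inner_sub_left]
    rw [h1] at h0
    linarith
  constructor
  · -- weak ⇒ strong
    intro hweak
    set g : ℝ → H := fun t => deriv U t - W t with hg_def
    have hg : IsHmPoly Hm r g := hdU.sub' hW
    have hgcont : Continuous g := hg.continuous'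
    have hzero : ∀ᵐ x ∂(volume.restrict (Ioc a (a + k))), g x = 0 := by
      have hI : (∫ t in a..(a + k), ⟪g t, g t⟫) = 0 := by
        have h1 : (∫ t in a..(a + k), ⟪g t, g t⟫) =
            (∫ t in a..(a + k), ⟪deriv U t, g t⟫) - ∫ t in a..(a + k), ⟪W t, g t⟫ := by
          rw [← intervalIntegral.integral_sub (hint _ hdUcont.continuousOn _ hgcont)
            (hint _ hWcont.continuousOn _ hgcont)]
          congr 1
          ext t
          rw [← inner_sub_left]
        rw [h1, hweak g hg, hFW g hg, sub_self]
      have hnn : 0 ≤ fun t => (⟪g t, g t⟫ : ℝ) := fun t => real_inner_self_nonneg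
      have hInt : Integrable (fun t => (⟪g t, g t⟫ : ℝ)) (volume.restrict (Ioc a (a + k))) :=
        (hgcont.inner hgcont).integrableOn_Ioc
      have h0 : (∫ t in Ioc a (a + k), ⟪g t, g t⟫) = 0 := by
        rwa [intervalIntegral.integral_of_le hab] at hI
      have := (integral_eq_zero_iff_of_nonneg hnn hInt).mp h0
      filter_upwards [this] with x hx
      exact inner_self_eq_zero.mp hx
    intro t ht
    have hsub : Ioc a t ⊆ Ioc a (a + k) := Ioc_subset_Ioc_right ht.2
    have hz' : ∀ᵐ x ∂(volume.restrict (Ioc a t)), g x = 0 :=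
      ae_restrict_of_ae_restrict_of_subset hsub hzero
    have hWU : (∫ τ in a..t, W τ) = ∫ τ in a..t, deriv U τ := by
      apply intervalIntegral.integral_congr_ae
      rw [uIoc_of_le ht.1]
      filter_upwards [(ae_restrict_iff' measurableSet_Ioc).mp hz'] with x hx hmem
      have h : deriv U x - W x = 0 := hx hmem
      exact (sub_eq_zero.mp h).symm
    have hFTC : (∫ τ in a..t, deriv U τ) = U t - U a :=
      intervalIntegral.integral_deriv_eq_sub (fun x _ => (hUderiv x).differentiableAt)
        (hdUcont.intervalIntegrable _ _)
    rw [hWU, hFTC, hUa]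
    abel
  · -- strong ⇒ weak
    intro hstr V hV
    have hder : ∀ t ∈ Ioo a (a + k), deriv U t = W t := by
      intro t ht
      have h1 : HasDerivAt (fun s => ∫ τ in a..s, W τ) (W t) t :=
        intervalIntegral.integral_hasDerivAt_right (hWcont.intervalIntegrable a t)
          (hWcont.stronglyMeasurableAtFilter _ _) hWcont.continuousAt
      have hG : HasDerivAt
          (fun s => (Submodule.orthogonalProjectionOnto Hm u_prev : H) + ∫ τ in a..s, W τ) (W t) t := by
        simpa using h1.const_add ((Submodule.orthogonalProjectionOnto Hm u_prev : H))
      have hev : (fun s => (Submodule.orthogonalProjectionOnto Hm u_prev : H) + ∫ τ in a..s, W τ) =ᶠ[nhds t] U := by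
        filter_upwards [Ioo_mem_nhds ht.1 ht.2] with s hs
        exact (hstr s ⟨hs.1.le, hs.2.le⟩).symm
      exact ((hG.congr_of_eventuallyEq hev.symm)).deriv
    rw [hFW V hV]
    apply intervalIntegral.integral_congr_ae
    rw [uIoc_of_le hab]
    have hnk : ∀ᵐ x : ℝ, x ≠ a + k := by
      rw [Filter.Eventually]
      rw [mem_ae_iff]
      convert Real.volume_singleton (a := a + k) using 2
      ext x
      simp
    filter_upwards [hnk] with x hx hmem
    rw [hder x ⟨hmem.1, lt_of_le_of_ne hmem.2 hx⟩]
end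

section
/- Let H be a real Hilbert space, T > 0, and let u : [0,T] → H be differentiable with u'(t) = F(t, u(t)) for all t ∈ [0,T], where F : [0,T] × H → H. Suppose there are constants δ > 0, β > 1, and c_F ≥ 0 such that ⟨F(t,x), x⟩ ≥ δ ‖x‖^{1+β} for all t ∈ [0,T] and all x ∈ H with ‖x‖ ≥ c_F, and suppose ‖u(0)‖ > c_F. Then T ≤ ‖u(0)‖^{1−β} / ((β−1)·δ). -/
open Set
open scoped RealInnerProductSpace

/-- The upper bound `T̄_∞ = ‖u₀‖^{1−β}/((β−1)δ)` on the blow-up time of the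
initial value problem `u' = F(t,u)` under the algebraic growth condition
`⟪F(t,u), u⟫ ≥ δ‖u‖^{1+β}` for `‖u‖ ≥ c_F`. -/
theorem blow_up_time_upper_bound
    {H : Type*} [NormedAddCommGroup H] [InnerProductSpace ℝ H] [CompleteSpace H]
    (T : ℝ) (hT : 0 < T) (F : ℝ → H → H) (u : ℝ → H)
    (hu : ∀ t ∈ Set.Icc (0 : ℝ) T,
      HasDerivWithinAt u (F t (u t)) (Set.Icc (0 : ℝ) T) t)
    (δ β c_F : ℝ) (hδ : 0 < δ) (hβ : 1 < β) (hcF : 0 ≤ c_F)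
    (hgrowth : ∀ t ∈ Set.Icc (0 : ℝ) T, ∀ x : H, c_F ≤ ‖x‖ →
      δ * ‖x‖ ^ (1 + β) ≤ ⟪F t x, x⟫)
    (hu0 : c_F < ‖u 0‖) :
    T ≤ ‖u 0‖ ^ (1 - β) / ((β - 1) * δ) := by
  set s : Set ℝ := Set.Icc (0 : ℝ) T with hs
  have h0s : (0 : ℝ) ∈ s := ⟨le_rfl, hT.le⟩
  have hTs : T ∈ s := ⟨hT.le, le_rfl⟩
  -- derivative of g = ‖u·‖²
  have hg : ∀ t ∈ s, HasDerivWithinAt (fun t => ‖u t‖ ^ 2)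
      (2 * ⟪u t, F t (u t)⟫) s t := fun t ht => (hu t ht).norm_sq
  have hgc : ContinuousOn (fun t => ‖u t‖ ^ 2) s :=
    fun t ht => (hg t ht).continuousWithinAt
  have huc : ContinuousOn u s := fun t ht => (hu t ht).continuousWithinAt
  -- Step A : `c_F < ‖u t‖` on all of `s`.
  have hA : ∀ t ∈ s, c_F < ‖u t‖ := by
    by_contra hcon
    push_neg at hcon
    obtain ⟨t₁, ht₁s, ht₁⟩ := hcon
    set A : Set ℝ := s ∩ (fun t => ‖u t‖) ⁻¹' Set.Iic c_F with hA
    have hAne : A.Nonempty := ⟨t₁, ht₁s, ht₁⟩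
    have hAclosed : IsClosed A :=
      (huc.norm).preimage_isClosed_of_isClosed isClosed_Icc isClosed_Iic
    have hAbdd : BddBelow A := ⟨0, fun x hx => hx.1.1⟩
    set t₀ := sInf A with ht₀
    have ht₀A : t₀ ∈ A := hAclosed.csInf_mem hAne hAbdd
    have ht₀s : t₀ ∈ s := ht₀A.1
    have hlt : ∀ x, 0 < x → x < t₀ → c_F < ‖u x‖ := by
      intro x hx0 hxt
      by_contra hle
      push_neg at hle
      have : x ∈ A := ⟨⟨hx0.le, hxt.le.trans ht₀s.2⟩, hle⟩
      exact absurd (csInf_le hAbdd this) (not_le.mpr hxt)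
    -- monotonicity of g on [0, t₀]
    have hsub : Set.Icc (0 : ℝ) t₀ ⊆ s := Set.Icc_subset_Icc le_rfl ht₀s.2
    have hmono : MonotoneOn (fun t => ‖u t‖ ^ 2) (Set.Icc (0 : ℝ) t₀) := by
      apply monotoneOn_of_hasDerivWithinAt_nonneg (f' := fun t => 2 * ⟪u t, F t (u t)⟫)
        (convex_Icc _ _) (hgc.mono hsub)
      · intro x hx
        rw [interior_Icc] at hx
        exact (hg x (hsub ⟨hx.1.le, hx.2.le⟩)).mono
          ((interior_subset.trans hsub) : interior (Set.Icc (0:ℝ) t₀) ⊆ s)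
      · intro x hx
        rw [interior_Icc] at hx
        have hxs : x ∈ s := hsub ⟨hx.1.le, hx.2.le⟩
        have hcx : c_F ≤ ‖u x‖ := (hlt x hx.1 hx.2).le
        have := hgrowth x hxs (u x) hcx
        have hpos : 0 ≤ δ * ‖u x‖ ^ (1 + β) :=
          mul_nonneg hδ.le (Real.rpow_nonneg (norm_nonneg _) _)
        have : 0 ≤ ⟪F x (u x), u x⟫ := hpos.trans this
        rw [real_inner_comm] at this
        positivity
    have h0mem : (0 : ℝ) ∈ Set.Icc (0 : ℝ) t₀ := ⟨le_rfl, ht₀A.1.1⟩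
    have ht₀mem : t₀ ∈ Set.Icc (0 : ℝ) t₀ := ⟨ht₀A.1.1, le_rfl⟩
    have := hmono h0mem ht₀mem ht₀A.1.1
    have hle2 : ‖u t₀‖ ^ 2 ≤ c_F ^ 2 :=
      pow_le_pow_left₀ (norm_nonneg _) ht₀A.2 2
    have hlt2 : c_F ^ 2 < ‖u 0‖ ^ 2 := by
      apply pow_lt_pow_left₀ hu0 hcF
      norm_num
    simp only at this
    linarith
  -- positivity facts
  have hNpos : ∀ t ∈ s, (0 : ℝ) < ‖u t‖ := fun t ht => hcF.trans_lt (hA t ht)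
  set p : ℝ := (1 - β) / 2 with hp
  -- ψ t = (‖u t‖²) ^ p, has derivative d t within s
  set d : ℝ → ℝ := fun t => 2 * ⟪u t, F t (u t)⟫ * p * (‖u t‖ ^ 2) ^ (p - 1) with hd
  have hψ : ∀ t ∈ s, HasDerivWithinAt (fun t => (‖u t‖ ^ 2 : ℝ) ^ p) (d t) s t := by
    intro t ht
    exact (hg t ht).rpow_const (Or.inl (pow_pos (hNpos t ht) 2).ne')
  -- the derivative bound `d x ≤ (1-β)δ` on interior points
  have hdb : ∀ x ∈ s, d x ≤ (1 - β) * δ := by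
    intro x hx
    have hN : (0 : ℝ) < ‖u x‖ := hNpos x hx
    have hinner : δ * ‖u x‖ ^ (1 + β) ≤ ⟪u x, F x (u x)⟫ := by
      rw [real_inner_comm]; exact hgrowth x hx (u x) (hA x hx).le
    have hfac : (‖u x‖ ^ 2 : ℝ) ^ (p - 1) * ‖u x‖ ^ (1 + β) = 1 := by
      have h2 : (‖u x‖ ^ 2 : ℝ) = ‖u x‖ ^ (2 : ℝ) := by
        rw [← Real.rpow_natCast (‖u x‖) 2]; norm_num
      rw [h2, ← Real.rpow_mul hN.le, ← Real.rpow_add hN,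
        show (2 : ℝ) * (p - 1) + (1 + β) = 0 by rw [hp]; ring, Real.rpow_zero]
    have hppow : (0 : ℝ) < (‖u x‖ ^ 2 : ℝ) ^ (p - 1) :=
      Real.rpow_pos_of_pos (by positivity) _
    have hpneg : p < 0 := by rw [hp]; linarith
    -- d x = (2 * p * (‖u x‖²)^(p-1)) * ⟪u x, F⟫ with nonpositive coefficient
    have key : d x ≤ 2 * p * (‖u x‖ ^ 2 : ℝ) ^ (p - 1) * (δ * ‖u x‖ ^ (1 + β)) := by
      have hcoef : 2 * p * (‖u x‖ ^ 2 : ℝ) ^ (p - 1) ≤ 0 := by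
        apply mul_nonpos_of_nonpos_of_nonneg
        · linarith
        · exact hppow.le
      calc d x = 2 * p * (‖u x‖ ^ 2 : ℝ) ^ (p - 1) * ⟪u x, F x (u x)⟫ := by
            rw [hd]; ring
        _ ≤ _ := mul_le_mul_of_nonpos_left hinner hcoef
    calc d x ≤ 2 * p * (‖u x‖ ^ 2 : ℝ) ^ (p - 1) * (δ * ‖u x‖ ^ (1 + β)) := key
      _ = 2 * p * δ * ((‖u x‖ ^ 2 : ℝ) ^ (p - 1) * ‖u x‖ ^ (1 + β)) := by ring
      _ = 2 * p * δ * 1 := by rw [hfac]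
      _ = (1 - β) * δ := by rw [hp]; ring
  -- Step B : the function `φ t = ψ t + (β-1)δ t` is antitone on `s`
  set φ : ℝ → ℝ := fun t => (‖u t‖ ^ 2 : ℝ) ^ p + (β - 1) * δ * t with hφ
  have hφ' : ∀ x ∈ interior s, HasDerivWithinAt φ (d x + (β - 1) * δ) (interior s) x := by
    intro x hx
    have hxs : x ∈ s := interior_subset hx
    have h1 := (hψ x hxs).mono (interior_subset : interior s ⊆ s)
    have h2 : HasDerivWithinAt (fun t : ℝ => (β - 1) * δ * t) ((β - 1) * δ) (interior s) x := by
      simpa using ((hasDerivAt_id x).const_mul ((β - 1) * δ)).hasDerivWithinAt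
    exact h1.add h2
  have hφcont : ContinuousOn φ s := by
    apply ContinuousOn.add
    · exact fun t ht => (hψ t ht).continuousWithinAt
    · exact (continuous_const.mul continuous_id).continuousOn
  have hanti : AntitoneOn φ s := by
    apply antitoneOn_of_hasDerivWithinAt_nonpos (f' := fun x => d x + (β - 1) * δ)
      (convex_Icc _ _) hφcont hφ'
    intro x hx
    have := hdb x (interior_subset hx)
    linarith
  have hfin : φ T ≤ φ 0 := hanti h0s hTs hT.le
  have hψT : 0 ≤ (‖u T‖ ^ 2 : ℝ) ^ p := Real.rpow_nonneg (by positivity) _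
  have hψ0 : (‖u 0‖ ^ 2 : ℝ) ^ p = ‖u 0‖ ^ (1 - β) := by
    rw [show (‖u 0‖ ^ 2 : ℝ) = ‖u 0‖ ^ (2 : ℝ) by
        rw [← Real.rpow_natCast (‖u 0‖) 2]; norm_num,
      ← Real.rpow_mul (norm_nonneg _),
      show (2 : ℝ) * p = 1 - β by rw [hp]; ring]
  have hpos : (0 : ℝ) < (β - 1) * δ := mul_pos (by linarith) hδ
  rw [le_div_iff₀ hpos]
  simp only [hφ, mul_zero, add_zero] at hfin
  linarith
end

section
/- Let H be a real Hilbert space, T > 0, and let u : [0,T] → H be differentiable with u'(t) = F(t, u(t)) for all t ∈ [0,T], where F : [0,T] × H → H. Suppose there are constants δ > 0, β > 1, and c_F ≥ 0 such that ⟨F(t,x), x⟩ ≥ δ ‖x‖^{1+β} for all t ∈ [0,T] and all x ∈ H with ‖x‖ ≥ c_F, and suppose ‖u(0)‖ > c_F. Then the function t ↦ ‖u(t)‖ is nondecreasing on [0,T]; in particular ‖u(t)‖ ≥ ‖u(0)‖ > c_F for all t ∈ [0,T]. -/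
open Set
open scoped RealInnerProductSpace

/-- Section 5.1: monotonicity of the solution norm for `u' = F(t,u)` under the
algebraic growth condition `⟪F(t,u), u⟫ ≥ δ‖u‖^{1+β}` for `‖u‖ ≥ c_F`. -/
theorem solution_norm_monotone
    {H : Type*} [NormedAddCommGroup H] [InnerProductSpace ℝ H] [CompleteSpace H]
    (T : ℝ) (hT : 0 < T) (F : ℝ → H → H) (u : ℝ → H)
    (hu : ∀ t ∈ Set.Icc (0 : ℝ) T,
      HasDerivWithinAt u (F t (u t)) (Set.Icc (0 : ℝ) T) t)
    (δ β c_F : ℝ) (hδ : 0 < δ) (hβ : 1 < β) (hcF : 0 ≤ c_F)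
    (hgrowth : ∀ t ∈ Set.Icc (0 : ℝ) T, ∀ x : H, c_F ≤ ‖x‖ →
      δ * ‖x‖ ^ (1 + β) ≤ ⟪F t x, x⟫)
    (hu0 : c_F < ‖u 0‖) :
    MonotoneOn (fun t => ‖u t‖) (Set.Icc (0 : ℝ) T) ∧
      ∀ t ∈ Set.Icc (0 : ℝ) T, ‖u 0‖ ≤ ‖u t‖ ∧ c_F < ‖u t‖ := by
  set φ : ℝ → ℝ := fun t => ⟪u t, u t⟫ with hφdef
  -- continuity of u on [0,T]
  have hucont : ContinuousOn u (Set.Icc (0 : ℝ) T) := fun t ht =>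
    (hu t ht).continuousWithinAt
  have hφcont : ContinuousOn φ (Set.Icc (0 : ℝ) T) := by
    exact ContinuousOn.inner hucont hucont
  -- derivative of φ
  have hφderiv : ∀ t ∈ Set.Ioo (0 : ℝ) T,
      HasDerivAt φ (2 * ⟪F t (u t), u t⟫) t := by
    intro t ht
    have htT : t ∈ Set.Icc (0 : ℝ) T := Set.Ioo_subset_Icc_self ht
    have hmem : Set.Icc (0 : ℝ) T ∈ nhds t := Icc_mem_nhds ht.1 ht.2
    have h1 : HasDerivAt u (F t (u t)) t := (hu t htT).hasDerivAt hmem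
    have := (h1.inner ℝ h1)
    have hsymm : ⟪u t, F t (u t)⟫ = ⟪F t (u t), u t⟫ := real_inner_comm _ _
    rw [hsymm] at this
    exact this.congr_deriv (by ring)
  -- norm squared
  have hφnorm : ∀ t, φ t = ‖u t‖ ^ 2 := fun t => real_inner_self_eq_norm_sq _
  -- the auxiliary monotonicity lemma on subintervals
  have key : ∀ b ∈ Set.Icc (0 : ℝ) T, (∀ s ∈ Set.Ioo (0 : ℝ) b, c_F ≤ ‖u s‖) →
      MonotoneOn φ (Set.Icc (0 : ℝ) b) := by
    intro b hb hlow
    have hsub : Set.Icc (0 : ℝ) b ⊆ Set.Icc (0 : ℝ) T :=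
      Set.Icc_subset_Icc le_rfl hb.2
    have hderivb : ∀ s ∈ Set.Ioo (0 : ℝ) b,
        HasDerivAt φ (2 * ⟪F s (u s), u s⟫) s := by
      intro s hs
      exact hφderiv s ⟨hs.1, lt_of_lt_of_le hs.2 hb.2⟩
    have := monotoneOn_of_deriv_nonneg (convex_Icc (0 : ℝ) b)
      (hφcont.mono hsub) ?_ ?_
    · exact this
    · rw [interior_Icc]
      intro s hs
      exact (hderivb s hs).differentiableAt.differentiableWithinAt
    · rw [interior_Icc]
      intro s hs
      rw [(hderivb s hs).deriv]
      have hg := hgrowth s (hsub (Set.Ioo_subset_Icc_self hs)) (u s) (hlow s hs)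
      have hpos : 0 ≤ δ * ‖u s‖ ^ (1 + β) :=
        mul_nonneg hδ.le (Real.rpow_nonneg (norm_nonneg _) _)
      linarith
  -- main claim: ‖u t‖ > c_F on [0,T]
  have claim : ∀ t ∈ Set.Icc (0 : ℝ) T, c_F < ‖u t‖ := by
    by_contra hcon
    push_neg at hcon
    obtain ⟨t₀, ht₀, ht₀le⟩ := hcon
    set S := Set.Icc (0 : ℝ) T ∩ (fun t => ‖u t‖) ⁻¹' Set.Iic c_F with hSdef
    have hSne : S.Nonempty := ⟨t₀, ht₀, ht₀le⟩
    have hSclosed : IsClosed S :=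
      ContinuousOn.preimage_isClosed_of_isClosed (hucont.norm) isClosed_Icc isClosed_Iic
    have hSbdd : BddBelow S := ⟨0, fun s hs => hs.1.1⟩
    set m := sInf S with hmdef
    have hmS : m ∈ S := hSclosed.csInf_mem hSne hSbdd
    have hm0 : 0 < m := by
      rcases lt_or_eq_of_le hmS.1.1 with h | h
      · exact h
      · exact absurd hmS.2 (by simp [← h, not_le, hu0])
    have hlow : ∀ s ∈ Set.Ioo (0 : ℝ) m, c_F ≤ ‖u s‖ := by
      intro s hs
      by_contra hsle
      push_neg at hsle
      have hsS : s ∈ S := ⟨⟨hs.1.le, hs.2.le.trans hmS.1.2⟩, hsle.le⟩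
      exact absurd (csInf_le hSbdd hsS) (not_le.2 hs.2)
    have hmono := key m hmS.1 hlow
    have h0m : (0 : ℝ) ∈ Set.Icc (0 : ℝ) m := ⟨le_rfl, hm0.le⟩
    have hmm : m ∈ Set.Icc (0 : ℝ) m := ⟨hm0.le, le_rfl⟩
    have := hmono h0m hmm hm0.le
    rw [hφnorm, hφnorm] at this
    have h1 : ‖u 0‖ ≤ ‖u m‖ :=
      (pow_le_pow_iff_left₀ (norm_nonneg _) (norm_nonneg _) two_ne_zero).1 this
    have : c_F < ‖u m‖ := lt_of_lt_of_le hu0 h1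
    exact absurd hmS.2 (not_le.2 this)
  -- global monotonicity of φ
  have hmonoφ : MonotoneOn φ (Set.Icc (0 : ℝ) T) := by
    refine key T ⟨hT.le, le_rfl⟩ fun s hs => (claim s (Set.Ioo_subset_Icc_self hs)).le
  have hmono : MonotoneOn (fun t => ‖u t‖) (Set.Icc (0 : ℝ) T) := by
    intro s hs t ht hst
    have := hmonoφ hs ht hst
    rw [hφnorm, hφnorm] at this
    exact (pow_le_pow_iff_left₀ (norm_nonneg _) (norm_nonneg _) two_ne_zero).1 this
  refine ⟨hmono, fun t ht => ⟨?_, claim t ht⟩⟩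
  exact hmono ⟨le_rfl, hT.le⟩ ht ht.1
end

section
/- Let H be a finite-dimensional real Hilbert space and r ∈ ℕ. Let α, δ, γ > 0, β > 1, c_F ≥ 0, and let F : ℝ × H → H be continuous and satisfy, for all t ≥ 0: ‖F(t,x)‖ ≤ α‖x‖^β and ⟨F(t,x), x⟩ ≥ δ‖x‖^{1+β} whenever ‖x‖ ≥ c_F, and ‖F(t,x) − F(t,y)‖ ≤ γ·max(‖x‖,‖y‖)^{β−1}·‖x − y‖ whenever ‖x‖ ≥ c_F and ‖y‖ ≥ c_F. Fix w ∈ H with ‖w‖ > c_F, fix ρ with 0 < ρ < γ/α, set η = ρα/(γ − ρα), and assume η ≤ 1 − c_F/‖w‖. Let a ≥ 0, k = (1/(2γ^β))·ρ·(γ − ρα)^{β−1}·‖w‖^{1−β}, and κ = η‖w‖. Suppose U is an H-valued polynomial of degree at most r such that ‖U(t) − w‖ ≤ κ for all t ∈ [a, a+k] and ∫_a^{a+k} ⟨U'(t), V(t)⟩ dt + ⟨U(a) − w, V(a)⟩ = ∫_a^{a+k} ⟨F(t, U(t)), V(t)⟩ dt for every H-valued polynomial V of degree at most r. Then ‖U(a+k)‖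 ≥ (1 + (1/(2γ^β))·ρ·Ψ(ρ))·‖w‖, where Ψ(ρ) = (δ·(γ − ρα)^β − ρ·α·γ^β)/(γ − ρα). -/
open MeasureTheory Set
open scoped RealInnerProductSpace

set_option maxHeartbeats 1000000

/-- One-step lower growth estimate (equation (geo)) from the proof of
Proposition 5.1 for the dG scheme with the adaptive time step
`k = (2γ^β)⁻¹ ρ (γ−ρα)^{β−1} ‖w‖^{1−β}`. -/
theorem dG_one_step_lower_growth
    {H : Type*} [NormedAddCommGroup H] [InnerProductSpace ℝ H]
    [FiniteDimensional ℝ H]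
    (r : ℕ) (α δ γ β c_F : ℝ)
    (hα : 0 < α) (hδ : 0 < δ) (hγ : 0 < γ) (hβ : 1 < β) (hcF : 0 ≤ c_F)
    (F : ℝ → H → H) (hFcont : Continuous fun p : ℝ × H => F p.1 p.2)
    (hgrowth : ∀ t : ℝ, 0 ≤ t → ∀ x : H, c_F ≤ ‖x‖ → ‖F t x‖ ≤ α * ‖x‖ ^ β)
    (hcoerc : ∀ t : ℝ, 0 ≤ t → ∀ x : H, c_F ≤ ‖x‖ →
      δ * ‖x‖ ^ (1 + β) ≤ ⟪F t x, x⟫)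
    (hLip : ∀ t : ℝ, 0 ≤ t → ∀ x y : H, c_F ≤ ‖x‖ → c_F ≤ ‖y‖ →
      ‖F t x - F t y‖ ≤ γ * max ‖x‖ ‖y‖ ^ (β - 1) * ‖x - y‖)
    (w : H) (hw : c_F < ‖w‖)
    (ρ : ℝ) (hρ0 : 0 < ρ) (hργ : ρ < γ / α)
    (η : ℝ) (hη : η = ρ * α / (γ - ρ * α)) (hη1 : η ≤ 1 - c_F / ‖w‖)
    (a : ℝ) (ha : 0 ≤ a)
    (k : ℝ) (hk : k = 1 / (2 * γ ^ β) * ρ * (γ - ρ * α) ^ (β - 1) * ‖w‖ ^ (1 - β))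
    (κ : ℝ) (hκ : κ = η * ‖w‖)
    (U : ℝ → H) (hU : IsXPoly r U)
    (hUB : ∀ t ∈ Set.Icc a (a + k), ‖U t - w‖ ≤ κ)
    (hweak : ∀ V : ℝ → H, IsXPoly r V →
      (∫ t in a..(a + k), ⟪deriv U t, V t⟫) + ⟪U a - w, V a⟫ =
        ∫ t in a..(a + k), ⟪F t (U t), V t⟫) :
    (1 + 1 / (2 * γ ^ β) * ρ *
        ((δ * (γ - ρ * α) ^ β - ρ * α * γ ^ β) / (γ - ρ * α))) * ‖w‖
      ≤ ‖U (a + k)‖ := by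
  have hW : (0:ℝ) < ‖w‖ := lt_of_le_of_lt hcF hw
  have hs : 0 < γ - ρ * α := by
    have : ρ * α < γ := (lt_div_iff₀ hα).mp hργ
    linarith
  have hη0 : 0 ≤ η := by rw [hη]; positivity
  have hβ1 : (0:ℝ) ≤ β - 1 := by linarith
  have hk0 : 0 < k := by rw [hk]; positivity
  have hak : a ≤ a + k := by linarith
  -- the constant test function V ≡ w
  have hVpoly : IsXPoly r (fun _ : ℝ => w) := by
    refine ⟨fun i => if i = 0 then w else 0, fun t => ?_⟩
    rw [Finset.sum_eq_single 0]
    · simp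
    · intro i _ hi; simp [hi]
    · intro h; simp at h
  have hweakw := hweak _ hVpoly
  -- differentiability of U
  obtain ⟨c, hc⟩ := hU
  have hUeq : U = fun t => ∑ i ∈ Finset.range (r + 1), t ^ i • c i := funext hc
  set D : ℝ → H := fun t => ∑ i ∈ Finset.range (r + 1), ((i : ℝ) * t ^ (i - 1)) • c i
    with hD
  have hUd : ∀ t : ℝ, HasDerivAt U (D t) t := by
    intro t
    rw [hUeq]
    exact HasDerivAt.fun_sum fun i _ => (hasDerivAt_pow i t).smul_const (c i)
  have hUcont : Continuous U := by
    rw [hUeq]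
    exact continuous_finset_sum _ fun i _ => (continuous_pow i).smul continuous_const
  have hDcont : Continuous D := by
    rw [hD]
    exact continuous_finset_sum _ fun i _ =>
      ((continuous_const.mul (continuous_pow (i - 1))).smul continuous_const)
  -- FTC : the integral of ⟪deriv U, w⟫
  have hderivU : ∀ t : ℝ, deriv U t = D t := fun t => (hUd t).deriv
  have hFTC : (∫ t in a..(a + k), ⟪deriv U t, w⟫) = ⟪U (a + k), w⟫ - ⟪U a, w⟫ := by
    have h1 : ∀ t ∈ Set.uIcc a (a + k),
        HasDerivAt (fun t => ⟪U t, w⟫) ⟪D t, w⟫ t := by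
      intro t _
      have := (hUd t).inner (𝕜 := ℝ) (hasDerivAt_const t w)
      simpa using this
    have h2 : IntervalIntegrable (fun t => ⟪D t, w⟫) volume a (a + k) :=
      (hDcont.inner continuous_const).intervalIntegrable a (a + k)
    have := intervalIntegral.integral_eq_sub_of_hasDerivAt h1 h2
    calc (∫ t in a..(a + k), ⟪deriv U t, w⟫) = ∫ t in a..(a + k), ⟪D t, w⟫ := by
          simp_rw [hderivU]
      _ = ⟪U (a + k), w⟫ - ⟪U a, w⟫ := this
  -- the identity  ⟪U(a+k), w⟫ = ‖w‖² + ∫ ⟪F t (U t), w⟫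
  have hiden : ⟪U (a + k), w⟫
      = ‖w‖ ^ 2 + ∫ t in a..(a + k), ⟪F t (U t), w⟫ := by
    have := hweakw
    rw [hFTC, inner_sub_left, real_inner_self_eq_norm_sq] at this
    linarith
  -- pointwise lower bound on the integrand
  set m : ℝ := δ * ‖w‖ ^ (1 + β) - γ * ((1 + η) * ‖w‖) ^ (β - 1) * (η * ‖w‖) * ‖w‖
    with hm
  have hpt : ∀ t ∈ Set.Icc a (a + k), m ≤ ⟪F t (U t), w⟫ := by
    intro t ht
    have ht0 : 0 ≤ t := le_trans ha ht.1
    have hUBt : ‖U t - w‖ ≤ η * ‖w‖ := by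
      have := hUB t ht; rwa [hκ] at this
    have hub : ‖U t‖ ≤ (1 + η) * ‖w‖ := by
      have h := norm_sub_norm_le (U t) w
      nlinarith
    have hlb : c_F ≤ ‖U t‖ := by
      have h := norm_sub_norm_le w (U t)
      rw [norm_sub_rev] at h
      have h2 : c_F / ‖w‖ * ‖w‖ = c_F := div_mul_cancel₀ _ hW.ne'
      nlinarith
    have hF1 : δ * ‖w‖ ^ (1 + β) ≤ ⟪F t w, w⟫ := hcoerc t ht0 w hw.le
    have hmax : max ‖U t‖ ‖w‖ ≤ (1 + η) * ‖w‖ := by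
      apply max_le hub; nlinarith
    have hF2 : ‖F t (U t) - F t w‖ ≤ γ * ((1 + η) * ‖w‖) ^ (β - 1) * (η * ‖w‖) := by
      calc ‖F t (U t) - F t w‖ ≤ γ * max ‖U t‖ ‖w‖ ^ (β - 1) * ‖U t - w‖ :=
            hLip t ht0 (U t) w hlb hw.le
        _ ≤ γ * ((1 + η) * ‖w‖) ^ (β - 1) * (η * ‖w‖) := by
            have hr : max ‖U t‖ ‖w‖ ^ (β - 1) ≤ ((1 + η) * ‖w‖) ^ (β - 1) :=
              Real.rpow_le_rpow (le_max_of_le_right (norm_nonneg _)) hmax hβ1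
            exact mul_le_mul (mul_le_mul_of_nonneg_left hr hγ.le) hUBt
              (norm_nonneg _) (by positivity)
    have hF3 : -(γ * ((1 + η) * ‖w‖) ^ (β - 1) * (η * ‖w‖) * ‖w‖)
        ≤ ⟪F t (U t) - F t w, w⟫ := by
      have h := abs_real_inner_le_norm (F t (U t) - F t w) w
      have := neg_abs_le ⟪F t (U t) - F t w, w⟫
      have h2 : ‖F t (U t) - F t w‖ * ‖w‖
          ≤ γ * ((1 + η) * ‖w‖) ^ (β - 1) * (η * ‖w‖) * ‖w‖ :=
        mul_le_mul_of_nonneg_right hF2 (norm_nonneg _)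
      linarith [abs_nonneg ⟪F t (U t) - F t w, w⟫]
    have hsplit : ⟪F t (U t), w⟫ = ⟪F t w, w⟫ + ⟪F t (U t) - F t w, w⟫ := by
      rw [inner_sub_left]; ring
    rw [hsplit, hm]
    linarith
  -- integral lower bound
  have hIcont : Continuous fun t => ⟪F t (U t), w⟫ :=
    ((hFcont.comp (continuous_id.prodMk hUcont)).inner continuous_const)
  have hI : k * m ≤ ∫ t in a..(a + k), ⟪F t (U t), w⟫ := by
    have h := intervalIntegral.integral_mono_on hak
      (intervalIntegrable_const (μ := volume) (c := m)) (hIcont.intervalIntegrable a (a + k))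
      (fun x hx => hpt x hx)
    have hconst : (∫ _t in a..(a + k), m) = k * m := by
      rw [intervalIntegral.integral_const, smul_eq_mul]; ring
    rw [← hconst]; exact h
  -- the algebraic identity for k * m
  have hγβ : (0:ℝ) < γ ^ β := Real.rpow_pos_of_pos hγ β
  have hsβ : (0:ℝ) < (γ - ρ * α) ^ β := Real.rpow_pos_of_pos hs β
  have hQ : (0:ℝ) < ‖w‖ ^ (β - 1) := Real.rpow_pos_of_pos hW _
  have f1 : ‖w‖ ^ (1 - β) = (‖w‖ ^ (β - 1))⁻¹ := by
    rw [show (1 - β) = -(β - 1) by ring, Real.rpow_neg hW.le]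
  have f2 : ‖w‖ ^ (1 + β) = ‖w‖ * ‖w‖ * ‖w‖ ^ (β - 1) := by
    rw [show (1 + β) = (β - 1) + 2 by ring, Real.rpow_add hW, Real.rpow_two]
    ring
  have f3 : γ ^ (β - 1) = γ ^ β / γ := by
    rw [show β - 1 = β + (-1) by ring, Real.rpow_add hγ, Real.rpow_neg_one]
    ring
  have f4 : (γ - ρ * α) ^ (β - 1) = (γ - ρ * α) ^ β / (γ - ρ * α) := by
    rw [show β - 1 = β + (-1) by ring, Real.rpow_add hs, Real.rpow_neg_one]
    ring
  have h1η : 1 + η = γ / (γ - ρ * α) := by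
    rw [hη]; field_simp; ring
  have key : k * m = 1 / (2 * γ ^ β) * ρ *
      ((δ * (γ - ρ * α) ^ β - ρ * α * γ ^ β) / (γ - ρ * α)) * (‖w‖ * ‖w‖) := by
    rw [hm, hk, h1η, hη]
    rw [Real.mul_rpow (by positivity) hW.le, Real.div_rpow hγ.le hs.le]
    rw [f1, f2, f3, f4]
    field_simp
  -- conclude
  have hCS : ⟪U (a + k), w⟫ ≤ ‖U (a + k)‖ * ‖w‖ := real_inner_le_norm _ _
  have hfin : (1 + 1 / (2 * γ ^ β) * ρ *
      ((δ * (γ - ρ * α) ^ β - ρ * α * γ ^ β) / (γ - ρ * α))) * ‖w‖ * ‖w‖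
      ≤ ‖U (a + k)‖ * ‖w‖ := by
    have h1 : ‖w‖ ^ 2 + k * m ≤ ⟪U (a + k), w⟫ := by
      rw [hiden]; linarith
    nlinarith [sq_nonneg ‖w‖]
  exact le_of_mul_le_mul_right hfin hW
end
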